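/- arXiv:2109.08923 — 10 statements merged into one kernel-verified Lean document; each statement's English description precedes it below -/
import Mathlib

section
/- Let μ > 0 and let f : ℝ → ℝ be a function such that for every positive integrable random variable X with E[X] ≤ μ one has f(X) ≥ 0 almost surely and E[f(X)] ≤ 1. Then there exists b with 0 ≤ b·μ ≤ 1 such that f(t) ≤ (1 − b·μ) + b·t for all t ≥ 0. -/
open MeasureTheory

lemma integrable_dirac' (a : ℝ) (g : ℝ → ℝ) : Integrable g (Measure.dirac a) := by
  refine (integrable_const (g a)).congr ?_
  rw [Filter.EventuallyEq, ae_dirac_eq]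
  exact Filter.eventually_pure.mpr rfl

lemma twopoint (μ : ℝ) (f : ℝ → ℝ)
    (hf : ∀ P : Measure ℝ, IsProbabilityMeasure P →
      (∀ᵐ x ∂P, 0 ≤ x) → Integrable (fun x : ℝ => x) P → ∫ x, x ∂P ≤ μ →
      (∀ᵐ x ∂P, 0 ≤ f x) ∧ Integrable f P ∧ ∫ x, f x ∂P ≤ 1)
    (p q x y : ℝ) (hp : 0 < p) (hq : 0 < q) (hpq : p + q = 1)
    (hx : 0 ≤ x) (hy : 0 ≤ y) (hmean : p * x + q * y ≤ μ) :
    0 ≤ f x ∧ 0 ≤ f y ∧ p * f x + q * f y ≤ 1 := by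
  set P : Measure ℝ :=
    ENNReal.ofReal p • Measure.dirac x + ENNReal.ofReal q • Measure.dirac y with hP
  have hp0 : ENNReal.ofReal p ≠ 0 := by simp [ENNReal.ofReal_eq_zero, not_le, hp]
  have hq0 : ENNReal.ofReal q ≠ 0 := by simp [ENNReal.ofReal_eq_zero, not_le, hq]
  have hae : ∀ Q : ℝ → Prop, (∀ᵐ z ∂P, Q z) ↔ (Q x ∧ Q y) := by
    intro Q
    rw [hP, ae_add_measure_iff, Measure.ae_ennreal_smul_measure_iff hp0,
      Measure.ae_ennreal_smul_measure_iff hq0, ae_dirac_eq, ae_dirac_eq]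
    simp
  have hprob : IsProbabilityMeasure P := by
    constructor
    rw [hP]
    simp only [Measure.add_apply, Measure.smul_apply, smul_eq_mul, measure_univ, mul_one]
    rw [← ENNReal.ofReal_add hp.le hq.le, hpq, ENNReal.ofReal_one]
  have hint : ∀ g : ℝ → ℝ, Integrable g P := by
    intro g
    rw [hP]
    exact ((integrable_dirac' x g).smul_measure (by simp)).add_measure
      ((integrable_dirac' y g).smul_measure (by simp))
  have hI : ∀ g : ℝ → ℝ, ∫ z, g z ∂P = p * g x + q * g y := by
    intro g
    rw [hP, integral_add_measure
        ((integrable_dirac' x g).smul_measure (by simp))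
        ((integrable_dirac' y g).smul_measure (by simp)),
      integral_smul_measure, integral_smul_measure, integral_dirac, integral_dirac,
      ENNReal.toReal_ofReal hp.le, ENNReal.toReal_ofReal hq.le]
    simp [smul_eq_mul]
  obtain ⟨h1, _, h3⟩ := hf P hprob ((hae _).mpr ⟨hx, hy⟩) (hint _) (by rw [hI]; exact hmean)
  obtain ⟨hfx, hfy⟩ := (hae _).mp h1
  exact ⟨hfx, hfy, by rw [hI] at h3; exact h3⟩

lemma dirac_case (μ : ℝ) (f : ℝ → ℝ)
    (hf : ∀ P : Measure ℝ, IsProbabilityMeasure P →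
      (∀ᵐ x ∂P, 0 ≤ x) → Integrable (fun x : ℝ => x) P → ∫ x, x ∂P ≤ μ →
      (∀ᵐ x ∂P, 0 ≤ f x) ∧ Integrable f P ∧ ∫ x, f x ∂P ≤ 1)
    (t : ℝ) (ht : 0 ≤ t) (htμ : t ≤ μ) : 0 ≤ f t ∧ f t ≤ 1 := by
  have hae : ∀ Q : ℝ → Prop, (∀ᵐ z ∂(Measure.dirac t : Measure ℝ), Q z) ↔ Q t := by
    intro Q; rw [ae_dirac_eq]; simp
  obtain ⟨h1, _, h3⟩ := hf (Measure.dirac t) inferInstance ((hae _).mpr ht)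
    (integrable_dirac' t _) (by rw [integral_dirac]; exact htμ)
  rw [integral_dirac] at h3
  exact ⟨(hae _).mp h1, h3⟩

/-- If `μ > 0` and `f : ℝ → ℝ` is such that for every positive integrable random variable
`X` (equivalently, every probability distribution `P` on `ℝ` concentrated on `[0,∞)` with
integrable identity) with `E[X] ≤ μ` one has `f(X) ≥ 0` a.s. and `E[f(X)] ≤ 1`, then there
exists `b` with `0 ≤ b·μ ≤ 1` such that `f(t) ≤ (1 − b·μ) + b·t` for all `t ≥ 0`. -/
theorem factor_dominated_by_affine
    (μ : ℝ) (hμ : 0 < μ) (f : ℝ → ℝ)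
    (hf : ∀ P : Measure ℝ, IsProbabilityMeasure P →
      (∀ᵐ x ∂P, 0 ≤ x) → Integrable (fun x : ℝ => x) P → ∫ x, x ∂P ≤ μ →
      (∀ᵐ x ∂P, 0 ≤ f x) ∧ Integrable f P ∧ ∫ x, f x ∂P ≤ 1) :
    ∃ b : ℝ, 0 ≤ b * μ ∧ b * μ ≤ 1 ∧ ∀ t : ℝ, 0 ≤ t → f t ≤ (1 - b * μ) + b * t := by
  -- bound f y ≤ y/μ for y > μ
  have key : ∀ y : ℝ, μ < y → f y ≤ y / μ := by
    intro y hy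
    have hy0 : 0 < y := hμ.trans hy
    have h := twopoint μ f hf ((y - μ)/y) (μ/y) 0 y
      (div_pos (by linarith) hy0) (div_pos hμ hy0) (by field_simp; ring) le_rfl hy0.le
      (by field_simp; simp)
    obtain ⟨h0, hfy, hsum⟩ := h
    have h2 : (μ/y) * f y ≤ 1 := by
      nlinarith [mul_nonneg (div_nonneg (by linarith : (0:ℝ) ≤ y - μ) hy0.le) h0]
    rw [div_mul_eq_mul_div, div_le_one hy0] at h2
    rw [le_div_iff₀ hμ]
    linarith
  set S : Set ℝ := (fun y => (f y - 1) / (y - μ)) '' Set.Ioi μ with hS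
  have hSne : S.Nonempty := ⟨_, ⟨μ + 1, by simp, rfl⟩⟩
  have hSbdd : ∀ s ∈ S, s ≤ 1/μ := by
    rintro s ⟨y, hy, rfl⟩
    rw [Set.mem_Ioi] at hy
    have h1 : f y * μ ≤ y := by
      rw [← le_div_iff₀ hμ]; exact key y hy
    rw [div_le_div_iff₀ (by linarith) hμ]
    linarith
  have hbdd : BddAbove S := ⟨1/μ, hSbdd⟩
  set b : ℝ := max 0 (sSup S) with hb
  have hb0 : 0 ≤ b := le_max_left _ _
  have hb1 : b ≤ 1/μ := max_le (by positivity) (csSup_le hSne hSbdd)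
  refine ⟨b, by positivity, by rw [← div_mul_cancel₀ (1:ℝ) hμ.ne'] ; exact mul_le_mul_of_nonneg_right hb1 hμ.le, ?_⟩
  intro t ht
  rcases lt_or_ge μ t with hcase | hcase
  · -- t > μ
    have hmem : (f t - 1)/(t - μ) ∈ S := ⟨t, hcase, rfl⟩
    have : (f t - 1)/(t - μ) ≤ b := le_trans (le_csSup hbdd hmem) (le_max_right _ _)
    rw [div_le_iff₀ (by linarith)] at this
    linarith
  · -- t ≤ μ : show f t ≤ 1 - b*(μ - t)
    have goal : f t ≤ 1 - b * (μ - t) := by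
      rcases eq_or_lt_of_le hcase with heq | hlt
      · rw [heq]; simpa using (dirac_case μ f hf μ hμ.le le_rfl).2
      rcases le_or_gt (sSup S) 0 with hsup | hsup
      · have hbz : b = 0 := max_eq_left hsup
        rw [hbz]; simpa using (dirac_case μ f hf t ht hcase).2
      have hbS : b = sSup S := max_eq_right hsup.le
      refine le_of_forall_pos_le_add ?_
      intro ε hε
      have hδ : 0 < ε / μ := by positivity
      obtain ⟨s, hsmem, hs⟩ := exists_lt_of_lt_csSup hSne (show sSup S - ε/μ < sSup S by linarith)
      obtain ⟨y, hy, rfl⟩ := hsmem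
      rw [Set.mem_Ioi] at hy
      -- two-point with x = t, y
      have hyt : 0 < y - t := by linarith
      have hyμ : 0 < y - μ := by linarith
      have hμt : 0 < μ - t := sub_pos.mpr hlt
      have h := twopoint μ f hf ((y - μ)/(y - t)) ((μ - t)/(y - t)) t y
        (div_pos hyμ hyt) (div_pos hμt hyt) (by field_simp; ring) ht (by linarith)
        (by rw [div_mul_eq_mul_div, div_mul_eq_mul_div, ← add_div, div_le_iff₀ hyt]; nlinarith)
      obtain ⟨hft, hfy, hsum⟩ := h
      have hfyge : 1 + (sSup S - ε/μ) * (y - μ) ≤ f y := by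
        rw [lt_div_iff₀ (by linarith)] at hs
        linarith
      rw [div_mul_eq_mul_div, div_mul_eq_mul_div, ← add_div, div_le_one hyt] at hsum
      have : (y - μ) * f t ≤ (y - t) - (μ - t) * (1 + (sSup S - ε/μ) * (y - μ)) := by
        nlinarith
      have hfin : f t ≤ 1 - (sSup S - ε/μ) * (μ - t) := by
        rw [← le_div_iff₀' hyμ] at this
        rw [show (1:ℝ) - (sSup S - ε/μ) * (μ - t) = ((y - t) - (μ - t) * (1 + (sSup S - ε/μ) * (y - μ)))/(y - μ) by field_simp; ring]
        exact this
      have : ε/μ * (μ - t) ≤ ε := by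
        rw [div_mul_eq_mul_div, div_le_iff₀ hμ]
        nlinarith
      rw [hbS]
      nlinarith
    linarith
end

section
/- Let μ > 0, let X be an integrable random variable with X ≥ 0 almost surely and E[X] ≤ μ, and let X_1, X_2, … be an i.i.d. sample of X. Let F_0 be the trivial σ-algebra and F_k = σ(X_1, …, X_k) for k ≥ 1. Let (c_k)_{k≥1} be a predictable process with values in [0,1], i.e., c_k is F_{k−1}-measurable for each k. Define M_0 = 1 and M_k = M_{k−1} · ((1 − c_k) + c_k · X_k/μ). Then {M_k}_{k≥0} is a nonnegative supermartingale with respect to {F_k}_{k≥0}, with E[M_k] ≤ 1 for all k. -/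
open MeasureTheory ProbabilityTheory

/-- Let `μ > 0`, let `X₀` be integrable with `X₀ ≥ 0` a.s. and `E[X₀] ≤ μ`, and let
`X 0, X 1, X 2, …` be an i.i.d. sample of `X₀` (here `X i` stands for the paper's `X_{i+1}`).
Let `ℱ` be the natural filtration, `ℱ 0` trivial and `ℱ k = σ(X 0, …, X (k-1))`, and let
`c k` (the paper's `c_{k+1}`) be an `ℱ k`-measurable test parameter with values in `[0,1]`.
Define `M 0 = 1`, `M (k+1) = M k · ((1 − c k) + c k · X k / μ)`. Then `{M k}` is a nonnegative
supermartingale with respect to `ℱ`, and `E[M k] ≤ 1` for all `k`. -/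
theorem test_supermartingale_of_iid_sample
    {Ω : Type*} {mΩ : MeasurableSpace Ω} (P : Measure Ω) [IsProbabilityMeasure P]
    (μ : ℝ) (hμ : 0 < μ)
    (X₀ : Ω → ℝ) (hX₀int : Integrable X₀ P) (hX₀pos : ∀ᵐ ω ∂P, 0 ≤ X₀ ω)
    (hEX₀ : ∫ ω, X₀ ω ∂P ≤ μ)
    (X : ℕ → Ω → ℝ)
    (hindep : iIndepFun X P)
    (hident : ∀ i, IdentDistrib (X i) X₀ P P)
    (ℱ : Filtration ℕ mΩ)
    (hℱ : ∀ k, ℱ k = ⨆ i ∈ Finset.range k, MeasurableSpace.comap (X i) inferInstance)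
    (c : ℕ → Ω → ℝ)
    (hc_pred : ∀ k, Measurable[ℱ k] (c k))
    (hc01 : ∀ k ω, c k ω ∈ Set.Icc (0 : ℝ) 1)
    (M : ℕ → Ω → ℝ)
    (hM0 : ∀ ω, M 0 ω = 1)
    (hMrec : ∀ k ω, M (k + 1) ω = M k ω * ((1 - c k ω) + c k ω * X k ω / μ)) :
    Supermartingale M ℱ P ∧ (∀ k, ∀ᵐ ω ∂P, 0 ≤ M k ω) ∧ ∀ k, ∫ ω, M k ω ∂P ≤ 1 := by
  have hcomap_le : ∀ k j, k < j →
      MeasurableSpace.comap (X k) inferInstance ≤ ℱ j := by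
    intro k j hkj
    rw [hℱ j]
    exact le_iSup₂ (f := fun i (_ : i ∈ Finset.range j) =>
      MeasurableSpace.comap (X i) inferInstance) k (Finset.mem_range.mpr hkj)
  have hXmeas : ∀ k, Measurable (X k) := fun k =>
    Measurable.of_comap_le ((hcomap_le k (k+1) (Nat.lt_succ_self k)).trans (ℱ.le (k+1)))
  have hXmeasF : ∀ k, Measurable[ℱ (k+1)] (X k) := fun k =>
    Measurable.of_comap_le (hcomap_le k (k+1) (Nat.lt_succ_self k))
  -- a.e. nonnegativity of each X k
  have hXpos : ∀ k, ∀ᵐ ω ∂P, 0 ≤ X k ω := by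
    intro k
    have ms : MeasurableSet {x : ℝ | 0 ≤ x} := measurableSet_Ici
    have h1 : ∀ᵐ x ∂(P.map X₀), x ∈ {x : ℝ | 0 ≤ x} :=
      (ae_map_iff hX₀int.aemeasurable ms).mpr hX₀pos
    rw [← (hident k).map_eq] at h1
    exact (ae_map_iff (hXmeas k).aemeasurable ms).mp h1
  have hXint : ∀ k, Integrable (X k) P := fun k => (hident k).integrable_iff.mpr hX₀int
  have hEXk : ∀ k, ∫ ω, X k ω ∂P = ∫ ω, X₀ ω ∂P := fun k => (hident k).integral_eq
  have hEX₀nn : 0 ≤ ∫ ω, X₀ ω ∂P := integral_nonneg_of_ae hX₀pos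
  -- independence of ℱ k and X k
  have hIndep : ∀ k, Indep (ℱ k) (MeasurableSpace.comap (X k) inferInstance) P := by
    intro k
    have h := indep_biSup_compl (fun n => (hXmeas n).comap_le) hindep {n | n < k}
    refine indep_of_indep_of_le_right (indep_of_indep_of_le_left h ?_) ?_
    · rw [hℱ k]
      simp only [Finset.mem_range]
      exact le_rfl
    · exact le_iSup₂ (f := fun i (_ : i ∈ ({n | n < k} : Set ℕ)ᶜ) =>
        MeasurableSpace.comap (X i) inferInstance) k (by simp)
  -- adaptedness
  have hAdapted : ∀ k, StronglyMeasurable[ℱ k] (M k) := by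
    intro k
    induction k with
    | zero =>
      have : M 0 = fun _ => (1 : ℝ) := funext hM0
      rw [this]; exact stronglyMeasurable_const
    | succ k ih =>
      have : M (k+1) = fun ω => M k ω * ((1 - c k ω) + c k ω * X k ω / μ) :=
        funext (hMrec k)
      rw [this]
      exact (ih.mono (ℱ.mono k.le_succ)).mul
        ((stronglyMeasurable_const.sub ((hc_pred k).mono (ℱ.mono k.le_succ) le_rfl
            |>.stronglyMeasurable)).add
          ((((hc_pred k).mono (ℱ.mono k.le_succ) le_rfl).mul (hXmeasF k)).div
            measurable_const).stronglyMeasurable)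
  have hIndepFun : ∀ k, IndepFun (M k) (X k) P := fun k =>
    indep_of_indep_of_le_left (hIndep k) ((hAdapted k).measurable.comap_le)
  -- integrability
  have hMint : ∀ k, Integrable (M k) P := by
    intro k
    induction k with
    | zero =>
      have : M 0 = fun _ => (1 : ℝ) := funext hM0
      rw [this]; exact integrable_const 1
    | succ k ih =>
      have hMX : Integrable (M k * X k) P := (hIndepFun k).integrable_mul ih (hXint k)
      have hg : Integrable (fun ω => |M k ω| + |M k ω * X k ω| / μ) P :=
        ih.abs.add (hMX.abs.div_const μ)
      refine hg.mono' ((hAdapted (k+1)).mono (ℱ.le _)).aestronglyMeasurable ?_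
      filter_upwards [hXpos k] with ω hX
      have hc := hc01 k ω
      simp only [Set.mem_Icc] at hc
      rw [hMrec k ω]
      have hpos : (0:ℝ) ≤ (1 - c k ω) + c k ω * X k ω / μ := by
        have : 0 ≤ c k ω * X k ω / μ := div_nonneg (mul_nonneg hc.1 hX) hμ.le
        linarith
      have h1 : |(1 - c k ω) + c k ω * X k ω / μ| ≤ 1 + |X k ω| / μ := by
        rw [abs_of_nonneg hpos, abs_of_nonneg hX]
        have h3 : c k ω * X k ω / μ ≤ X k ω / μ := by
          gcongr
          nlinarith [hc.1, hc.2, hX]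
        linarith
      calc ‖M k ω * ((1 - c k ω) + c k ω * X k ω / μ)‖
          = |M k ω| * |(1 - c k ω) + c k ω * X k ω / μ| := abs_mul _ _
        _ ≤ |M k ω| * (1 + |X k ω| / μ) :=
            mul_le_mul_of_nonneg_left h1 (abs_nonneg _)
        _ = |M k ω| + |M k ω| * |X k ω| / μ := by ring
        _ = |M k ω| + |M k ω * X k ω| / μ := by rw [abs_mul]
  -- nonnegativity
  have hMpos : ∀ k, ∀ᵐ ω ∂P, 0 ≤ M k ω := by
    intro k
    induction k with
    | zero => filter_upwards with ω; rw [hM0 ω]; norm_num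
    | succ k ih =>
      filter_upwards [ih, hXpos k] with ω h1 h2
      have hc := hc01 k ω
      simp only [Set.mem_Icc] at hc
      rw [hMrec k ω]
      have : (0:ℝ) ≤ (1 - c k ω) + c k ω * X k ω / μ :=
        have h0 : 0 ≤ c k ω * X k ω / μ := div_nonneg (mul_nonneg hc.1 h2) hμ.le
        by linarith
      exact mul_nonneg h1 this
  -- the supermartingale condexp step
  have hstep : ∀ k, P[M (k+1) | ℱ k] ≤ᵐ[P] M k := by
    intro k
    have hc_sm : StronglyMeasurable[ℱ k] (c k) := (hc_pred k).stronglyMeasurable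
    have hMX : Integrable (M k * X k) P := (hIndepFun k).integrable_mul (hMint k) (hXint k)
    set f1 : Ω → ℝ := fun ω => M k ω * (1 - c k ω) with hf1
    set f2 : Ω → ℝ := fun ω => M k ω * c k ω / μ with hf2
    have hdecomp : M (k+1) = f1 + f2 * X k := by
      funext ω
      simp only [hf1, hf2, Pi.add_apply, Pi.mul_apply, hMrec k ω]
      ring
    have hf1_sm : StronglyMeasurable[ℱ k] f1 :=
      (hAdapted k).mul (stronglyMeasurable_const.sub hc_sm)
    have hf2_sm : StronglyMeasurable[ℱ k] f2 :=
      (((hAdapted k).measurable.mul (hc_pred k)).div measurable_const).stronglyMeasurable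
    have hf1_int : Integrable f1 P := by
      refine (hMint k).abs.mono' (hf1_sm.mono (ℱ.le k)).aestronglyMeasurable ?_
      filter_upwards with ω
      have hc := hc01 k ω
      simp only [Set.mem_Icc] at hc
      calc ‖M k ω * (1 - c k ω)‖ = |M k ω| * |1 - c k ω| := abs_mul _ _
        _ ≤ |M k ω| * 1 := mul_le_mul_of_nonneg_left
            (by rw [abs_le]; constructor <;> linarith) (abs_nonneg _)
        _ = |M k ω| := mul_one _
    have hf2X_int : Integrable (f2 * X k) P := by
      refine (hMX.abs.div_const μ).mono'
        ((hf2_sm.mono (ℱ.le k)).mul (hXmeas k).stronglyMeasurable).aestronglyMeasurable ?_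
      filter_upwards with ω
      have hc := hc01 k ω
      simp only [Set.mem_Icc] at hc
      simp only [Pi.mul_apply, hf2]
      have e : M k ω * c k ω / μ * X k ω = M k ω * X k ω * c k ω / μ := by ring
      rw [Real.norm_eq_abs, e, abs_div, abs_of_pos hμ, abs_mul]
      have : |M k ω * X k ω| * |c k ω| ≤ |M k ω * X k ω| * 1 :=
        mul_le_mul_of_nonneg_left (abs_le.mpr ⟨by linarith, hc.2⟩) (abs_nonneg _)
      rw [mul_one] at this
      exact div_le_div_of_nonneg_right this hμ.le |>.trans le_rfl
    have hXcond : P[X k | ℱ k] =ᵐ[P] fun _ => ∫ ω, X k ω ∂P := by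
      refine condExp_indep_eq (hXmeas k).comap_le (ℱ.le k) ?_ (hIndep k).symm
      exact (Measurable.of_comap_le le_rfl).stronglyMeasurable
    have hcond : P[M (k+1) | ℱ k] =ᵐ[P]
        f1 + fun ω => f2 ω * (∫ ω', X k ω' ∂P) := by
      rw [hdecomp]
      refine (condExp_add hf1_int hf2X_int (ℱ k)).trans ?_
      have h2 : P[f2 * X k | ℱ k] =ᵐ[P] f2 * P[X k | ℱ k] :=
        condExp_mul_of_stronglyMeasurable_left hf2_sm hf2X_int (hXint k)
      rw [condExp_of_stronglyMeasurable (ℱ.le k) hf1_sm hf1_int]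
      filter_upwards [h2, hXcond] with ω hω2 hωX
      simp only [Pi.add_apply, Pi.mul_apply] at *
      rw [hω2, hωX]
    filter_upwards [hcond, hMpos k] with ω hω hM
    rw [hω]
    simp only [Pi.add_apply, hf1, hf2, hEXk k]
    have hc := hc01 k ω
    simp only [Set.mem_Icc] at hc
    have key : M k ω * c k ω / μ * (∫ ω', X₀ ω' ∂P) ≤ M k ω * c k ω := by
      rw [div_mul_eq_mul_div, div_le_iff₀ hμ]
      nlinarith [mul_nonneg hM hc.1]
    nlinarith [key]
  have hsm : Supermartingale M ℱ P :=
    supermartingale_nat (fun k => hAdapted k) hMint hstep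
  refine ⟨hsm, hMpos, fun k => ?_⟩
  have h := hsm.2.1 0 k (Nat.zero_le k)
  have hint : ∫ ω, M k ω ∂P = ∫ ω, (P[M k | ℱ 0]) ω ∂P :=
    (integral_condExp (ℱ.le 0)).symm
  have hM0' : ∫ ω, M 0 ω ∂P = 1 := by
    rw [show M 0 = fun _ => (1:ℝ) from funext hM0]
    simp
  calc ∫ ω, M k ω ∂P = ∫ ω, (P[M k | ℱ 0]) ω ∂P := hint
    _ ≤ ∫ ω, M 0 ω ∂P := integral_mono_ae integrable_condExp (hMint 0) h
    _ = 1 := hM0'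
end

section
/- Let 0 < μ ≤ ν ≤ 1, let n ≥ 1 and 0 ≤ k ≤ n be integers, and let Z_1, Z_2, … be an i.i.d. sample of a Bernoulli random variable Z with success probability ν. Put S_i = Z_1 + ⋯ + Z_i, and define Y_0 = F(k; n, μ), Y_i = F(k − S_i; n − i, μ) for 1 ≤ i ≤ n, and Y_i = Y_n for i > n. Then {Y_i}_{i≥0} is a supermartingale with respect to the natural filtration of (Z_i); in particular, for every i with 1 ≤ i ≤ n and every integer s, ν·F(k − s − 1; n − i, μ) + (1 − ν)·F(k − s; n − i, μ) ≤ F(k − s; n − i + 1, μ). -/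
open MeasureTheory ProbabilityTheory

/-- The cumulative distribution function of the binomial distribution with parameters
`(n, p)`, evaluated at the integer `k`: `F(k; n, p) = Σ_{0 ≤ j ≤ k} C(n,j) p^j (1-p)^(n-j)`.
It vanishes for `k < 0` and equals `1` (for `p ∈ [0,1]`) when `k ≥ n`. -/
noncomputable def binCDF (k : ℤ) (n : ℕ) (p : ℝ) : ℝ :=
  ∑ j ∈ Finset.range (n + 1),
    if (j : ℤ) ≤ k then (n.choose j : ℝ) * p ^ j * (1 - p) ^ (n - j) else 0

lemma binCDF_term_nonneg {p : ℝ} (h0 : 0 ≤ p) (h1 : p ≤ 1) (n j m : ℕ) :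
    0 ≤ (n.choose j : ℝ) * p ^ j * (1 - p) ^ m :=
  mul_nonneg (mul_nonneg (Nat.cast_nonneg _) (pow_nonneg h0 _)) (pow_nonneg (by linarith) _)

lemma binCDF_nonneg {k : ℤ} {n : ℕ} {p : ℝ} (h0 : 0 ≤ p) (h1 : p ≤ 1) :
    0 ≤ binCDF k n p := by
  apply Finset.sum_nonneg
  intro j _
  split
  · exact binCDF_term_nonneg h0 h1 _ _ _
  · exact le_rfl

lemma binCDF_le_one {k : ℤ} {n : ℕ} {p : ℝ} (h0 : 0 ≤ p) (h1 : p ≤ 1) :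
    binCDF k n p ≤ 1 := by
  have hstep : binCDF k n p ≤ ∑ j ∈ Finset.range (n + 1),
      (n.choose j : ℝ) * p ^ j * (1 - p) ^ (n - j) := by
    apply Finset.sum_le_sum
    intro j _
    split
    · exact le_rfl
    · exact binCDF_term_nonneg h0 h1 _ _ _
  refine hstep.trans ?_
  have hb := add_pow p (1 - p) n
  simp only [add_sub_cancel, one_pow] at hb
  calc ∑ j ∈ Finset.range (n + 1), (n.choose j : ℝ) * p ^ j * (1 - p) ^ (n - j)
      = ∑ j ∈ Finset.range (n + 1), p ^ j * (1 - p) ^ (n - j) * (n.choose j : ℝ) := by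
        apply Finset.sum_congr rfl; intros; ring
    _ = 1 := hb.symm
    _ ≤ 1 := le_rfl

lemma binCDF_mono {k : ℤ} {n : ℕ} {p : ℝ} (h0 : 0 ≤ p) (h1 : p ≤ 1) :
    binCDF (k - 1) n p ≤ binCDF k n p := by
  apply Finset.sum_le_sum
  intro j _
  by_cases h : (j : ℤ) ≤ k - 1
  · rw [if_pos h, if_pos (by omega)]
  · rw [if_neg h]
    split
    · exact binCDF_term_nonneg h0 h1 _ _ _
    · exact le_rfl

lemma binCDF_pascal (k : ℤ) (m : ℕ) (p : ℝ) :
    binCDF k (m + 1) p = p * binCDF (k - 1) m p + (1 - p) * binCDF k m p := by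
  unfold binCDF
  rw [Finset.sum_range_succ' (n := m + 1), Finset.mul_sum, Finset.mul_sum]
  push_cast
  have h1 : ∀ j ∈ Finset.range (m + 1),
      (if ((j : ℕ) + 1 : ℤ) ≤ k then ((m+1).choose (j+1) : ℝ) * p ^ (j+1) * (1-p) ^ (m - j) else 0)
      = (p * if (j : ℤ) ≤ k - 1 then (m.choose j : ℝ) * p ^ j * (1-p) ^ (m - j) else 0)
        + ((1 - p) * if ((j : ℕ) + 1 : ℤ) ≤ k then (m.choose (j+1) : ℝ) * p ^ (j+1) * (1-p) ^ (m - (j+1)) else 0) := by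
    intro j hj
    rw [Finset.mem_range] at hj
    have hch : ((m+1).choose (j+1) : ℝ) = (m.choose j : ℝ) + (m.choose (j+1) : ℝ) := by
      rw [Nat.choose_succ_succ']; push_cast; ring
    by_cases h : ((j : ℕ) + 1 : ℤ) ≤ k
    · rw [if_pos h, if_pos h, if_pos (by omega), hch]
      rcases Nat.lt_or_ge j m with hjm | hjm
      · have he2 : m - j = (m - (j+1)) + 1 := by omega
        rw [he2]; ring
      · have hjm' : j = m := by omega
        subst hjm'
        simp [Nat.choose_succ_self]; ring
    · rw [if_neg h, if_neg h, if_neg (by omega)]; ring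
  rw [Finset.sum_congr rfl h1, Finset.sum_add_distrib]
  have h2 : (∑ j ∈ Finset.range (m + 1),
        (1 - p) * if ((j : ℕ) + 1 : ℤ) ≤ k then (m.choose (j+1) : ℝ) * p ^ (j+1) * (1-p) ^ (m - (j+1)) else 0)
      + (if (0 : ℤ) ≤ k then ((m+1).choose 0 : ℝ) * p ^ 0 * (1-p) ^ (m + 1) else 0)
      = ∑ i ∈ Finset.range (m + 1), (1 - p) * if (i : ℤ) ≤ k then (m.choose i : ℝ) * p ^ i * (1-p) ^ (m - i) else 0 := by
    rw [Finset.sum_range_succ]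
    conv_rhs => rw [Finset.sum_range_succ' (n := m)]
    push_cast
    simp only [Nat.choose_succ_self, Nat.cast_zero, Nat.choose_zero_right, Nat.cast_one,
      pow_zero, Nat.sub_zero, mul_ite, mul_zero, zero_mul, one_mul, mul_one, add_zero, zero_add]
    congr 1
    · rw [ite_self, add_zero]
    · split <;> ring
  rw [← h2]
  ring

lemma binCDF_key {μ ν : ℝ} (hμ : 0 < μ) (hμν : μ ≤ ν) (hν : ν ≤ 1) (t : ℤ) (m : ℕ) :
    ν * binCDF (t - 1) m μ + (1 - ν) * binCDF t m μ ≤ binCDF t (m + 1) μ := by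
  rw [binCDF_pascal]
  have h0 : (0:ℝ) ≤ μ := hμ.le
  have h1 : μ ≤ 1 := hμν.trans hν
  have hm := binCDF_mono (k := t) (n := m) (p := μ) h0 h1
  nlinarith [hm, hμν]

/-- Let `0 < μ ≤ ν ≤ 1`, `n ≥ 1`, `0 ≤ k ≤ n`, and let `Z 0, Z 1, …` be an i.i.d. sample of a
Bernoulli random variable with success probability `ν` (here `Z i` stands for the paper's
`Z_{i+1}`).  With `S i = Z 0 + ⋯ + Z (i-1)`, define `Y 0 = F(k; n, μ)`,
`Y i = F(k − S i; n − i, μ)` for `1 ≤ i ≤ n` and `Y i = Y n` for `i > n`.  Then `{Y i}` is a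
supermartingale with respect to the natural filtration of `(Z i)`; in particular for every
`1 ≤ i ≤ n` and every integer `s`,
`ν·F(k−s−1; n−i, μ) + (1−ν)·F(k−s; n−i, μ) ≤ F(k−s; n−i+1, μ)`. -/
theorem binomial_cdf_supermartingale
    {Ω : Type*} {mΩ : MeasurableSpace Ω} (P : Measure Ω) [IsProbabilityMeasure P]
    (μ ν : ℝ) (hμ : 0 < μ) (hμν : μ ≤ ν) (hν : ν ≤ 1)
    (n k : ℕ) (hn : 1 ≤ n) (hk : k ≤ n)
    (Z : ℕ → Ω → ℕ)
    (hindep : iIndepFun Z P)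
    (hZ01 : ∀ i, ∀ᵐ ω ∂P, Z i ω ≤ 1)
    (hZν : ∀ i, P {ω | Z i ω = 1} = ENNReal.ofReal ν)
    (ℱ : Filtration ℕ mΩ)
    (hℱ : ∀ m, ℱ m = ⨆ i ∈ Finset.range m, MeasurableSpace.comap (Z i) inferInstance)
    (Y : ℕ → Ω → ℝ)
    (hY0 : ∀ ω, Y 0 ω = binCDF (k : ℤ) n μ)
    (hY : ∀ i, 1 ≤ i → i ≤ n → ∀ ω,
      Y i ω = binCDF ((k : ℤ) - ∑ j ∈ Finset.range i, (Z j ω : ℤ)) (n - i) μ)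
    (hYtail : ∀ i, n < i → ∀ ω, Y i ω = Y n ω) :
    Supermartingale Y ℱ P ∧
      ∀ i, 1 ≤ i → i ≤ n → ∀ s : ℤ,
        ν * binCDF ((k : ℤ) - s - 1) (n - i) μ + (1 - ν) * binCDF ((k : ℤ) - s) (n - i) μ ≤
          binCDF ((k : ℤ) - s) (n - i + 1) μ := by
  have hμ1 : μ ≤ 1 := hμν.trans hν
  have hν0 : (0:ℝ) ≤ ν := hμ.le.trans hμν
  -- the set S
  set S : ℕ → Ω → ℤ := fun i ω => ∑ j ∈ Finset.range i, (Z j ω : ℤ) with hSdef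
  -- comap σ-algebras are below ℱ i for indices < i
  have hcomap_le : ∀ j i : ℕ, j < i →
      MeasurableSpace.comap (Z j) inferInstance ≤ ℱ i := by
    intro j i hj
    rw [hℱ i]
    exact le_biSup (f := fun j => MeasurableSpace.comap (Z j) inferInstance) (Finset.mem_range.mpr hj)
  have hZmeasF : ∀ j i : ℕ, j < i → Measurable[ℱ i] (Z j) := fun j i hj =>
    measurable_iff_comap_le.mpr (hcomap_le j i hj)
  have hZmeas : ∀ j, Measurable (Z j) := fun j =>
    ((hZmeasF j (j+1) (Nat.lt_succ_self j)).mono (ℱ.le (j+1)) le_rfl)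
  have hSmeas : ∀ i, Measurable[ℱ i] (S i) := by
    intro i
    apply Finset.measurable_sum
    intro j hj
    exact (measurable_from_top (f := fun a : ℕ => (a : ℤ))).comp
      (hZmeasF j i (Finset.mem_range.mp hj))
  -- uniform formula for Y i, i ≤ n
  have hY' : ∀ i, i ≤ n → ∀ ω, Y i ω = binCDF ((k : ℤ) - S i ω) (n - i) μ := by
    intro i hi ω
    rcases Nat.eq_zero_or_pos i with h0 | h0
    · subst h0
      simpa [hSdef] using hY0 ω
    · exact hY i h0 hi ω
  -- strong measurability
  have hSM : ∀ i, StronglyMeasurable[ℱ i] (Y i) := by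
    intro i
    rcases le_or_gt i n with hi | hi
    · have : Y i = fun ω => binCDF ((k : ℤ) - S i ω) (n - i) μ := funext (hY' i hi)
      rw [this]
      exact ((measurable_from_top (f := fun z : ℤ => binCDF ((k : ℤ) - z) (n - i) μ)).comp
        (hSmeas i)).stronglyMeasurable
    · have : Y i = Y n := funext (hYtail i hi)
      rw [this]
      have : Y n = fun ω => binCDF ((k : ℤ) - S n ω) (n - n) μ := funext (hY' n le_rfl)
      rw [this]
      exact (((measurable_from_top (f := fun z : ℤ => binCDF ((k : ℤ) - z) (n - n) μ)).comp
        (hSmeas n)).stronglyMeasurable).mono (ℱ.mono hi.le)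
  -- bounds
  have hbd : ∀ i ω, 0 ≤ Y i ω ∧ Y i ω ≤ 1 := by
    intro i ω
    rcases le_or_gt i n with hi | hi
    · rw [hY' i hi ω]
      exact ⟨binCDF_nonneg hμ.le hμ1, binCDF_le_one hμ.le hμ1⟩
    · rw [hYtail i hi ω, hY' n le_rfl ω]
      exact ⟨binCDF_nonneg hμ.le hμ1, binCDF_le_one hμ.le hμ1⟩
  -- integrability
  have hint : ∀ i, Integrable (Y i) P := by
    intro i
    refine ⟨((hSM i).mono (ℱ.le i)).aestronglyMeasurable, ?_⟩
    refine HasFiniteIntegral.of_bounded (C := 1) (f := Y i) ?_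
    refine Filter.Eventually.of_forall fun ω => ?_
    rw [Real.norm_eq_abs, abs_le]
    exact ⟨by linarith [(hbd i ω).1], (hbd i ω).2⟩
  -- the key inequality, second part of the conclusion
  have key : ∀ i, 1 ≤ i → i ≤ n → ∀ s : ℤ,
      ν * binCDF ((k : ℤ) - s - 1) (n - i) μ + (1 - ν) * binCDF ((k : ℤ) - s) (n - i) μ ≤
        binCDF ((k : ℤ) - s) (n - i + 1) μ := by
    intro i _ _ s
    exact binCDF_key hμ hμν hν ((k : ℤ) - s) (n - i)
  refine ⟨?_, key⟩
  -- supermartingale property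
  refine supermartingale_nat (fun i => hSM i) hint ?_
  intro i
  rcases le_or_gt n i with hi | hi
  · -- tail case : Y (i+1) = Y i
    have hYY : Y (i + 1) = Y i := by
      funext ω
      rw [hYtail (i+1) (by omega) ω]
      rcases eq_or_lt_of_le hi with h | h
      · rw [← h]
      · rw [hYtail i h ω]
    rw [hYY, condExp_of_stronglyMeasurable (ℱ.le i) (hSM i) (hint i)]
  · -- main case : i < n
    set m := n - (i + 1) with hm
    set g₁ : Ω → ℝ := fun ω => binCDF ((k : ℤ) - S i ω - 1) m μ with hg₁
    set g₀ : Ω → ℝ := fun ω => binCDF ((k : ℤ) - S i ω) m μ with hg₀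
    set χ : Ω → ℝ := fun ω => (Z i ω : ℝ) with hχ
    set χ' : Ω → ℝ := fun ω => 1 - (Z i ω : ℝ) with hχ'
    have hg₁m : StronglyMeasurable[ℱ i] g₁ :=
      ((measurable_from_top (f := fun z : ℤ => binCDF ((k : ℤ) - z - 1) m μ)).comp
        (hSmeas i)).stronglyMeasurable
    have hg₀m : StronglyMeasurable[ℱ i] g₀ :=
      ((measurable_from_top (f := fun z : ℤ => binCDF ((k : ℤ) - z) m μ)).comp
        (hSmeas i)).stronglyMeasurable
    have hχm : Measurable χ :=
      (measurable_from_top (f := fun a : ℕ => (a : ℝ))).comp (hZmeas i)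
    have hχ'm : Measurable χ' := measurable_const.sub hχm
    have hAmeas : MeasurableSet {ω | Z i ω = 1} := hZmeas i (measurableSet_singleton 1)
    -- χ is a.e. the indicator of {Z i = 1}
    have hχae : χ =ᵐ[P] Set.indicator {ω | Z i ω = 1} (fun _ => (1:ℝ)) := by
      filter_upwards [hZ01 i] with ω h
      by_cases h1 : Z i ω = 1
      · simp [hχ, h1, Set.indicator_of_mem, Set.mem_setOf_eq]
      · have h0 : Z i ω = 0 := by omega
        simp [hχ, h0, Set.indicator_of_notMem, Set.mem_setOf_eq, h1]
    have hχint : Integrable χ P := by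
      refine Integrable.congr ?_ hχae.symm
      exact (integrable_const (1:ℝ)).indicator hAmeas
    have hχ'int : Integrable χ' P := (integrable_const (1:ℝ)).sub hχint
    have hEχ : ∫ ω, χ ω ∂P = ν := by
      rw [integral_congr_ae hχae, integral_indicator_const (1:ℝ) hAmeas, measureReal_def, hZν i,
        ENNReal.toReal_ofReal hν0, smul_eq_mul, mul_one]
    have hEχ' : ∫ ω, χ' ω ∂P = 1 - ν := by
      rw [integral_sub (integrable_const 1) hχint]
      simp [hEχ]
    -- a.e. bounds on χ, χ'
    have hχbd : ∀ᵐ ω ∂P, 0 ≤ χ ω ∧ χ ω ≤ 1 := by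
      filter_upwards [hZ01 i] with ω h
      constructor
      · positivity
      · exact_mod_cast Nat.cast_le.mpr h
    -- Y (i+1) a.e. equals g₁ * χ + g₀ * χ'
    have hYe : Y (i + 1) =ᵐ[P] fun ω => g₁ ω * χ ω + g₀ ω * χ' ω := by
      filter_upwards [hZ01 i] with ω h
      rw [hY' (i+1) (by omega) ω]
      have hSs : S (i+1) ω = S i ω + (Z i ω : ℤ) := Finset.sum_range_succ _ i
      have hnm : n - (i+1) = m := rfl
      by_cases h1 : Z i ω = 1
      · have : (k : ℤ) - S (i+1) ω = (k : ℤ) - S i ω - 1 := by rw [hSs, h1]; push_cast; ring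
        rw [hnm, this]
        simp [hg₁, hg₀, hχ, hχ', h1]
      · have h0 : Z i ω = 0 := by omega
        have : (k : ℤ) - S (i+1) ω = (k : ℤ) - S i ω := by rw [hSs, h0]; push_cast; ring
        rw [hnm, this]
        simp [hg₁, hg₀, hχ, hχ', h0]
    -- integrability of the products
    have hprod_int : ∀ (g : Ω → ℝ), StronglyMeasurable[ℱ i] g → (∀ ω, |g ω| ≤ 1) →
        ∀ (c : Ω → ℝ), Measurable c → (∀ᵐ ω ∂P, |c ω| ≤ 1) → Integrable (g * c) P := by
      intro g hg hgb c hc hcb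
      refine ⟨(((hg.mono (ℱ.le i)).measurable.mul hc).stronglyMeasurable).aestronglyMeasurable, ?_⟩
      refine HasFiniteIntegral.of_bounded (C := 1) ?_
      filter_upwards [hcb] with ω hω
      rw [Pi.mul_apply, Real.norm_eq_abs, abs_mul]
      calc |g ω| * |c ω| ≤ 1 * 1 := by
            exact mul_le_mul (hgb ω) hω (abs_nonneg _) zero_le_one
        _ = 1 := by ring
    have hg₁bd : ∀ ω, |g₁ ω| ≤ 1 := by
      intro ω
      rw [abs_le]
      exact ⟨by linarith [binCDF_nonneg (k := (k:ℤ) - S i ω - 1) (n := m) hμ.le hμ1],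
        binCDF_le_one hμ.le hμ1⟩
    have hg₀bd : ∀ ω, |g₀ ω| ≤ 1 := by
      intro ω
      rw [abs_le]
      exact ⟨by linarith [binCDF_nonneg (k := (k:ℤ) - S i ω) (n := m) hμ.le hμ1],
        binCDF_le_one hμ.le hμ1⟩
    have hχabs : ∀ᵐ ω ∂P, |χ ω| ≤ 1 := by
      filter_upwards [hχbd] with ω h
      rw [abs_le]; exact ⟨by linarith [h.1], h.2⟩
    have hχ'abs : ∀ᵐ ω ∂P, |χ' ω| ≤ 1 := by
      filter_upwards [hχbd] with ω h
      rw [abs_le]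
      constructor <;> simp only [hχ'] <;> [linarith [h.2]; linarith [h.1]]
    have hint₁ : Integrable (g₁ * χ) P := hprod_int g₁ hg₁m hg₁bd χ hχm hχabs
    have hint₀ : Integrable (g₀ * χ') P := hprod_int g₀ hg₀m hg₀bd χ' hχ'm hχ'abs
    -- independence
    have h_le_comap : ∀ j, MeasurableSpace.comap (Z j) inferInstance ≤ mΩ :=
      fun j => (hZmeas j).comap_le
    have hIndep : Indep (MeasurableSpace.comap (Z i) inferInstance) (ℱ i) P := by
      have h := indep_biSup_compl h_le_comap hindep {i}
      rw [iSup_singleton] at h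
      refine indep_of_indep_of_le_right h ?_
      rw [hℱ i]
      refine iSup₂_le fun j hj => ?_
      have hji : j ∈ ({i}ᶜ : Set ℕ) := by
        simp only [Set.mem_compl_iff, Set.mem_singleton_iff]
        intro hcon
        rw [Finset.mem_range] at hj
        omega
      exact le_biSup (f := fun j => MeasurableSpace.comap (Z j) inferInstance) hji
    -- conditional expectations of χ and χ'
    have hχSM : StronglyMeasurable[MeasurableSpace.comap (Z i) inferInstance] χ := by
      refine Measurable.stronglyMeasurable ?_
      exact (measurable_from_top (f := fun a : ℕ => (a : ℝ))).comp
        (measurable_iff_comap_le.mpr le_rfl)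
    have hχ'SM : StronglyMeasurable[MeasurableSpace.comap (Z i) inferInstance] χ' := by
      refine Measurable.stronglyMeasurable ?_
      refine Measurable.sub measurable_const ?_
      exact (measurable_from_top (f := fun a : ℕ => (a : ℝ))).comp
        (measurable_iff_comap_le.mpr le_rfl)
    have hcondχ : P[χ|ℱ i] =ᵐ[P] fun _ => ν := by
      have := condExp_indep_eq (μ := P) (h_le_comap i) (ℱ.le i) hχSM hIndep
      rw [hEχ] at this
      exact this
    have hcondχ' : P[χ'|ℱ i] =ᵐ[P] fun _ => 1 - ν := by
      have := condExp_indep_eq (μ := P) (h_le_comap i) (ℱ.le i) hχ'SM hIndep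
      rw [hEχ'] at this
      exact this
    -- assemble the conditional expectation
    have hce : P[Y (i+1)|ℱ i] =ᵐ[P] fun ω => g₁ ω * ν + g₀ ω * (1 - ν) := by
      calc P[Y (i+1)|ℱ i]
          =ᵐ[P] P[fun ω => g₁ ω * χ ω + g₀ ω * χ' ω|ℱ i] := condExp_congr_ae hYe
        _ =ᵐ[P] P[g₁ * χ|ℱ i] + P[g₀ * χ'|ℱ i] := condExp_add hint₁ hint₀ _
        _ =ᵐ[P] (g₁ * P[χ|ℱ i]) + (g₀ * P[χ'|ℱ i]) :=
            (condExp_mul_of_stronglyMeasurable_left hg₁m hint₁ hχint).add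
              (condExp_mul_of_stronglyMeasurable_left hg₀m hint₀ hχ'int)
        _ =ᵐ[P] fun ω => g₁ ω * ν + g₀ ω * (1 - ν) := by
            filter_upwards [hcondχ, hcondχ'] with ω h h'
            simp only [Pi.add_apply, Pi.mul_apply, h, h']
    refine hce.trans_le ?_
    refine Filter.Eventually.of_forall fun ω => ?_
    rw [hY' i hi.le ω]
    have hni : n - i = m + 1 := by omega
    rw [hni]
    have := binCDF_key hμ hμν hν ((k:ℤ) - S i ω) m
    simp only [hg₁, hg₀]
    linarith [this]
end

section
/- Let μ > 0 and let X be an integrable random variable with X ≥ 0 almost surely. Define λ(c) = E[log((1−c) + c·X/μ)] for 0 ≤ c < 1. Then λ is twice continuously differentiable and concave on (0,1), with λ'(c) = E[(X/μ − 1)/((1−c) + c·X/μ)] and λ''(c) = −E[((X/μ − 1)/((1−c) + c·X/μ))²] ≤ 0; moreover λ(0) = 0 and lim_{c↓0} λ'(c) = (E[X] − μ)/μ. If in addition P(X = μ) < 1, then λ''(c) < 0 for all 0 < c < 1, so λ is strictly concave on (0,1). -/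
open MeasureTheory Filter

lemma my_denom_pos {y c : ℝ} (hy : 0 ≤ y) (hc0 : 0 ≤ c) (hc1 : c < 1) :
    0 < (1 - c) + c * y := by nlinarith

lemma my_affine_hasDeriv (y c : ℝ) :
    HasDerivAt (fun t : ℝ => (1 - t) + t * y) (y - 1) c := by
  have h1 : HasDerivAt (fun t : ℝ => 1 - t) (-1) c := (hasDerivAt_id c).const_sub 1
  have h2 : HasDerivAt (fun t : ℝ => t * y) y c := by
    simpa using (hasDerivAt_id c).mul_const y
  have := h1.add h2
  exact this.congr_deriv (by ring)

lemma my_log_hasDeriv {y : ℝ} (hy : 0 ≤ y) {c : ℝ} (hc0 : 0 ≤ c) (hc1 : c < 1) :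
    HasDerivAt (fun t => Real.log ((1 - t) + t * y)) ((y - 1) / ((1 - c) + c * y)) c :=
  (my_affine_hasDeriv y c).log (ne_of_gt (my_denom_pos hy hc0 hc1))

lemma my_ratio_hasDeriv {y : ℝ} (hy : 0 ≤ y) {c : ℝ} (hc0 : 0 ≤ c) (hc1 : c < 1) :
    HasDerivAt (fun t => (y - 1) / ((1 - t) + t * y))
      (-((y - 1) / ((1 - c) + c * y)) ^ 2) c := by
  have hd := my_denom_pos hy hc0 hc1
  have := (hasDerivAt_const c (y - 1)).div (my_affine_hasDeriv y c) (ne_of_gt hd)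
  exact this.congr_deriv (by rw [div_pow]; ring)

lemma my_ratio_bound1 {y c δ : ℝ} (hy : 0 ≤ y) (hc0 : 0 ≤ c) (hc1 : c < 1)
    (hδ : 0 < δ) (hδc : δ ≤ 1 - c) :
    |(y - 1) / ((1 - c) + c * y)| ≤ (y + 1) / δ := by
  have hd := my_denom_pos hy hc0 hc1
  rw [abs_div, abs_of_pos hd]
  apply div_le_div₀ (by linarith) _ hδ (by nlinarith)
  exact abs_le.2 ⟨by linarith, by linarith⟩

lemma my_ratio_bound2 {y c δ : ℝ} (hy : 0 ≤ y) (hδ : 0 < δ) (hδc : δ ≤ c) (hδc' : δ ≤ 1 - c) :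
    |(y - 1) / ((1 - c) + c * y)| ≤ 1 / δ := by
  have hc0 : 0 ≤ c := le_trans hδ.le hδc
  have hc1 : c < 1 := by linarith
  have hd := my_denom_pos hy hc0 hc1
  rw [abs_div, abs_of_pos hd]
  rcases le_or_gt 1 y with h | h
  · rw [abs_of_nonneg (by linarith : (0:ℝ) ≤ y - 1), div_le_div_iff₀ hd hδ]
    nlinarith [mul_nonneg (by linarith : (0:ℝ) ≤ c - δ) (by linarith : (0:ℝ) ≤ y - 1)]
  · rw [abs_of_nonpos (by linarith : y - 1 ≤ 0)]
    apply div_le_div₀ (by positivity) (by linarith) hδ (by nlinarith)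

lemma my_ratio_bound3 {y c : ℝ} (hy : 0 ≤ y) (hc0 : 0 < c) (hc1 : c < 1/2) :
    |(y - 1) / ((1 - c) + c * y)| ≤ y + 2 := by
  have hd := my_denom_pos hy hc0.le (by linarith)
  rw [abs_div, abs_of_pos hd]
  rcases le_or_gt 1 y with h | h
  · rw [abs_of_nonneg (by linarith : (0:ℝ) ≤ y - 1), div_le_iff₀ hd]
    have h6 : (1:ℝ) ≤ (1 - c) + c * y := by nlinarith
    nlinarith [mul_le_mul_of_nonneg_left h6 (by linarith : (0:ℝ) ≤ y + 2)]
  · rw [abs_of_nonpos (by linarith : y - 1 ≤ 0), div_le_iff₀ hd]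
    nlinarith

lemma my_abs_log_bound {y c : ℝ} (hy : 0 ≤ y) (hc0 : 0 ≤ c) (hc1 : c < 1) :
    |Real.log ((1 - c) + c * y)| ≤ |Real.log (1 - c)| + y := by
  have hd := my_denom_pos hy hc0 hc1
  rw [abs_le]
  constructor
  · have h1 : Real.log (1 - c) ≤ Real.log ((1 - c) + c * y) :=
      Real.log_le_log (by linarith) (by nlinarith)
    have h2 : -|Real.log (1 - c)| ≤ Real.log (1 - c) := neg_abs_le _
    linarith
  · have h3 : Real.log ((1 - c) + c * y) ≤ ((1 - c) + c * y) - 1 :=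
      Real.log_le_sub_one_of_pos hd
    have h4 : c * y ≤ y := by nlinarith
    have h5 := abs_nonneg (Real.log (1 - c))
    linarith


/-- Let `μ > 0` and let `X ≥ 0` a.s. be integrable.  With
`lam c = E[log((1−c) + c·X/μ)]`, `lam' c = E[(X/μ − 1)/((1−c) + c·X/μ)]` and
`lam'' c = −E[((X/μ − 1)/((1−c) + c·X/μ))²]`, the function `lam` is twice continuously
differentiable and concave on `(0,1)` with derivative `lam'` and second derivative
`lam'' ≤ 0`; moreover `lam 0 = 0` and `lam' c → (E[X] − μ)/μ` as `c ↓ 0`.  If in addition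
`P(X = μ) < 1` then `lam'' < 0` on `(0,1)` and `lam` is strictly concave there. -/
theorem lambda_twice_differentiable_concave
    {Ω : Type*} {mΩ : MeasurableSpace Ω} (P : Measure Ω) [IsProbabilityMeasure P]
    (μ : ℝ) (hμ : 0 < μ)
    (X : Ω → ℝ) (hXint : Integrable X P) (hXpos : ∀ᵐ ω ∂P, 0 ≤ X ω)
    (lam lam' lam'' : ℝ → ℝ)
    (hlam : ∀ c, lam c = ∫ ω, Real.log ((1 - c) + c * X ω / μ) ∂P)
    (hlam' : ∀ c, lam' c = ∫ ω, (X ω / μ - 1) / ((1 - c) + c * X ω / μ) ∂P)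
    (hlam'' : ∀ c, lam'' c = ∫ ω, -((X ω / μ - 1) / ((1 - c) + c * X ω / μ)) ^ 2 ∂P) :
    (∀ c ∈ Set.Ioo (0 : ℝ) 1, HasDerivAt lam (lam' c) c) ∧
    (∀ c ∈ Set.Ioo (0 : ℝ) 1, HasDerivAt lam' (lam'' c) c) ∧
    ContinuousOn lam'' (Set.Ioo (0 : ℝ) 1) ∧
    (∀ c ∈ Set.Ioo (0 : ℝ) 1, lam'' c ≤ 0) ∧
    ConcaveOn ℝ (Set.Ioo (0 : ℝ) 1) lam ∧
    lam 0 = 0 ∧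
    Tendsto lam' (nhdsWithin 0 (Set.Ioi 0)) (nhds ((∫ ω, X ω ∂P - μ) / μ)) ∧
    (P {ω | X ω = μ} < 1 →
      (∀ c ∈ Set.Ioo (0 : ℝ) 1, lam'' c < 0) ∧ StrictConcaveOn ℝ (Set.Ioo (0 : ℝ) 1) lam) := by
  have hμ' : μ ≠ 0 := ne_of_gt hμ
  simp only [mul_div_assoc] at hlam hlam' hlam''
  have hlamf : lam = fun c => ∫ ω, Real.log ((1 - c) + c * (X ω / μ)) ∂P := funext hlam
  have hlam'f : lam' = fun c => ∫ ω, (X ω / μ - 1) / ((1 - c) + c * (X ω / μ)) ∂P :=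
    funext hlam'
  have hlam''f : lam'' = fun c => ∫ ω, -((X ω / μ - 1) / ((1 - c) + c * (X ω / μ))) ^ 2 ∂P :=
    funext hlam''
  have hY : ∀ᵐ ω ∂P, 0 ≤ X ω / μ := hXpos.mono fun ω h => div_nonneg h hμ.le
  have hYint : Integrable (fun ω => X ω / μ) P := hXint.div_const μ
  have hYm : AEMeasurable (fun ω => X ω / μ) P := hYint.aemeasurable
  have hdm : ∀ c : ℝ, AEMeasurable (fun ω => (1 - c) + c * (X ω / μ)) P := fun c =>
    aemeasurable_const.add (hYm.const_mul c)
  have hFm : ∀ c : ℝ, AEStronglyMeasurable (fun ω => Real.log ((1 - c) + c * (X ω / μ))) P :=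
    fun c => (Real.measurable_log.comp_aemeasurable (hdm c)).aestronglyMeasurable
  have hF'm : ∀ c : ℝ,
      AEStronglyMeasurable (fun ω => (X ω / μ - 1) / ((1 - c) + c * (X ω / μ))) P :=
    fun c => ((hYm.sub aemeasurable_const).div (hdm c)).aestronglyMeasurable
  have hF''m : ∀ c : ℝ, AEStronglyMeasurable
      (fun ω => -((X ω / μ - 1) / ((1 - c) + c * (X ω / μ))) ^ 2) P := fun c =>
    ((((hYm.sub aemeasurable_const).div (hdm c)).pow_const 2).neg).aestronglyMeasurable
  have hFint : ∀ c ∈ Set.Ioo (0:ℝ) 1,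
      Integrable (fun ω => Real.log ((1 - c) + c * (X ω / μ))) P := by
    intro c hc
    refine Integrable.mono' ((integrable_const |Real.log (1 - c)|).add hYint) (hFm c) ?_
    filter_upwards [hY] with ω hy
    rw [Real.norm_eq_abs]
    exact my_abs_log_bound hy hc.1.le hc.2
  -- ball facts
  have hball : ∀ c₀ ∈ Set.Ioo (0:ℝ) 1, ∀ c ∈ Metric.ball c₀ (min c₀ (1 - c₀) / 2),
      min c₀ (1 - c₀) / 2 ≤ c ∧ min c₀ (1 - c₀) / 2 ≤ 1 - c := by
    intro c₀ hc₀ c hc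
    rw [Metric.mem_ball, Real.dist_eq, abs_lt] at hc
    have h1 := min_le_left c₀ (1 - c₀)
    have h2 := min_le_right c₀ (1 - c₀)
    exact ⟨by linarith [hc.1], by linarith [hc.2]⟩
  have hδpos : ∀ c₀ ∈ Set.Ioo (0:ℝ) 1, 0 < min c₀ (1 - c₀) / 2 := by
    intro c₀ hc₀
    have : 0 < min c₀ (1 - c₀) := lt_min hc₀.1 (by linarith [hc₀.2])
    positivity
  -- first derivative under the integral
  have key : ∀ c₀ ∈ Set.Ioo (0:ℝ) 1,
      Integrable (fun ω => (X ω / μ - 1) / ((1 - c₀) + c₀ * (X ω / μ))) P ∧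
      HasDerivAt (fun c => ∫ ω, Real.log ((1 - c) + c * (X ω / μ)) ∂P)
        (∫ ω, (X ω / μ - 1) / ((1 - c₀) + c₀ * (X ω / μ)) ∂P) c₀ := by
    intro c₀ hc₀
    set δ := min c₀ (1 - c₀) / 2 with hδdef
    have hδ : 0 < δ := hδpos c₀ hc₀
    refine hasDerivAt_integral_of_dominated_loc_of_deriv_le
      (F' := fun c ω => (X ω / μ - 1) / ((1 - c) + c * (X ω / μ)))
      (bound := fun ω => (X ω / μ + 1) / δ) (Metric.ball_mem_nhds c₀ hδ)
      (.of_forall fun c => hFm c) (hFint c₀ hc₀) (hF'm c₀) ?_ ?_ ?_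
    · filter_upwards [hY] with ω hy
      intro c hc
      obtain ⟨h2, h3⟩ := hball c₀ hc₀ c hc
      rw [Real.norm_eq_abs]
      exact my_ratio_bound1 hy (by linarith) (by linarith) hδ h3
    · exact (hYint.add (integrable_const 1)).div_const δ
    · filter_upwards [hY] with ω hy
      intro c hc
      obtain ⟨h2, h3⟩ := hball c₀ hc₀ c hc
      exact my_log_hasDeriv hy (by linarith) (by linarith)
  -- second derivative under the integral
  have key2 : ∀ c₀ ∈ Set.Ioo (0:ℝ) 1,
      Integrable (fun ω => -((X ω / μ - 1) / ((1 - c₀) + c₀ * (X ω / μ))) ^ 2) P ∧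
      HasDerivAt (fun c => ∫ ω, (X ω / μ - 1) / ((1 - c) + c * (X ω / μ)) ∂P)
        (∫ ω, -((X ω / μ - 1) / ((1 - c₀) + c₀ * (X ω / μ))) ^ 2 ∂P) c₀ := by
    intro c₀ hc₀
    set δ := min c₀ (1 - c₀) / 2 with hδdef
    have hδ : 0 < δ := hδpos c₀ hc₀
    refine hasDerivAt_integral_of_dominated_loc_of_deriv_le
      (F' := fun c ω => -((X ω / μ - 1) / ((1 - c) + c * (X ω / μ))) ^ 2)
      (bound := fun _ => (1 / δ) ^ 2) (Metric.ball_mem_nhds c₀ hδ)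
      (.of_forall fun c => hF'm c) ((key c₀ hc₀).1) (hF''m c₀) ?_ (integrable_const _) ?_
    · filter_upwards [hY] with ω hy
      intro c hc
      obtain ⟨h2, h3⟩ := hball c₀ hc₀ c hc
      rw [Real.norm_eq_abs, abs_neg, abs_pow]
      exact pow_le_pow_left₀ (abs_nonneg _) (my_ratio_bound2 hy hδ h2 h3) 2
    · filter_upwards [hY] with ω hy
      intro c hc
      obtain ⟨h2, h3⟩ := hball c₀ hc₀ c hc
      exact my_ratio_hasDeriv hy (by linarith) (by linarith)
  have A1 : ∀ c ∈ Set.Ioo (0:ℝ) 1, HasDerivAt lam (lam' c) c := by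
    intro c hc
    rw [hlamf, hlam' c]
    exact (key c hc).2
  have A2 : ∀ c ∈ Set.Ioo (0:ℝ) 1, HasDerivAt lam' (lam'' c) c := by
    intro c hc
    rw [hlam'f, hlam'' c]
    exact (key2 c hc).2
  have A3 : ContinuousOn lam'' (Set.Ioo (0:ℝ) 1) := by
    intro c₀ hc₀
    have hδ : 0 < min c₀ (1 - c₀) / 2 := hδpos c₀ hc₀
    have hca : ContinuousAt
        (fun c => ∫ ω, -((X ω / μ - 1) / ((1 - c) + c * (X ω / μ))) ^ 2 ∂P) c₀ := by
      apply continuousAt_of_dominated (bound := fun _ => (1 / (min c₀ (1 - c₀) / 2)) ^ 2)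
        (.of_forall fun c => hF''m c) ?_ (integrable_const _) ?_
      · filter_upwards [Metric.ball_mem_nhds c₀ hδ] with c hc
        filter_upwards [hY] with ω hy
        obtain ⟨h2, h3⟩ := hball c₀ hc₀ c hc
        rw [Real.norm_eq_abs, abs_neg, abs_pow]
        exact pow_le_pow_left₀ (abs_nonneg _) (my_ratio_bound2 hy hδ h2 h3) 2
      · filter_upwards [hY] with ω hy
        have hd : ((1 : ℝ) - c₀) + c₀ * (X ω / μ) ≠ 0 :=
          ne_of_gt (my_denom_pos hy hc₀.1.le hc₀.2)
        exact (((continuousAt_const.div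
          ((continuousAt_const.sub continuousAt_id).add
            (continuousAt_id.mul continuousAt_const)) hd).pow 2).neg)
    rw [hlam''f]
    exact hca.continuousWithinAt
  have A4 : ∀ c ∈ Set.Ioo (0:ℝ) 1, lam'' c ≤ 0 := by
    intro c _
    rw [hlam'' c]
    exact integral_nonpos fun ω => neg_nonpos.2 (sq_nonneg _)
  have hd2 : ∀ c ∈ Set.Ioo (0:ℝ) 1, deriv^[2] lam c = lam'' c := by
    intro c hc
    have hev : deriv lam =ᶠ[nhds c] lam' := by
      filter_upwards [isOpen_Ioo.mem_nhds hc] with y hy using (A1 y hy).deriv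
    show deriv (deriv lam) c = lam'' c
    rw [hev.deriv_eq]
    exact (A2 c hc).deriv
  have hcont : ContinuousOn lam (Set.Ioo (0:ℝ) 1) :=
    fun c hc => (A1 c hc).continuousAt.continuousWithinAt
  have A5 : ConcaveOn ℝ (Set.Ioo (0:ℝ) 1) lam := by
    apply concaveOn_of_deriv2_nonpos (convex_Ioo 0 1) hcont
    · rw [interior_Ioo]
      exact fun c hc => (A1 c hc).differentiableAt.differentiableWithinAt
    · rw [interior_Ioo]
      intro c hc
      have hev : deriv lam =ᶠ[nhds c] lam' := by
        filter_upwards [isOpen_Ioo.mem_nhds hc] with y hy using (A1 y hy).deriv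
      exact ((hev.differentiableAt_iff).2 (A2 c hc).differentiableAt).differentiableWithinAt
    · rw [interior_Ioo]
      intro c hc
      rw [hd2 c hc]
      exact A4 c hc
  have A6 : lam 0 = 0 := by rw [hlam 0]; simp
  have A7 : Tendsto lam' (nhdsWithin 0 (Set.Ioi 0)) (nhds ((∫ ω, X ω ∂P - μ) / μ)) := by
    have hval : (∫ ω, X ω ∂P - μ) / μ = ∫ ω, (X ω / μ - 1) ∂P := by
      rw [integral_sub hYint (integrable_const 1), integral_const]
      simp only [measure_univ, probReal_univ, ENNReal.toReal_one, one_smul]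
      rw [integral_div]
      field_simp
    rw [hlam'f, hval]
    apply tendsto_integral_filter_of_dominated_convergence (fun ω => X ω / μ + 2)
      (.of_forall fun c => hF'm c) ?_ (hYint.add (integrable_const 2)) ?_
    · filter_upwards [Ioo_mem_nhdsGT_of_mem
        (show (0:ℝ) ∈ Set.Ico (0:ℝ) (1/2) by norm_num)] with c hc
      filter_upwards [hY] with ω hy
      rw [Real.norm_eq_abs]
      exact my_ratio_bound3 hy hc.1 hc.2
    · filter_upwards [hY] with ω hy
      have hcont2 : Tendsto (fun c : ℝ => (X ω / μ - 1) / ((1 - c) + c * (X ω / μ))) (nhds 0)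
          (nhds ((X ω / μ - 1) / ((1 - (0:ℝ)) + 0 * (X ω / μ)))) := by
        apply Tendsto.div tendsto_const_nhds
        · exact ((continuous_const.sub continuous_id).add
            (continuous_id.mul continuous_const)).tendsto 0
        · norm_num
      simpa using hcont2.mono_left nhdsWithin_le_nhds
  refine ⟨A1, A2, A3, A4, A5, A6, A7, fun hP => ?_⟩
  have hneg : ∀ c ∈ Set.Ioo (0:ℝ) 1, lam'' c < 0 := by
    intro c hc
    rw [hlam'' c, integral_neg, neg_lt_zero]
    have hint2 : Integrable (fun ω => ((X ω / μ - 1) / ((1 - c) + c * (X ω / μ))) ^ 2) P := by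
      have h := ((key2 c hc).1).neg
      simp only [Pi.neg_def, neg_neg] at h
      exact h
    by_contra hle
    push_neg at hle
    have h0 : ∫ ω, ((X ω / μ - 1) / ((1 - c) + c * (X ω / μ))) ^ 2 ∂P = 0 :=
      le_antisymm hle (integral_nonneg fun ω => sq_nonneg _)
    have hz := (integral_eq_zero_iff_of_nonneg (fun ω => sq_nonneg _) hint2).1 h0
    have hXeq : ∀ᵐ ω ∂P, X ω = μ := by
      filter_upwards [hY, hz] with ω hy h2
      simp only [Pi.zero_apply] at h2
      have hd : ((1 : ℝ) - c) + c * (X ω / μ) ≠ 0 := ne_of_gt (my_denom_pos hy hc.1.le hc.2)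
      have hr : (X ω / μ - 1) / ((1 - c) + c * (X ω / μ)) = 0 :=
        pow_eq_zero_iff (two_ne_zero) |>.1 h2
      rcases div_eq_zero_iff.1 hr with h | h
      · have : X ω / μ = 1 := by linarith
        field_simp at this
        linarith
      · exact absurd h hd
    have hnull : P {ω | ¬ X ω = μ} = 0 := ae_iff.1 hXeq
    have hge : (1:ENNReal) ≤ P {ω | X ω = μ} := by
      have hsub : Set.univ ⊆ {ω | X ω = μ} ∪ {ω | ¬ X ω = μ} := by
        intro ω _
        by_cases h : X ω = μ
        · exact Or.inl h
        · exact Or.inr h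
      calc (1:ENNReal) = P Set.univ := (measure_univ).symm
        _ ≤ P ({ω | X ω = μ} ∪ {ω | ¬ X ω = μ}) := measure_mono hsub
        _ ≤ P {ω | X ω = μ} + P {ω | ¬ X ω = μ} := measure_union_le _ _
        _ = P {ω | X ω = μ} := by rw [hnull, add_zero]
    exact absurd hP (not_lt.2 hge)
  refine ⟨hneg, ?_⟩
  apply strictConcaveOn_of_deriv2_neg (convex_Ioo 0 1) hcont
  intro c hc
  rw [interior_Ioo] at hc
  rw [hd2 c hc]
  exact hneg c hc
end

section
/- Let μ > 0, let X be an integrable random variable with X ≥ 0 almost surely, E[X] ≤ μ and P(X = μ) < 1, and let 0 < c < 1. Then λ(c) = E[log((1−c) + c·X/μ)] < 0, and for any i.i.d. sample X_1, X_2, … of X the process M_n(c) = ∏_{i=1}^n ((1−c) + c·X_i/μ) converges to 0 almost surely as n → ∞. -/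
open MeasureTheory ProbabilityTheory Filter

/-- Let `μ > 0`, let `X₀` be integrable with `X₀ ≥ 0` a.s., `E[X₀] ≤ μ` and `P(X₀ = μ) < 1`,
and let `0 < c < 1`.  Then `λ(c) = E[log((1−c) + c·X₀/μ)] < 0`, and for any i.i.d. sample
`X 0, X 1, …` of `X₀` the test supermartingale
`M n = ∏_{i<n} ((1−c) + c·X i/μ)` converges to `0` almost surely. -/
theorem test_supermartingale_tendsto_zero_under_null
    {Ω : Type*} {mΩ : MeasurableSpace Ω} (P : Measure Ω) [IsProbabilityMeasure P]
    (μ : ℝ) (hμ : 0 < μ)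
    (X₀ : Ω → ℝ) (hX₀int : Integrable X₀ P) (hX₀pos : ∀ᵐ ω ∂P, 0 ≤ X₀ ω)
    (hEX₀ : ∫ ω, X₀ ω ∂P ≤ μ) (hXμ : P {ω | X₀ ω = μ} < 1)
    (c : ℝ) (hc : c ∈ Set.Ioo (0 : ℝ) 1)
    (X : ℕ → Ω → ℝ)
    (hindep : iIndepFun X P)
    (hident : ∀ i, IdentDistrib (X i) X₀ P P) :
    (∫ ω, Real.log ((1 - c) + c * X₀ ω / μ) ∂P) < 0 ∧
      ∀ᵐ ω ∂P, Tendsto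
        (fun n => ∏ i ∈ Finset.range n, ((1 - c) + c * X i ω / μ)) atTop (nhds 0) := by
  obtain ⟨hc0, hc1⟩ := hc
  have h1c : (0:ℝ) < 1 - c := by linarith
  -- the affine map and its properties
  set φ : ℝ → ℝ := fun x => (1 - c) + c * x / μ with hφdef
  have hφmeas : Measurable φ :=
    Measurable.add measurable_const ((measurable_id.const_mul c).div_const μ)
  set g : Ω → ℝ := fun ω => φ (X₀ ω) with hgdef
  have hgint : Integrable g P := by
    apply Integrable.add (integrable_const _)
    exact (hX₀int.const_mul c).div_const μ
  have hgmem : ∀ᵐ ω ∂P, g ω ∈ Set.Ici (1 - c) := by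
    filter_upwards [hX₀pos] with ω hω
    have : 0 ≤ c * X₀ ω / μ := by positivity
    simp only [Set.mem_Ici, hgdef, hφdef]; linarith
  -- integrability of log g
  have hloggint : Integrable (fun ω => Real.log (g ω)) P := by
    apply Integrable.mono' (g := fun ω => -Real.log (1 - c) + g ω)
      ((integrable_const _).add hgint)
    · exact (Real.measurable_log.comp_aemeasurable hgint.aemeasurable).aestronglyMeasurable
    · filter_upwards [hgmem] with ω hω
      have hg0 : 0 < g ω := lt_of_lt_of_le h1c hω
      rw [Real.norm_eq_abs, abs_le]
      have h2 : Real.log (1 - c) < 0 := Real.log_neg h1c (by linarith)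
      constructor
      · have h1 : Real.log (1 - c) ≤ Real.log (g ω) := Real.log_le_log h1c hω
        nlinarith
      · have := Real.log_le_sub_one_of_pos hg0
        nlinarith
  -- the mean of g
  have hgmean : ∫ ω, g ω ∂P = (1 - c) + c * (∫ ω, X₀ ω ∂P) / μ := by
    rw [integral_add (integrable_const _) ((hX₀int.const_mul c).div_const μ)]
    simp [integral_div, integral_const_mul]
  have hmle : ∫ ω, g ω ∂P ≤ 1 := by
    rw [hgmean]
    have : c * (∫ ω, X₀ ω ∂P) / μ ≤ c := by
      rw [div_le_iff₀ hμ]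
      exact mul_le_mul_of_nonneg_left hEX₀ hc0.le
    linarith
  have hmpos : 0 < ∫ ω, g ω ∂P := by
    have : 1 - c ≤ ∫ ω, g ω ∂P := by
      have := integral_mono_ae (integrable_const (1 - c)) hgint hgmem
      simpa using this
    linarith
  -- Jensen (strict)
  have hjensen := StrictConcaveOn.ae_eq_const_or_lt_map_average
    (μ := P) (strictConcaveOn_log_Ioi.subset (fun x hx => lt_of_lt_of_le h1c hx)
      (convex_Ici _))
    (Real.continuousOn_log.mono (fun x hx => ne_of_gt (lt_of_lt_of_le h1c hx)))
    isClosed_Ici hgmem hgint hloggint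
  have hlam : (∫ ω, Real.log (g ω) ∂P) < 0 := by
    rcases hjensen with h | h
    · rw [average_eq_integral] at h
      set m := ∫ ω, g ω ∂P with hm
      have hlogeq : ∫ ω, Real.log (g ω) ∂P = Real.log m := by
        rw [integral_congr_ae (g := fun _ => Real.log m)
          (h.mono fun ω hω => by rw [hω]; rfl)]
        simp
      have hmne : m ≠ 1 := by
        intro hm1
        have hae : ∀ᵐ ω ∂P, X₀ ω = μ := by
          filter_upwards [h] with ω hω
          simp only [Function.const_apply] at hω
          have h3 : (1 - c) + c * X₀ ω / μ = 1 := hω.trans hm1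
          have h2 : c * X₀ ω / μ = c := by linarith
          have h4 : X₀ ω / μ = 1 :=
            mul_left_cancel₀ (ne_of_gt hc0) (by rw [← mul_div_assoc, h2, mul_one])
          exact (div_eq_one_iff_eq hμ.ne').mp h4
        have hone : P {ω | X₀ ω = μ} = 1 := by
          rw [← measure_univ (μ := P)]
          apply measure_congr
          filter_upwards [hae] with ω hω
          exact propext (iff_of_true hω trivial)
        exact absurd hone (ne_of_lt hXμ)
      rw [hlogeq]
      exact Real.log_neg hmpos (lt_of_le_of_ne hmle hmne)
    · simp only [average_eq_integral] at h
      calc (∫ ω, Real.log (g ω) ∂P) < Real.log (∫ ω, g ω ∂P) := h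
        _ ≤ 0 := Real.log_nonpos hmpos.le hmle
  refine ⟨hlam, ?_⟩
  -- Part 2: SLLN for Y i := log ∘ φ ∘ X i
  set ψ : ℝ → ℝ := fun x => Real.log (φ x) with hψdef
  have hψmeas : Measurable ψ := Real.measurable_log.comp hφmeas
  set Y : ℕ → Ω → ℝ := fun i ω => ψ (X i ω) with hYdef
  have hYident : ∀ i, IdentDistrib (Y i) (Y 0) P P := fun i =>
    (((hident i).trans (hident 0).symm).comp hψmeas)
  have hY0ident : IdentDistrib (Y 0) (fun ω => Real.log (g ω)) P P :=
    (hident 0).comp hψmeas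
  have hYint : Integrable (Y 0) P := hY0ident.integrable_iff.mpr hloggint
  have hYindep : Pairwise (Function.onFun (IndepFun · · P) Y) := by
    intro i j hij
    exact (hindep.indepFun hij).comp hψmeas hψmeas
  have hslln := ProbabilityTheory.strong_law_ae_real Y hYint hYindep hYident
  have hmean : ∫ ω, Y 0 ω ∂P = ∫ ω, Real.log (g ω) ∂P := hY0ident.integral_eq
  -- a.e. nonnegativity of all X i
  have hXpos : ∀ᵐ ω ∂P, ∀ i, 0 ≤ X i ω := by
    rw [ae_all_iff]
    intro i
    exact (hident i).symm.ae_snd (p := fun x => 0 ≤ x) measurableSet_Ici hX₀pos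
  filter_upwards [hslln, hXpos] with ω hω hpos
  -- partial sums tend to -∞
  have hL : ∫ ω, Y 0 ω ∂P < 0 := by rw [hmean]; exact hlam
  have hSdiv : Tendsto (fun n : ℕ => (∑ i ∈ Finset.range n, Y i ω) / n) atTop
      (nhds (∫ ω, Y 0 ω ∂P)) := hω
  have hS : Tendsto (fun n : ℕ => ∑ i ∈ Finset.range n, Y i ω) atTop atBot := by
    have h1 : Tendsto (fun n : ℕ => (n : ℝ) *
        ((∑ i ∈ Finset.range n, Y i ω) / n)) atTop atBot := by
      exact Filter.Tendsto.atTop_mul_neg hL tendsto_natCast_atTop_atTop hSdiv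
    apply h1.congr'
    filter_upwards [eventually_ge_atTop 1] with n hn
    have hn' : (n : ℝ) ≠ 0 := Nat.cast_ne_zero.mpr (by omega)
    field_simp
  -- factors are positive and the product is exp of the log-sum
  have hfac : ∀ i, 0 < (1 - c) + c * X i ω / μ := fun i => by
    have : 0 ≤ c * X i ω / μ := div_nonneg (mul_nonneg hc0.le (hpos i)) hμ.le
    linarith
  have hprod : ∀ n, (∏ i ∈ Finset.range n, ((1 - c) + c * X i ω / μ)) =
      Real.exp (∑ i ∈ Finset.range n, Y i ω) := by
    intro n
    rw [Real.exp_sum]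
    apply Finset.prod_congr rfl
    intro i _
    rw [hYdef]
    simp only [hψdef, hφdef]
    rw [Real.exp_log (hfac i)]
  simp only [hprod]
  exact Real.tendsto_exp_atBot.comp hS
end

section
/- Let μ > 0 and let X be an integrable random variable with X ≥ 0 almost surely and E[X] > μ. Then there exists c_max > 0 such that λ(c) = E[log((1−c) + c·X/μ)] > 0 for all 0 < c < c_max. For any 0 < c < 1 with λ(c) > 0 and any i.i.d. sample X_1, X_2, … of X, the process M_n(c) = ∏_{i=1}^n ((1−c) + c·X_i/μ) converges to +∞ almost surely as n → ∞. If moreover P(X = 0) > 0, then lim_{c↑1} λ(c) = −∞, so that the supremum c_max of the set where λ > 0 satisfies c_max < 1. -/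
open MeasureTheory ProbabilityTheory Filter Topology

lemma aux_log_lb {t : ℝ} (ht : -(1/2) ≤ t) : t - 2*t^2 ≤ Real.log (1+t) := by
  have h1 : (0:ℝ) < 1 + t := by linarith
  have h2 : 0 < (1+t)⁻¹ := inv_pos.mpr h1
  have h3 := Real.log_le_sub_one_of_pos h2
  rw [Real.log_inv] at h3
  have h4 : 1 - (1+t)⁻¹ ≤ Real.log (1+t) := by linarith
  have h5 : t - 2*t^2 ≤ 1 - (1+t)⁻¹ := by
    have h6 : (1+t) * (1+t)⁻¹ = 1 := mul_inv_cancel₀ (ne_of_gt h1)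
    nlinarith [sq_nonneg t, sq_nonneg (t*(1+t)⁻¹)]
  linarith

lemma aux_integrable {Ω : Type*} {mΩ : MeasurableSpace Ω} (P : Measure Ω) [IsProbabilityMeasure P]
    (μ : ℝ) (hμ : 0 < μ) (X₀ : Ω → ℝ) (hX₀int : Integrable X₀ P) (hX₀pos : ∀ᵐ ω ∂P, 0 ≤ X₀ ω)
    {c : ℝ} (hc0 : 0 < c) (hc1 : c < 1) :
    Integrable (fun ω => Real.log ((1 - c) + c * X₀ ω / μ)) P := by
  have hg : Measurable (fun x : ℝ => Real.log ((1 - c) + c * x / μ)) := by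
    apply Real.measurable_log.comp
    exact measurable_const.add ((measurable_id.const_mul c).div_const μ)
  have hmeas : AEStronglyMeasurable (fun ω => Real.log ((1 - c) + c * X₀ ω / μ)) P :=
    (hg.comp_aemeasurable hX₀int.aemeasurable).aestronglyMeasurable
  apply Integrable.mono' ((integrable_const |Real.log (1-c)|).add
    (hX₀int.div_const μ |>.abs)) hmeas
  filter_upwards [hX₀pos] with ω hω
  have h1c : (0:ℝ) < 1 - c := by linarith
  have hd : (0:ℝ) ≤ c * X₀ ω / μ := by positivity
  have harg : (0:ℝ) < (1 - c) + c * X₀ ω / μ := by linarith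
  have hge : (1:ℝ) - c ≤ (1 - c) + c * X₀ ω / μ := by linarith
  simp only [Pi.add_apply, Pi.abs_apply, Real.norm_eq_abs]
  rw [abs_le]
  have hlog1 := Real.log_le_log h1c hge
  have habs : -|Real.log (1-c)| ≤ Real.log (1-c) := neg_abs_le _
  have h4 : X₀ ω / μ ≤ |X₀ ω / μ| := le_abs_self _
  have h3 : c * X₀ ω / μ ≤ X₀ ω / μ := by
    have h3' : c * X₀ ω ≤ X₀ ω := by nlinarith
    exact div_le_div_of_nonneg_right h3' hμ.le
  constructor
  · have h0 : 0 ≤ |X₀ ω / μ| := abs_nonneg _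
    linarith
  · have h2 := Real.log_le_sub_one_of_pos harg
    have h5 : 0 ≤ |Real.log (1-c)| := abs_nonneg _
    linarith

set_option maxHeartbeats 1000000 in
lemma part1 {Ω : Type*} {mΩ : MeasurableSpace Ω} (P : Measure Ω) [IsProbabilityMeasure P]
    (μ : ℝ) (hμ : 0 < μ) (X₀ : Ω → ℝ) (hX₀int : Integrable X₀ P) (hX₀pos : ∀ᵐ ω ∂P, 0 ≤ X₀ ω)
    (hEX₀ : μ < ∫ ω, X₀ ω ∂P)
    (lam : ℝ → ℝ)
    (hlam : ∀ c, lam c = ∫ ω, Real.log ((1 - c) + c * X₀ ω / μ) ∂P) :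
    ∃ cmax > (0 : ℝ), ∀ c, 0 < c → c < cmax → 0 < lam c := by
  set Y : Ω → ℝ := fun ω => X₀ ω / μ - 1 with hY
  clear_value Y
  have hYint : Integrable Y P := by
    rw [hY]; simpa [Pi.sub_def] using (hX₀int.div_const μ).sub (integrable_const (1:ℝ))
  have hYpos : ∀ᵐ ω ∂P, -1 ≤ Y ω := by
    filter_upwards [hX₀pos] with ω hω
    have : 0 ≤ X₀ ω / μ := div_nonneg hω hμ.le
    rw [hY]
    have : 0 ≤ X₀ ω / μ := div_nonneg hω hμ.le
    linarith
  have hm0 : 0 < ∫ ω, Y ω ∂P := by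
    simp only [hY]
    rw [integral_sub (hX₀int.div_const μ) (integrable_const 1), integral_div, integral_const]
    simp only [probReal_univ, one_smul]
    have : 1 < (∫ ω, X₀ ω ∂P) / μ := (one_lt_div hμ).mpr hEX₀
    linarith
  set m0 := ∫ ω, Y ω ∂P with hm0def
  -- integrability of truncations
  have hmin_int : ∀ a : ℝ, Integrable (fun ω => min (Y ω) a) P := by
    intro a
    apply Integrable.mono' (hYint.abs.add (integrable_const |a|))
      ((hYint.aemeasurable.min aemeasurable_const).aestronglyMeasurable)
    filter_upwards with ω
    simp only [Pi.add_apply, Pi.abs_apply, Real.norm_eq_abs]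
    rcases le_total (Y ω) a with h | h
    · rw [min_eq_left h]
      have := abs_nonneg a; linarith [le_refl |Y ω|]
    · rw [min_eq_right h]
      have := abs_nonneg (Y ω); linarith [le_abs_self a, neg_abs_le a, le_abs_self (Y ω), neg_abs_le (Y ω)]
  -- dominated convergence for truncations
  have hDCT : Tendsto (fun n : ℕ => ∫ ω, min (Y ω) n ∂P) atTop (𝓝 m0) := by
    apply tendsto_integral_of_dominated_convergence (fun ω => |Y ω|)
      (fun n => (hmin_int n).aestronglyMeasurable) hYint.abs
    · intro n
      filter_upwards with ω
      rw [Real.norm_eq_abs, abs_le]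
      constructor
      · rcases le_total (Y ω) n with h | h
        · rw [min_eq_left h]; exact neg_abs_le _
        · rw [min_eq_right h]
          have : (0:ℝ) ≤ n := Nat.cast_nonneg n
          linarith [neg_abs_le (Y ω), abs_nonneg (Y ω)]
      · exact le_trans (min_le_left _ _) (le_abs_self _)
    · filter_upwards with ω
      apply tendsto_nhds_of_eventually_eq
      obtain ⟨N, hN⟩ := exists_nat_ge (Y ω)
      filter_upwards [eventually_ge_atTop N] with n hn
      exact min_eq_left (hN.trans (Nat.cast_le.mpr hn))
  have hev : ∀ᶠ n : ℕ in atTop, m0 / 2 < ∫ ω, min (Y ω) n ∂P :=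
    hDCT.eventually (eventually_gt_nhds (by linarith))
  obtain ⟨K, hK⟩ := hev.exists
  set Kr : ℝ := max (K : ℝ) 1 with hKr
  clear_value Kr
  have hK1 : (1:ℝ) ≤ Kr := by rw [hKr]; exact le_max_right _ _
  have hKK : (K:ℝ) ≤ Kr := by rw [hKr]; exact le_max_left _ _
  have hKrpos : (0:ℝ) < Kr := lt_of_lt_of_le one_pos hK1
  have hKmono : ∫ ω, min (Y ω) K ∂P ≤ ∫ ω, min (Y ω) Kr ∂P := by
    apply integral_mono (hmin_int _) (hmin_int _)
    intro ω
    exact min_le_min le_rfl hKK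
  have hintKr : m0 / 2 < ∫ ω, min (Y ω) Kr ∂P := lt_of_lt_of_le hK hKmono
  -- integrability of min squared
  have hsq_int : Integrable (fun ω => (min (Y ω) Kr)^2) P := by
    apply Integrable.mono' (integrable_const (Kr^2))
      ((((hYint.aemeasurable.min aemeasurable_const).aestronglyMeasurable)).pow 2) -- may not exist
    filter_upwards [hYpos] with ω hω
    simp only [Pi.pow_apply, Real.norm_eq_abs]
    rw [abs_le]
    have h1 : -1 ≤ min (Y ω) Kr := le_min hω (by linarith)
    have h2 : min (Y ω) Kr ≤ Kr := min_le_right _ _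
    constructor
    · nlinarith [sq_nonneg (min (Y ω) Kr)]
    · nlinarith
  have hsq_bound : ∫ ω, (min (Y ω) Kr)^2 ∂P ≤ Kr^2 := by
    have := integral_mono_ae hsq_int (integrable_const (Kr^2)) ?_
    · rwa [integral_const, probReal_univ, one_smul] at this
    · filter_upwards [hYpos] with ω hω
      have h1 : -1 ≤ min (Y ω) Kr := le_min hω (by linarith)
      have h2 : min (Y ω) Kr ≤ Kr := min_le_right _ _
      nlinarith
  refine ⟨min (1/2) (m0 / (4 * Kr^2)), lt_min (by norm_num) (by positivity), ?_⟩
  intro c hc0 hcmax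
  have hc2 : c ≤ 1/2 := le_of_lt (lt_of_lt_of_le hcmax (min_le_left _ _))
  have hc1 : c < 1 := by linarith
  have hcm : c < m0 / (4 * Kr^2) := lt_of_lt_of_le hcmax (min_le_right _ _)
  -- pointwise bound
  have hkey : ∀ᵐ ω ∂P, c * min (Y ω) Kr - 2*c^2*(min (Y ω) Kr)^2
      ≤ Real.log ((1 - c) + c * X₀ ω / μ) := by
    filter_upwards [hYpos] with ω hω
    have harg : (1 - c) + c * X₀ ω / μ = 1 + c * Y ω := by
      rw [hY]; ring
    rw [harg]
    rcases le_total (Y ω) Kr with h | h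
    · rw [min_eq_left h]
      have ht : -(1/2) ≤ c * Y ω := by
        have h7 : 0 ≤ c * (1 + Y ω) := mul_nonneg hc0.le (by linarith)
        nlinarith
      have := aux_log_lb ht
      nlinarith
    · rw [min_eq_right h]
      have ht : -(1/2) ≤ c * Kr := by
        have : 0 ≤ c * Kr := by positivity
        linarith
      have h1 := aux_log_lb ht
      have h2 : Real.log (1 + c * Kr) ≤ Real.log (1 + c * Y ω) := by
        apply Real.log_le_log (by positivity)
        nlinarith
      nlinarith
  -- conclude
  have hintlog := aux_integrable P μ hμ X₀ hX₀int hX₀pos hc0 hc1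
  have hlhs_int : Integrable (fun ω => c * min (Y ω) Kr - 2*c^2*(min (Y ω) Kr)^2) P :=
    ((hmin_int Kr).const_mul c).sub (hsq_int.const_mul (2*c^2))
  have hint_le := integral_mono_ae hlhs_int hintlog hkey
  rw [hlam c]
  have heq : ∫ ω, (c * min (Y ω) Kr - 2*c^2*(min (Y ω) Kr)^2) ∂P
      = c * (∫ ω, min (Y ω) Kr ∂P) - 2*c^2 * (∫ ω, (min (Y ω) Kr)^2 ∂P) := by
    rw [integral_sub ((hmin_int Kr).const_mul c) (hsq_int.const_mul (2*c^2)),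
      integral_const_mul, integral_const_mul]
  rw [heq] at hint_le
  have hKr2 : 0 < Kr^2 := by positivity
  have h1 : c * (m0/2) ≤ c * (∫ ω, min (Y ω) Kr ∂P) :=
    mul_le_mul_of_nonneg_left hintKr.le hc0.le
  have h2 : 2*c^2 * (∫ ω, (min (Y ω) Kr)^2 ∂P) ≤ 2*c^2 * Kr^2 :=
    mul_le_mul_of_nonneg_left hsq_bound (by positivity)
  have h3 : c * (4 * Kr^2) < m0 := by
    rw [lt_div_iff₀ (by positivity)] at hcm
    linarith
  nlinarith

lemma part2 {Ω : Type*} {mΩ : MeasurableSpace Ω} (P : Measure Ω) [IsProbabilityMeasure P]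
    (μ : ℝ) (hμ : 0 < μ) (X₀ : Ω → ℝ) (hX₀int : Integrable X₀ P) (hX₀pos : ∀ᵐ ω ∂P, 0 ≤ X₀ ω)
    (lam : ℝ → ℝ)
    (hlam : ∀ c, lam c = ∫ ω, Real.log ((1 - c) + c * X₀ ω / μ) ∂P) :
    ∀ c ∈ Set.Ioo (0 : ℝ) 1, 0 < lam c →
      ∀ X : ℕ → Ω → ℝ, iIndepFun X P →
        (∀ i, IdentDistrib (X i) X₀ P P) →
        ∀ᵐ ω ∂P, Tendsto
          (fun n => ∏ i ∈ Finset.range n, ((1 - c) + c * X i ω / μ)) atTop atTop := by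
  rintro c ⟨hc0, hc1⟩ hlamc X hindep hident
  have hg : Measurable (fun x : ℝ => Real.log ((1 - c) + c * x / μ)) :=
    Real.measurable_log.comp (measurable_const.add ((measurable_id.const_mul c).div_const μ))
  set g : ℝ → ℝ := fun x => Real.log ((1 - c) + c * x / μ) with hgdef
  -- the log sequence
  set Z : ℕ → Ω → ℝ := fun i ω => g (X i ω) with hZ
  have hident' : ∀ i, IdentDistrib (Z i) (fun ω => g (X₀ ω)) P P := fun i =>
    (hident i).comp hg
  have hZident : ∀ i, IdentDistrib (Z i) (Z 0) P P := fun i =>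
    (hident' i).trans (hident' 0).symm
  have hgint : Integrable (fun ω => g (X₀ ω)) P :=
    aux_integrable P μ hμ X₀ hX₀int hX₀pos hc0 hc1
  have hZ0int : Integrable (Z 0) P := by
    exact (hident' 0).symm.integrable_iff.mp hgint |>.congr (by rfl)
  have hZindep : Pairwise (Function.onFun (IndepFun · · P) Z) := by
    intro i j hij
    exact (hindep.indepFun hij).comp hg hg
  have hSLLN := strong_law_ae_real Z hZ0int hZindep hZident
  have hmean : P[Z 0] = lam c := by
    rw [hlam c]
    exact (hident' 0).integral_eq
  -- a.s. nonnegativity of each X i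
  have hXpos : ∀ᵐ ω ∂P, ∀ i, 0 ≤ X i ω := by
    rw [ae_all_iff]
    intro i
    exact (hident i).symm.ae_snd (p := fun x => 0 ≤ x) (measurableSet_le measurable_const measurable_id) hX₀pos
  filter_upwards [hSLLN, hXpos] with ω hω hpos
  rw [hmean] at hω
  -- the partial sums tend to atTop
  have hsum : Tendsto (fun n : ℕ => ∑ i ∈ Finset.range n, Z i ω) atTop atTop := by
    have h1 : Tendsto (fun n : ℕ => (n : ℝ) * ((∑ i ∈ Finset.range n, Z i ω) / n))
        atTop atTop :=
      Tendsto.atTop_mul_pos hlamc tendsto_natCast_atTop_atTop hω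
    apply h1.congr'
    filter_upwards [eventually_ge_atTop 1] with n hn
    have hn0 : (n:ℝ) ≠ 0 := by positivity
    field_simp
  -- each factor is positive, so product = exp of sum
  have hfac : ∀ i, 0 < (1 - c) + c * X i ω / μ := by
    intro i
    have : 0 ≤ c * X i ω / μ := div_nonneg (mul_nonneg hc0.le (hpos i)) hμ.le
    linarith
  have hprod : ∀ n, ∏ i ∈ Finset.range n, ((1 - c) + c * X i ω / μ)
      = Real.exp (∑ i ∈ Finset.range n, Z i ω) := by
    intro n
    rw [Real.exp_sum]
    apply Finset.prod_congr rfl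
    intro i _
    rw [hZ]
    exact (Real.exp_log (hfac i)).symm
  have := (Real.tendsto_exp_atTop.comp hsum)
  apply this.congr
  intro n
  simp only [Function.comp_apply]
  exact (hprod n).symm

lemma part3 {Ω : Type*} {mΩ : MeasurableSpace Ω} (P : Measure Ω) [IsProbabilityMeasure P]
    (μ : ℝ) (hμ : 0 < μ) (X₀ : Ω → ℝ) (hX₀int : Integrable X₀ P) (hX₀pos : ∀ᵐ ω ∂P, 0 ≤ X₀ ω)
    (lam : ℝ → ℝ)
    (hlam : ∀ c, lam c = ∫ ω, Real.log ((1 - c) + c * X₀ ω / μ) ∂P)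
    (hp : 0 < P {ω | X₀ ω = 0}) :
    Tendsto lam (nhdsWithin 1 (Set.Iio 1)) atBot ∧
      sSup {c : ℝ | c ∈ Set.Ioo (0 : ℝ) 1 ∧ 0 < lam c} < 1 := by
  -- a measurable version of {X₀ = 0}
  set X' : Ω → ℝ := hX₀int.aestronglyMeasurable.mk X₀ with hX'def
  have hX'meas : StronglyMeasurable X' := hX₀int.aestronglyMeasurable.stronglyMeasurable_mk
  have hX'ae : X₀ =ᵐ[P] X' := hX₀int.aestronglyMeasurable.ae_eq_mk
  set A : Set Ω := X' ⁻¹' {0} with hA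
  have hAmeas : MeasurableSet A := hX'meas.measurable (measurableSet_singleton 0)
  have hPA : P A = P {ω | X₀ ω = 0} := by
    apply measure_congr
    filter_upwards [hX'ae] with ω hω
    apply eq_iff_iff.mpr
    show X' ω = 0 ↔ X₀ ω = 0
    rw [hω]
  have hPApos : 0 < (P A).toReal := by
    rw [hPA]
    exact ENNReal.toReal_pos (ne_of_gt hp) (measure_ne_top P _)
  set p := (P A).toReal with hpdef
  set m := (∫ ω, X₀ ω ∂P) / μ with hm
  -- the upper bound
  have hbound : ∀ c ∈ Set.Ioo (0:ℝ) 1, lam c ≤ Real.log (1 - c) * p + m := by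
    rintro c ⟨hc0, hc1⟩
    rw [hlam c]
    have hint1 : Integrable (fun ω => A.indicator (fun _ => Real.log (1 - c)) ω + X₀ ω / μ) P :=
      ((integrable_const (Real.log (1-c))).indicator hAmeas).add (hX₀int.div_const μ)
    have hptw : ∀ᵐ ω ∂P, Real.log ((1 - c) + c * X₀ ω / μ)
        ≤ A.indicator (fun _ => Real.log (1 - c)) ω + X₀ ω / μ := by
      filter_upwards [hX₀pos, hX'ae] with ω hω hωeq
      by_cases hmem : ω ∈ A
      · have hz : X₀ ω = 0 := by
          rw [hωeq]; exact hmem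
        rw [Set.indicator_of_mem hmem, hz]
        simp
      · rw [Set.indicator_of_notMem hmem]
        have harg : 0 < (1 - c) + c * X₀ ω / μ := by
          have : 0 ≤ c * X₀ ω / μ := div_nonneg (mul_nonneg hc0.le hω) hμ.le
          linarith
        have h1 : (1 - c) + c * X₀ ω / μ ≤ 1 + X₀ ω / μ := by
          have h2 : c * X₀ ω / μ ≤ X₀ ω / μ :=
            div_le_div_of_nonneg_right (by nlinarith) hμ.le
          linarith
        calc Real.log ((1 - c) + c * X₀ ω / μ) ≤ Real.log (1 + X₀ ω / μ) :=
              Real.log_le_log harg h1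
          _ ≤ (1 + X₀ ω / μ) - 1 := Real.log_le_sub_one_of_pos (by
              have : 0 ≤ X₀ ω / μ := div_nonneg hω hμ.le
              linarith)
          _ = X₀ ω / μ := by ring
          _ ≤ 0 + X₀ ω / μ := by linarith
    have := integral_mono_ae (aux_integrable P μ hμ X₀ hX₀int hX₀pos hc0 hc1) hint1 hptw
    apply this.trans_eq
    rw [integral_add ((integrable_const (Real.log (1-c))).indicator hAmeas) (hX₀int.div_const μ),
      integral_indicator_const _ hAmeas, integral_div]
    simp only [smul_eq_mul, hpdef, hm, measureReal_def]
    ring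
  -- the comparison function tends to atBot
  have hcomp : Tendsto (fun c => Real.log (1 - c) * p + m) (𝓝[<] (1:ℝ)) atBot := by
    apply tendsto_atBot_add_const_right
    apply Tendsto.atBot_mul_const hPApos
    have h1 : Tendsto (fun c : ℝ => 1 - c) (𝓝[<] (1:ℝ)) (𝓝[>] (0:ℝ)) := by
      apply tendsto_nhdsWithin_of_tendsto_nhds_of_eventually_within
      · have : Tendsto (fun c : ℝ => 1 - c) (𝓝 (1:ℝ)) (𝓝 (1 - 1)) :=
          (continuous_const.sub continuous_id).tendsto 1
        simpa using this.mono_left nhdsWithin_le_nhds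
      · filter_upwards [self_mem_nhdsWithin] with c hc
        simp only [Set.mem_Iio] at hc
        simp only [Set.mem_Ioi]
        linarith
    exact Real.tendsto_log_nhdsGT_zero.comp h1
  have hIoo : Set.Ioo (0:ℝ) 1 ∈ 𝓝[<] (1:ℝ) := by
    apply mem_nhdsWithin.mpr
    exact ⟨Set.Ioi 0, isOpen_Ioi, by norm_num, by
      rintro x ⟨hx1, hx2⟩
      exact ⟨hx1, hx2⟩⟩
  have htendsto : Tendsto lam (𝓝[<] (1:ℝ)) atBot := by
    apply tendsto_atBot_mono' _ _ hcomp
    filter_upwards [hIoo] with c hc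
    exact hbound c hc
  refine ⟨htendsto, ?_⟩
  -- now the sSup bound
  have hev : ∀ᶠ c in 𝓝[<] (1:ℝ), lam c < 0 := htendsto.eventually (eventually_lt_atBot 0)
  obtain ⟨a, ha, hsub⟩ := (mem_nhdsLT_iff_exists_Ioo_subset).mp hev
  have ha1 : a < 1 := ha
  apply lt_of_le_of_lt (Real.sSup_le ?_ (le_max_right a 0)) ?_
  · rintro x ⟨⟨hx0, hx1⟩, hlamx⟩
    by_contra hcon
    push_neg at hcon
    have hxa : a < x := lt_of_le_of_lt (le_max_left a 0) hcon
    have : lam x < 0 := hsub ⟨hxa, hx1⟩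
    linarith
  · rcases max_cases a 0 with ⟨h, _⟩ | ⟨h, _⟩ <;> rw [h] <;> [exact ha1; norm_num]

/-- Let `μ > 0` and let `X₀` be integrable with `X₀ ≥ 0` a.s. and `E[X₀] > μ`, and write
`lam c = E[log((1−c) + c·X₀/μ)]`.  Then there is `c_max > 0` with `lam c > 0` for all
`0 < c < c_max`; for any `0 < c < 1` with `lam c > 0` and any i.i.d. sample `X 0, X 1, …`
of `X₀`, the process `M n = ∏_{i<n} ((1−c) + c·X i/μ)` tends to `+∞` almost surely; and if
moreover `P(X₀ = 0) > 0`, then `lam c → −∞` as `c ↑ 1`, so that the supremum of the set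
where `lam > 0` within `(0,1)` is `< 1`. -/
theorem test_supermartingale_tendsto_top_under_alternative
    {Ω : Type*} {mΩ : MeasurableSpace Ω} (P : Measure Ω) [IsProbabilityMeasure P]
    (μ : ℝ) (hμ : 0 < μ)
    (X₀ : Ω → ℝ) (hX₀int : Integrable X₀ P) (hX₀pos : ∀ᵐ ω ∂P, 0 ≤ X₀ ω)
    (hEX₀ : μ < ∫ ω, X₀ ω ∂P)
    (lam : ℝ → ℝ)
    (hlam : ∀ c, lam c = ∫ ω, Real.log ((1 - c) + c * X₀ ω / μ) ∂P) :
    (∃ cmax > (0 : ℝ), ∀ c, 0 < c → c < cmax → 0 < lam c) ∧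
    (∀ c ∈ Set.Ioo (0 : ℝ) 1, 0 < lam c →
      ∀ X : ℕ → Ω → ℝ, iIndepFun X P →
        (∀ i, IdentDistrib (X i) X₀ P P) →
        ∀ᵐ ω ∂P, Tendsto
          (fun n => ∏ i ∈ Finset.range n, ((1 - c) + c * X i ω / μ)) atTop atTop) ∧
    (0 < P {ω | X₀ ω = 0} →
      Tendsto lam (nhdsWithin 1 (Set.Iio 1)) atBot ∧
        sSup {c : ℝ | c ∈ Set.Ioo (0 : ℝ) 1 ∧ 0 < lam c} < 1) := by
  exact ⟨part1 P μ hμ X₀ hX₀int hX₀pos hEX₀ lam hlam,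
    part2 P μ hμ X₀ hX₀int hX₀pos lam hlam,
    fun hp => part3 P μ hμ X₀ hX₀int hX₀pos lam hlam hp⟩
end

section
/- Let μ > 0, let X be an integrable random variable with X ≥ 0 almost surely and E[X] > μ, and let X_1, X_2, … be an i.i.d. sample of X. Let π be a probability density on [0,1] such that for all 0 < b < 1 there is 0 < a < b with ∫_a^b π(c) dc > 0. Define the integrated test supermartingale M_n(π) = ∫_0^1 M_n(c) π(c) dc, where M_n(c) = ∏_{i=1}^n ((1−c) + c·X_i/μ). Then M_n(π) → +∞ almost surely as n → ∞. -/
open MeasureTheory ProbabilityTheory Filter Topology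

lemma abs_log_one_add_le {t : ℝ} (ht : -(1/2 : ℝ) ≤ t) : |Real.log (1 + t)| ≤ 2 * |t| := by
  have h1 : (0:ℝ) < 1 + t := by linarith
  rw [abs_le]
  constructor
  · have h2 := Real.one_sub_inv_le_log_of_pos h1
    rcases le_or_gt 0 t with h | h
    · have h3 : (0:ℝ) ≤ Real.log (1 + t) := Real.log_nonneg (by linarith)
      have h4 : (0:ℝ) ≤ 2 * |t| := by positivity
      linarith
    · have key : (1 + t)⁻¹ ≤ 1 - 2 * t := by
        rw [inv_le_iff_one_le_mul₀ h1]
        nlinarith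
      rw [abs_of_neg h]
      linarith
  · have h2 := Real.log_le_sub_one_of_pos h1
    have h3 := le_abs_self t
    have h4 := abs_nonneg t
    linarith

lemma concaveOn_finsetSum {ι : Type*} {s : Set ℝ} (hs : Convex ℝ s) (t : Finset ι)
    {f : ι → ℝ → ℝ} (h : ∀ i ∈ t, ConcaveOn ℝ s (f i)) :
    ConcaveOn ℝ s (fun c => ∑ i ∈ t, f i c) := by
  classical
  induction t using Finset.induction_on with
  | empty => simpa using concaveOn_const 0 hs
  | @insert j u hnot ih =>
    simp only [Finset.sum_insert hnot]
    exact (h j (Finset.mem_insert_self j u)).add (ih fun i hi => h i (Finset.mem_insert_of_mem hi))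

lemma concaveOn_log_affine {a b r : ℝ} (hpos : ∀ c ∈ Set.Icc a b, 0 < 1 + c * r) :
    ConcaveOn ℝ (Set.Icc a b) (fun c => Real.log (1 + c * r)) := by
  have h := (strictConcaveOn_log_Ioi.concaveOn).comp_affineMap (AffineMap.lineMap (1:ℝ) (1 + r))
  have heq : (Real.log ∘ ⇑(AffineMap.lineMap (1:ℝ) (1 + r))) = fun c => Real.log (1 + c * r) := by
    funext c
    simp only [Function.comp_apply, AffineMap.lineMap_apply, smul_eq_mul]
    rw [vsub_eq_sub, vadd_eq_add]
    congr 1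
    ring
  rw [heq] at h
  refine h.subset (fun c hc => ?_) (convex_Icc a b)
  simp only [Set.mem_preimage, AffineMap.lineMap_apply, smul_eq_mul, Set.mem_Ioi,
    vsub_eq_sub, vadd_eq_add]
  have := hpos c hc
  nlinarith

lemma tendsto_inv_mul_log (r : ℝ) :
    Tendsto (fun n : ℕ => ((1/2 : ℝ)^(n+1))⁻¹ * Real.log (1 + (1/2 : ℝ)^(n+1) * r))
      atTop (𝓝 r) := by
  have hd : HasDerivAt (fun c : ℝ => Real.log (1 + c * r)) r 0 := by
    have h1 : HasDerivAt (fun c : ℝ => 1 + c * r) r 0 := by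
      simpa using ((hasDerivAt_id (0:ℝ)).mul_const r).const_add 1
    have h2 := (Real.hasDerivAt_log (by norm_num : (1:ℝ) + 0 * r ≠ 0)).comp 0 h1
    simpa [Function.comp_def] using h2
  have hslope := hasDerivAt_iff_tendsto_slope.1 hd
  have hc : Tendsto (fun n : ℕ => ((1/2 : ℝ)^(n+1))) atTop (𝓝[≠] 0) := by
    apply tendsto_nhdsWithin_of_tendsto_nhds_of_eventually_within
    · have := tendsto_pow_atTop_nhds_zero_of_lt_one (by norm_num : (0:ℝ) ≤ 1/2) (by norm_num)
      exact this.comp (tendsto_add_atTop_nat 1)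
    · filter_upwards with n
      simp only [Set.mem_compl_iff, Set.mem_singleton_iff]
      positivity
  have := hslope.comp hc
  refine this.congr fun n => ?_
  simp only [Function.comp_apply, slope_def_field, div_eq_inv_mul]
  norm_num

/-- Consistency of the integrated test supermartingale.  Let `μ > 0`, let `X₀` be integrable
with `X₀ ≥ 0` a.s. and `E[X₀] > μ`, let `X 0, X 1, …` be an i.i.d. sample of `X₀`, and let
`π` be a probability density on `[0,1]` such that for all `0 < b < 1` there is `0 < a < b`
with `∫_a^b π > 0`.  Then the integrated test supermartingale
`M n (π) = ∫_0^1 (∏_{i<n} ((1−c) + c·X i/μ)) π(c) dc` tends to `+∞` almost surely. -/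
theorem integrated_test_supermartingale_tendsto_top
    {Ω : Type*} {mΩ : MeasurableSpace Ω} (P : Measure Ω) [IsProbabilityMeasure P]
    (μ : ℝ) (hμ : 0 < μ)
    (X₀ : Ω → ℝ) (hX₀int : Integrable X₀ P) (hX₀pos : ∀ᵐ ω ∂P, 0 ≤ X₀ ω)
    (hEX₀ : μ < ∫ ω, X₀ ω ∂P)
    (X : ℕ → Ω → ℝ)
    (hindep : iIndepFun X P)
    (hident : ∀ i, IdentDistrib (X i) X₀ P P)
    (π : ℝ → ℝ) (hπmeas : Measurable π)
    (hπ0 : ∀ c ∈ Set.Icc (0 : ℝ) 1, 0 ≤ π c)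
    (hπ1 : ∫ c in (0 : ℝ)..1, π c = 1)
    (hπint : IntervalIntegrable π volume 0 1)
    (hπpos : ∀ b ∈ Set.Ioo (0 : ℝ) 1, ∃ a, 0 < a ∧ a < b ∧ 0 < ∫ c in a..b, π c) :
    ∀ᵐ ω ∂P, Tendsto
      (fun n => ∫ c in (0 : ℝ)..1,
        (∏ i ∈ Finset.range n, ((1 - c) + c * X i ω / μ)) * π c) atTop atTop := by
  -- a.e. bound on the logarithm
  have hbnd : ∀ c : ℝ, 0 ≤ c → c ≤ 1/2 → ∀ᵐ ω ∂P,
      |Real.log (1 + c * (X₀ ω / μ - 1))| ≤ 2 * (c * |X₀ ω / μ - 1|) := by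
    intro c hc0 hc2
    filter_upwards [hX₀pos] with ω hω
    have hd : 0 ≤ X₀ ω / μ := div_nonneg hω hμ.le
    have ht : -(1/2 : ℝ) ≤ c * (X₀ ω / μ - 1) := by nlinarith
    have := abs_log_one_add_le ht
    rwa [abs_mul, abs_of_nonneg hc0] at this
  have hbint : Integrable (fun ω => 2 * |X₀ ω / μ - 1|) P := by
    simpa using ((hX₀int.div_const μ).sub (integrable_const 1)).abs.const_mul 2
  -- integrability of the logarithm
  have hInt : ∀ c : ℝ, 0 ≤ c → c ≤ 1/2 →
      Integrable (fun ω => Real.log (1 + c * (X₀ ω / μ - 1))) P := by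
    intro c hc0 hc2
    have hmeas : AEStronglyMeasurable (fun ω => Real.log (1 + c * (X₀ ω / μ - 1))) P := by
      apply (Real.measurable_log.comp_aemeasurable ?_).aestronglyMeasurable
      exact ((((hX₀int.1.aemeasurable.div_const μ).sub_const 1).const_mul c).const_add 1)
    refine Integrable.mono' hbint hmeas ?_
    filter_upwards [hbnd c hc0 hc2] with ω hω
    rw [Real.norm_eq_abs]
    refine hω.trans ?_
    have := abs_nonneg (X₀ ω / μ - 1)
    nlinarith
  -- positivity of the limiting mean
  have hEpos : 0 < ∫ ω, (X₀ ω / μ - 1) ∂P := by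
    rw [integral_sub (hX₀int.div_const μ) (integrable_const 1), integral_div, integral_const]
    simp only [probReal_univ, measure_univ, ENNReal.toReal_one, one_smul, smul_eq_mul, mul_one]
    rw [sub_pos, lt_div_iff₀ hμ, one_mul]
    exact hEX₀
  -- dominated convergence to find b with positive expected log
  have hDCT : Tendsto (fun n : ℕ => ∫ ω,
      ((1/2 : ℝ)^(n+1))⁻¹ * Real.log (1 + (1/2 : ℝ)^(n+1) * (X₀ ω / μ - 1)) ∂P) atTop
      (𝓝 (∫ ω, (X₀ ω / μ - 1) ∂P)) := by
    have hcn : ∀ n : ℕ, 0 < (1/2 : ℝ)^(n+1) ∧ (1/2 : ℝ)^(n+1) ≤ 1/2 := by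
      intro n
      constructor
      · positivity
      · calc (1/2 : ℝ)^(n+1) ≤ (1/2 : ℝ)^1 :=
            pow_le_pow_of_le_one (by norm_num) (by norm_num) (by omega)
          _ = 1/2 := pow_one _
    apply tendsto_integral_of_dominated_convergence (fun ω => 2 * |X₀ ω / μ - 1|)
    · intro n
      exact ((hInt _ (hcn n).1.le (hcn n).2).const_mul _).1
    · exact hbint
    · intro n
      filter_upwards [hbnd _ (hcn n).1.le (hcn n).2] with ω hω
      rw [Real.norm_eq_abs, abs_mul, abs_of_nonneg (inv_nonneg.2 (hcn n).1.le)]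
      have h1 : ((1/2 : ℝ)^(n+1))⁻¹ * |Real.log (1 + (1/2 : ℝ)^(n+1) * (X₀ ω / μ - 1))|
          ≤ ((1/2 : ℝ)^(n+1))⁻¹ * (2 * ((1/2 : ℝ)^(n+1) * |X₀ ω / μ - 1|)) := by
        exact mul_le_mul_of_nonneg_left hω (inv_nonneg.2 (hcn n).1.le)
      refine h1.trans_eq ?_
      field_simp
    · filter_upwards with ω using tendsto_inv_mul_log _
  obtain ⟨n₀, hn₀⟩ := (hDCT.eventually (eventually_gt_nhds hEpos)).exists
  set b : ℝ := (1/2 : ℝ)^(n₀+1) with hbdef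
  have hb0 : 0 < b := by positivity
  have hb2 : b ≤ 1/2 := by
    calc (1/2 : ℝ)^(n₀+1) ≤ (1/2 : ℝ)^1 :=
        pow_le_pow_of_le_one (by norm_num) (by norm_num) (by omega)
      _ = 1/2 := pow_one _
  have hb1 : b < 1 := by linarith
  have hEb : 0 < ∫ ω, Real.log (1 + b * (X₀ ω / μ - 1)) ∂P := by
    rw [MeasureTheory.integral_const_mul] at hn₀
    have hbi : 0 < b⁻¹ := inv_pos.2 hb0
    nlinarith
  obtain ⟨a, ha0, hab, hπab⟩ := hπpos b ⟨hb0, hb1⟩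
  have ha2 : a ≤ 1/2 := by linarith
  -- positivity of expected log at a, via concavity
  have hEa : 0 < ∫ ω, Real.log (1 + a * (X₀ ω / μ - 1)) ∂P := by
    have hpt : ∀ᵐ ω ∂P, (a/b) * Real.log (1 + b * (X₀ ω / μ - 1))
        ≤ Real.log (1 + a * (X₀ ω / μ - 1)) := by
      filter_upwards [hX₀pos] with ω hω
      have hd : 0 ≤ X₀ ω / μ := div_nonneg hω hμ.le
      have hF := concaveOn_log_affine (a := 0) (b := b) (r := X₀ ω / μ - 1)
        (fun c hc => by nlinarith [hc.1, hc.2])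
      have h2 := hF.2 (Set.left_mem_Icc.2 hb0.le) (Set.right_mem_Icc.2 hb0.le)
        (show (0:ℝ) ≤ 1 - a/b by rw [sub_nonneg]; exact (div_le_one hb0).2 hab.le)
        (show (0:ℝ) ≤ a/b by positivity)
        (show (1 - a/b) + a/b = 1 by ring)
      have hb' : b ≠ 0 := hb0.ne'
      simp only [smul_eq_mul, mul_zero, zero_add, div_mul_cancel₀ a hb', zero_mul, add_zero, Real.log_one] at h2
      linarith
    have h1 : (0:ℝ) < (a/b) * ∫ ω, Real.log (1 + b * (X₀ ω / μ - 1)) ∂P := by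
      have : 0 < a / b := div_pos ha0 hb0
      nlinarith
    calc (0:ℝ) < (a/b) * ∫ ω, Real.log (1 + b * (X₀ ω / μ - 1)) ∂P := h1
      _ = ∫ ω, (a/b) * Real.log (1 + b * (X₀ ω / μ - 1)) ∂P :=
          (MeasureTheory.integral_const_mul _ _).symm
      _ ≤ ∫ ω, Real.log (1 + a * (X₀ ω / μ - 1)) ∂P :=
          integral_mono_ae ((hInt b hb0.le hb2).const_mul _) (hInt a ha0.le ha2) hpt
  -- all samples nonnegative a.e.
  have hallpos : ∀ᵐ ω ∂P, ∀ i, 0 ≤ X i ω := by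
    rw [ae_all_iff]
    intro i
    exact (hident i).symm.ae_snd (p := fun x => 0 ≤ x) measurableSet_Ici hX₀pos
  -- strong law of large numbers for the log test martingale at a fixed parameter c
  have slln : ∀ c : ℝ, 0 ≤ c → c < 1 →
      Integrable (fun ω => Real.log (1 + c * (X₀ ω / μ - 1))) P →
      (0 < ∫ ω, Real.log (1 + c * (X₀ ω / μ - 1)) ∂P) →
      ∀ᵐ ω ∂P, Tendsto (fun n => ∏ i ∈ Finset.range n, (1 + c * (X i ω / μ - 1)))
        atTop atTop := by
    intro c hc0 hc1 hgint hgpos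
    set g : ℝ → ℝ := fun x => Real.log (1 + c * (x / μ - 1)) with hgdef
    have gm : Measurable g :=
      Real.measurable_log.comp
        ((((measurable_id.div_const μ).sub_const 1).const_mul c).const_add 1)
    set Y : ℕ → Ω → ℝ := fun i => g ∘ X i with hYdef
    have hident' : ∀ i, IdentDistrib (Y i) (Y 0) P P :=
      fun i => ((hident i).comp gm).trans ((hident 0).comp gm).symm
    have hint0 : Integrable (Y 0) P := ((hident 0).comp gm).integrable_iff.2 hgint
    have hpair : Pairwise (Function.onFun (IndepFun · · P) Y) :=
      fun i j hij => (hindep.indepFun hij).comp gm gm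
    have hSL := strong_law_ae_real Y hint0 hpair hident'
    have hmean : 0 < P[Y 0] := by
      rw [((hident 0).comp gm).integral_eq]
      exact hgpos
    filter_upwards [hSL, hallpos] with ω hω hpos
    have hfac : ∀ i, 0 < 1 + c * (X i ω / μ - 1) := by
      intro i
      have hd : 0 ≤ X i ω / μ := div_nonneg (hpos i) hμ.le
      nlinarith
    have hS : Tendsto (fun n : ℕ => ∑ i ∈ Finset.range n, Y i ω) atTop atTop := by
      have h1 := Tendsto.atTop_mul_pos hmean tendsto_natCast_atTop_atTop hω
      apply h1.congr'
      filter_upwards [eventually_ge_atTop 1] with n hn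
      have hn' : (n:ℝ) ≠ 0 := Nat.cast_ne_zero.2 (by omega)
      field_simp
    have hprod : ∀ n, ∏ i ∈ Finset.range n, (1 + c * (X i ω / μ - 1))
        = Real.exp (∑ i ∈ Finset.range n, Y i ω) := by
      intro n
      rw [Real.exp_sum]
      exact Finset.prod_congr rfl fun i _ => (Real.exp_log (hfac i)).symm
    exact (Real.tendsto_exp_atTop.comp hS).congr fun n => (hprod n).symm
  have hta := slln a ha0.le (by linarith) (hInt a ha0.le ha2) hEa
  have htb := slln b hb0.le hb1 (hInt b hb0.le hb2) hEb
  -- main argument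
  filter_upwards [hta, htb, hallpos] with ω hωa hωb hpos
  set M : ℕ → ℝ → ℝ := fun n c => ∏ i ∈ Finset.range n, ((1 - c) + c * X i ω / μ) with hMdef
  have hMeq : ∀ n c, M n c = ∏ i ∈ Finset.range n, (1 + c * (X i ω / μ - 1)) := by
    intro n c
    exact Finset.prod_congr rfl fun i _ => by ring
  have hta' : Tendsto (fun n => M n a) atTop atTop := hωa.congr fun n => (hMeq n a).symm
  have htb' : Tendsto (fun n => M n b) atTop atTop := hωb.congr fun n => (hMeq n b).symm
  -- concavity: on [a,b] the product dominates the min of the endpoints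
  have hconc : ∀ n, ∀ c ∈ Set.Icc a b, min (M n a) (M n b) ≤ M n c := by
    intro n c hc
    set G : ℝ → ℝ := fun c => ∑ i ∈ Finset.range n, Real.log (1 + c * (X i ω / μ - 1))
      with hGdef
    have hfac : ∀ i, ∀ d ∈ Set.Icc a b, 0 < 1 + d * (X i ω / μ - 1) := by
      intro i d hd
      have h1 : 0 ≤ X i ω / μ := div_nonneg (hpos i) hμ.le
      have h2 := hd.1
      have h3 := hd.2
      nlinarith
    have hGconc : ConcaveOn ℝ (Set.Icc a b) G :=
      concaveOn_finsetSum (convex_Icc a b) _ fun i _ => concaveOn_log_affine (hfac i)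
    have hGc : min (G a) (G b) ≤ G c := by
      refine hGconc.ge_on_segment (Set.left_mem_Icc.2 hab.le) (Set.right_mem_Icc.2 hab.le) ?_
      rwa [segment_eq_Icc hab.le]
    have hexp : ∀ d ∈ Set.Icc a b, M n d = Real.exp (G d) := by
      intro d hd
      rw [hMeq n d, hGdef]
      rw [Real.exp_sum]
      exact Finset.prod_congr rfl fun i _ => (Real.exp_log (hfac i d hd)).symm
    calc min (M n a) (M n b) = Real.exp (min (G a) (G b)) := by
          rw [Real.exp_monotone.map_min, hexp a (Set.left_mem_Icc.2 hab.le),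
            hexp b (Set.right_mem_Icc.2 hab.le)]
      _ ≤ Real.exp (G c) := Real.exp_le_exp.2 hGc
      _ = M n c := (hexp c hc).symm
  -- nonnegativity of the product on [0,1]
  have hMnn : ∀ n, ∀ c ∈ Set.Icc (0:ℝ) 1, 0 ≤ M n c := by
    intro n c hc
    apply Finset.prod_nonneg
    intro i _
    have h1 : 0 ≤ X i ω / μ := div_nonneg (hpos i) hμ.le
    have h2 := hc.1
    have h3 := hc.2
    have h4 : 0 ≤ c * X i ω / μ := div_nonneg (mul_nonneg h2 (hpos i)) hμ.le
    linarith
  -- integrability of the integrand on subintervals of [0,1]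
  have hMcont : ∀ n, Continuous (M n) := by
    intro n
    apply continuous_finset_prod
    intro i _
    fun_prop
  have hII : ∀ n, ∀ x y : ℝ, Set.uIcc x y ⊆ Set.uIcc (0:ℝ) 1 →
      IntervalIntegrable (fun c => M n c * π c) volume x y := by
    intro n x y hxy
    exact (hπint.mono_set hxy).continuousOn_mul (hMcont n).continuousOn
  have h01 : ∀ x y : ℝ, 0 ≤ x → y ≤ 1 → x ≤ y → Set.uIcc x y ⊆ Set.uIcc (0:ℝ) 1 := by
    intro x y hx hy hxy
    rw [Set.uIcc_of_le hxy, Set.uIcc_of_le (by norm_num : (0:ℝ) ≤ 1)]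
    exact Set.Icc_subset_Icc hx hy
  -- the key lower bound
  have hkey : ∀ n, min (M n a) (M n b) * (∫ c in a..b, π c)
      ≤ ∫ c in (0:ℝ)..1, M n c * π c := by
    intro n
    have hab' : a ≤ b := hab.le
    have hb1' : b ≤ 1 := hb1.le
    have e1 := intervalIntegral.integral_add_adjacent_intervals
      (hII n 0 a (h01 0 a le_rfl (by linarith) ha0.le))
      (hII n a b (h01 a b ha0.le hb1' hab'))
    have e2 := intervalIntegral.integral_add_adjacent_intervals
      (hII n 0 b (h01 0 b le_rfl hb1' hb0.le))
      (hII n b 1 (h01 b 1 hb0.le le_rfl hb1'))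
    have hsub : ∀ x y : ℝ, 0 ≤ x → y ≤ 1 → ∀ c ∈ Set.Icc x y, c ∈ Set.Icc (0:ℝ) 1 :=
      fun x y hx hy c hc => ⟨le_trans hx hc.1, le_trans hc.2 hy⟩
    have h0a : 0 ≤ ∫ c in (0:ℝ)..a, M n c * π c := by
      apply intervalIntegral.integral_nonneg ha0.le
      intro c hc
      have hc' := hsub 0 a le_rfl (by linarith) c hc
      exact mul_nonneg (hMnn n c hc') (hπ0 c hc')
    have hb1'' : 0 ≤ ∫ c in b..(1:ℝ), M n c * π c := by
      apply intervalIntegral.integral_nonneg hb1'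
      intro c hc
      have hc' := hsub b 1 hb0.le le_rfl c hc
      exact mul_nonneg (hMnn n c hc') (hπ0 c hc')
    have hmid : min (M n a) (M n b) * (∫ c in a..b, π c) ≤ ∫ c in a..b, M n c * π c := by
      rw [← intervalIntegral.integral_const_mul]
      apply intervalIntegral.integral_mono_on hab'
        ((hπint.mono_set (h01 a b ha0.le hb1' hab')).const_mul _)
        (hII n a b (h01 a b ha0.le hb1' hab'))
      intro c hc
      have hc' := hsub a b ha0.le hb1' c hc
      exact mul_le_mul_of_nonneg_right (hconc n c hc) (hπ0 c hc')
    calc min (M n a) (M n b) * (∫ c in a..b, π c)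
        ≤ ∫ c in a..b, M n c * π c := hmid
      _ ≤ (∫ c in (0:ℝ)..a, M n c * π c) + ((∫ c in a..b, M n c * π c)
            + (∫ c in b..(1:ℝ), M n c * π c)) := by linarith
      _ = ∫ c in (0:ℝ)..1, M n c * π c := by
          rw [← add_assoc, e1, e2]
  -- conclude
  have hmin : Tendsto (fun n => min (M n a) (M n b)) atTop atTop := by
    rw [tendsto_atTop] at hta' htb' ⊢
    intro K
    filter_upwards [hta' K, htb' K] with n h1 h2
    exact le_min h1 h2
  exact tendsto_atTop_mono hkey (hmin.atTop_mul_const hπab)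
end

section
/- Let X be a random variable with values in [0,1] and E[X] = μ where 0 < μ < 1, let X_1, …, X_n be an i.i.d. sample of X, let X̄ = (X_1 + ⋯ + X_n)/n, and let θ satisfy 0 < μ < θ < 1. Then P( X̄ ≥ θ ) ≤ ( (θ/μ)^θ · ((1−θ)/(1−μ))^{1−θ} )^{−n}. -/
open MeasureTheory ProbabilityTheory

lemma iIndepFun_ae_eq_aux {Ω : Type*} {mΩ : MeasurableSpace Ω} {P : Measure Ω}
    {X Y : ℕ → Ω → ℝ} (h : iIndepFun X P)
    (hXY : ∀ i, X i =ᵐ[P] Y i) : iIndepFun Y P := by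
  rw [iIndepFun_iff_measure_inter_preimage_eq_mul] at h ⊢
  intro S sets hsets
  have h1 : ∀ i, X i ⁻¹' sets i =ᵐ[P] Y i ⁻¹' sets i := fun i => (hXY i).fun_comp (sets i)
  have h2 : (⋂ i ∈ S, X i ⁻¹' sets i) =ᵐ[P] (⋂ i ∈ S, Y i ⁻¹' sets i) := by
    rw [Filter.eventuallyEq_set]
    have : ∀ᵐ ω ∂P, ∀ i ∈ S, X i ω = Y i ω :=
      (MeasureTheory.ae_ball_iff S.countable_toSet).2 fun i _ => hXY i
    filter_upwards [this] with ω hω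
    simp only [Set.mem_iInter, Set.mem_preimage]
    exact ⟨fun h' i hi => (hω i hi) ▸ h' i hi, fun h' i hi => (hω i hi) ▸ h' i hi⟩
  rw [← measure_congr h2, h S hsets]
  exact Finset.prod_congr rfl fun i _ => measure_congr (h1 i)

/-- **Hoeffding's inequality.**  Let `X 0, …, X (n-1)` be an i.i.d. sample of a random
variable with values in `[0,1]` and mean `μ`, let `X̄ = (X 0 + ⋯ + X (n-1))/n`, and let
`0 < μ < θ < 1`.  Then `P(X̄ ≥ θ) ≤ ((θ/μ)^θ ((1−θ)/(1−μ))^(1−θ))^(−n)`. -/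
theorem hoeffding_inequality
    {Ω : Type*} {mΩ : MeasurableSpace Ω} (P : Measure Ω) [IsProbabilityMeasure P]
    (μ θ : ℝ) (hμ : 0 < μ) (hμθ : μ < θ) (hθ : θ < 1)
    (n : ℕ) (hn : 1 ≤ n)
    (X : ℕ → Ω → ℝ)
    (hindep : iIndepFun X P)
    (hident : ∀ i j, IdentDistrib (X i) (X j) P P)
    (hrange : ∀ i, ∀ᵐ ω ∂P, X i ω ∈ Set.Icc (0 : ℝ) 1)
    (hmean : ∀ i, ∫ ω, X i ω ∂P = μ) :
    (P {ω | θ ≤ (∑ i ∈ Finset.range n, X i ω) / n}).toReal ≤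
      ((θ / μ) ^ θ * ((1 - θ) / (1 - μ)) ^ (1 - θ)) ^ (-(n : ℝ)) := by
  have hθ0 : 0 < θ := hμ.trans hμθ
  have h1θ : 0 < 1 - θ := by linarith
  have h1μ : 0 < 1 - μ := by linarith
  set A : ℝ := θ * (1 - μ) / (μ * (1 - θ)) with hA_def
  have hA_pos : 0 < A := by positivity
  have hA_ge : 1 ≤ A := by
    rw [hA_def, le_div_iff₀ (by positivity)]; nlinarith
  set t : ℝ := Real.log A with ht_def
  have ht0 : 0 ≤ t := Real.log_nonneg hA_ge
  have hexp_t : Real.exp t = A := Real.exp_log hA_pos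
  -- measurable versions
  have hAE : ∀ i, AEMeasurable (X i) P := fun i => (hident i i).aemeasurable_fst
  set Y : ℕ → Ω → ℝ := fun i => (hAE i).mk (X i) with hY_def
  have hYmeas : ∀ i, Measurable (Y i) := fun i => (hAE i).measurable_mk
  have hXY : ∀ i, X i =ᵐ[P] Y i := fun i => (hAE i).ae_eq_mk
  have hYindep : iIndepFun Y P := iIndepFun_ae_eq_aux hindep hXY
  have hYrange : ∀ i, ∀ᵐ ω ∂P, Y i ω ∈ Set.Icc (0 : ℝ) 1 := by
    intro i; filter_upwards [hrange i, hXY i] with ω h1 h2; rwa [← h2]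
  have hYmean : ∀ i, ∫ ω, Y i ω ∂P = μ := by
    intro i; rw [← hmean i]; exact integral_congr_ae (hXY i).symm
  -- integrability
  have hYint : ∀ i, Integrable (Y i) P := by
    intro i
    refine (integrable_const (1 : ℝ)).mono' (hYmeas i).aestronglyMeasurable ?_
    filter_upwards [hYrange i] with ω hω
    rw [Real.norm_eq_abs, abs_of_nonneg hω.1]; exact hω.2
  have hYint_exp : ∀ i, Integrable (fun ω => Real.exp (t * Y i ω)) P := by
    intro i
    refine (integrable_const (Real.exp t)).mono'
      ((hYmeas i).const_mul t).exp.aestronglyMeasurable ?_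
    filter_upwards [hYrange i] with ω hω
    rw [Real.norm_eq_abs, abs_of_pos (Real.exp_pos _)]
    exact Real.exp_le_exp.2 (by nlinarith [hω.1, hω.2])
  -- mgf bound
  set c : ℝ := 1 - μ + μ * Real.exp t with hc_def
  have hmgf : ∀ i, mgf (Y i) P t ≤ c := by
    intro i
    have hpt : ∀ᵐ ω ∂P, Real.exp (t * Y i ω) ≤ 1 - Y i ω + Y i ω * Real.exp t := by
      filter_upwards [hYrange i] with ω hω
      have := convexOn_exp.2 (Set.mem_univ (0 : ℝ)) (Set.mem_univ t)
        (by linarith [hω.2] : (0:ℝ) ≤ 1 - Y i ω) hω.1 (by ring)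
      simpa [smul_eq_mul, Real.exp_zero, mul_comm] using this
    have hint2 : Integrable (fun ω => 1 - Y i ω + Y i ω * Real.exp t) P :=
      ((integrable_const (1:ℝ)).sub (hYint i)).add ((hYint i).mul_const _)
    calc mgf (Y i) P t = ∫ ω, Real.exp (t * Y i ω) ∂P := rfl
      _ ≤ ∫ ω, (1 - Y i ω + Y i ω * Real.exp t) ∂P :=
          integral_mono_ae (hYint_exp i) hint2 hpt
      _ = c := by
          have hfun : (fun ω => 1 - Y i ω + Y i ω * Real.exp t)
              = fun ω => 1 + Y i ω * (Real.exp t - 1) := by funext ω; ring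
          rw [hfun, integral_add (integrable_const _) ((hYint i).mul_const _),
            integral_mul_const, integral_const, hYmean i]
          simp [hc_def]; ring
  have hc_pos : 0 < c := lt_of_lt_of_le (mgf_pos (hYint_exp 0)) (hmgf 0)
  -- Chernoff bound
  have hSint : Integrable (fun ω => Real.exp (t * (∑ i ∈ Finset.range n, Y i) ω)) P :=
    hYindep.integrable_exp_mul_sum hYmeas (fun i _ => hYint_exp i)
  have key := measure_ge_le_exp_mul_mgf (X := ∑ i ∈ Finset.range n, Y i) (μ := P)
    (θ * n) ht0 hSint
  -- identify the sets
  have hset : P {ω | θ ≤ (∑ i ∈ Finset.range n, X i ω) / n}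
      = P {ω | θ * n ≤ (∑ i ∈ Finset.range n, Y i) ω} := by
    have hn' : (0:ℝ) < n := by exact_mod_cast hn
    refine measure_congr ?_
    rw [Filter.eventuallyEq_set]
    have : ∀ᵐ ω ∂P, ∀ i ∈ Finset.range n, X i ω = Y i ω :=
      (MeasureTheory.ae_ball_iff (Finset.range n).countable_toSet).2 fun i _ => hXY i
    filter_upwards [this] with ω hω
    simp only [Set.mem_setOf_eq, Finset.sum_apply]
    rw [le_div_iff₀ hn', Finset.sum_congr rfl hω]
  rw [hset]
  refine key.trans ?_
  rw [hYindep.mgf_sum hYmeas]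
  -- bound the product
  have hprod : ∏ i ∈ Finset.range n, mgf (Y i) P t ≤ c ^ n := by
    calc ∏ i ∈ Finset.range n, mgf (Y i) P t ≤ ∏ i ∈ Finset.range n, c :=
          Finset.prod_le_prod (fun i _ => mgf_nonneg) (fun i _ => hmgf i)
      _ = c ^ n := by simp
  have hbound : Real.exp (-t * (θ * n)) * ∏ i ∈ Finset.range n, mgf (Y i) P t
      ≤ (Real.exp (-(t * θ)) * c) ^ n := by
    rw [mul_pow, ← Real.exp_nat_mul]
    have : -t * (θ * n) = n * -(t * θ) := by ring
    rw [this]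
    exact mul_le_mul_of_nonneg_left hprod (Real.exp_pos _).le
  refine hbound.trans ?_
  -- final algebra
  have hc_eq : c = (1 - μ) / (1 - θ) := by
    rw [hc_def, hexp_t, hA_def]
    field_simp
    ring
  have hR_pos : 0 < (θ / μ) ^ θ * ((1 - θ) / (1 - μ)) ^ (1 - θ) := by positivity
  have e2 : A = (θ / μ) * ((1 - μ) / (1 - θ)) := by rw [hA_def]; field_simp
  have hfactor : Real.exp (-(t * θ)) * c
      = ((θ / μ) ^ θ * ((1 - θ) / (1 - μ)) ^ (1 - θ))⁻¹ := by
    set L := Real.log ((1 - θ) / (1 - μ)) with hL_def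
    have hL1 : Real.log ((1 - μ) / (1 - θ)) = -L := by rw [← Real.log_inv, inv_div]
    have ht_eq : t = Real.log (θ / μ) - L := by
      rw [ht_def, e2, Real.log_mul (ne_of_gt (by positivity : (0:ℝ) < θ / μ))
        (ne_of_gt (by positivity : (0:ℝ) < (1 - μ) / (1 - θ))), hL1]; ring
    have hce : (1 - μ) / (1 - θ) = Real.exp (-L) := by
      rw [← hL1]; exact (Real.exp_log (by positivity)).symm
    rw [hc_eq, Real.rpow_def_of_pos (by positivity : (0:ℝ) < θ / μ),
      Real.rpow_def_of_pos (by positivity : (0:ℝ) < (1 - θ) / (1 - μ)), ← Real.exp_add,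
      ← Real.exp_neg, hce, ← Real.exp_add]
    congr 1
    rw [ht_eq, ← hL_def]; ring
  rw [hfactor, Real.rpow_neg hR_pos.le, Real.rpow_natCast, ← inv_pow]
end

section
/- Let ℓ : [0,∞) → ℝ be a three times continuously differentiable function with ℓ''(x) ≤ 0 and ℓ'''(x) ≥ 0 for all x ≥ 0. Let θ > 0 and σ > 0, let X be a random variable with X ≥ 0 almost surely, E[X] = θ and Var(X) ≤ σ², and assume E[ℓ(X)] exists. Set τ = (θ² + σ²)/θ and let X_0 be the two-point random variable with P(X_0 = τ) = θ/τ and P(X_0 = 0) = 1 − θ/τ. Then E[ℓ(X)] ≥ E[ℓ(X_0)] = (1 − θ/τ)·ℓ(0) + (θ/τ)·ℓ(τ). -/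
open MeasureTheory ProbabilityTheory

open Set


/-- Key pointwise inequality: if `f'' ≤ 0` implicitly via the interpolation constant and
`f''' ≥ 0` on `[0,∞)`, the quadratic interpolating `f` at `0` and tangentially at `τ`
lies below `f` on `[0,∞)`. -/
lemma key_pointwise (f f1 f2 f3 : ℝ → ℝ)
    (hc0 : ContinuousOn f (Ici 0))
    (hc1 : ContinuousOn f1 (Ici 0))
    (hc2 : ContinuousOn f2 (Ici 0))
    (hd0 : ∀ x : ℝ, 0 < x → HasDerivAt f (f1 x) x)
    (hd1 : ∀ x : ℝ, 0 < x → HasDerivAt f1 (f2 x) x)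
    (hd2 : ∀ x : ℝ, 0 < x → HasDerivAt f2 (f3 x) x)
    (hf3 : ∀ x : ℝ, 0 ≤ x → 0 ≤ f3 x)
    (τ c : ℝ) (hτ : 0 < τ)
    (hc : f 0 = f τ - τ * f1 τ + c * τ ^ 2) :
    ∀ x : ℝ, 0 ≤ x → f τ + f1 τ * (x - τ) + c * (x - τ) ^ 2 ≤ f x := by
  set h : ℝ → ℝ := fun x => f x - (f τ + f1 τ * (x - τ) + c * (x - τ) ^ 2) with hh_def
  set h1 : ℝ → ℝ := fun x => f1 x - (f1 τ + 2 * c * (x - τ)) with hh1_def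
  set h2 : ℝ → ℝ := fun x => f2 x - 2 * c with hh2_def
  have hτ0 : (0:ℝ) ≤ τ := hτ.le
  -- derivatives
  have hDh : ∀ x : ℝ, 0 < x → HasDerivAt h (h1 x) x := by
    intro x hx
    have p2 : HasDerivAt (fun y : ℝ => (y - τ) ^ 2) (2 * (x - τ)) x := by
      simpa using ((hasDerivAt_id x).sub_const τ).fun_pow 2
    have hp : HasDerivAt (fun y : ℝ => f τ + f1 τ * (y - τ) + c * (y - τ) ^ 2)
        (f1 τ + 2 * c * (x - τ)) x := by
      have := ((((hasDerivAt_id x).sub_const τ).const_mul (f1 τ)).const_add (f τ)).add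
        (p2.const_mul c)
      exact this.congr_deriv (by ring)
    exact (hd0 x hx).sub hp
  have hDh1 : ∀ x : ℝ, 0 < x → HasDerivAt h1 (h2 x) x := by
    intro x hx
    have hp : HasDerivAt (fun y : ℝ => f1 τ + 2 * c * (y - τ)) (2 * c) x := by
      have := (((hasDerivAt_id x).sub_const τ).const_mul (2 * c)).const_add (f1 τ)
      simpa using this
    exact (hd1 x hx).sub hp
  have hDh2 : ∀ x : ℝ, 0 < x → HasDerivAt h2 (f3 x) x := fun x hx =>
    (hd2 x hx).sub_const _
  -- continuity
  have hCh : ContinuousOn h (Ici 0) := by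
    have hp : Continuous fun y : ℝ => f τ + f1 τ * (y - τ) + c * (y - τ) ^ 2 := by continuity
    exact hc0.sub hp.continuousOn
  have hCh1 : ContinuousOn h1 (Ici 0) := by
    have hp : Continuous fun y : ℝ => f1 τ + 2 * c * (y - τ) := by continuity
    exact hc1.sub hp.continuousOn
  have hCh2 : ContinuousOn h2 (Ici 0) := hc2.sub continuousOn_const
  -- base values
  have hh0 : h 0 = 0 := by simp only [hh_def]; rw [hc]; ring
  have hhτ : h τ = 0 := by simp [hh_def]
  have hh1τ : h1 τ = 0 := by simp [hh1_def]
  -- h2 is monotone on [0,∞)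
  have hmono2 : MonotoneOn h2 (Ici 0) := by
    apply monotoneOn_of_deriv_nonneg (convex_Ici 0) hCh2
    · intro x hx
      rw [interior_Ici] at hx
      exact (hDh2 x hx).differentiableAt.differentiableWithinAt
    · intro x hx
      rw [interior_Ici] at hx
      rw [(hDh2 x hx).deriv]
      exact hf3 x hx.le
  -- generic monotonicity helpers on subintervals of [0,∞)
  have mono_h1_of : ∀ a b : ℝ, 0 ≤ a → (∀ y ∈ Ioo a b, 0 ≤ h2 y) → MonotoneOn h1 (Icc a b) := by
    intro a b ha hsign
    apply monotoneOn_of_deriv_nonneg (convex_Icc a b) (hCh1.mono (Icc_subset_Ici_self.trans (Ici_subset_Ici.mpr ha)))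
    · intro x hx
      rw [interior_Icc] at hx
      exact (hDh1 x (lt_of_le_of_lt ha hx.1)).differentiableAt.differentiableWithinAt
    · intro x hx
      rw [interior_Icc] at hx
      rw [(hDh1 x (lt_of_le_of_lt ha hx.1)).deriv]
      exact hsign x hx
  have anti_h1_of : ∀ a b : ℝ, 0 ≤ a → (∀ y ∈ Ioo a b, h2 y ≤ 0) → AntitoneOn h1 (Icc a b) := by
    intro a b ha hsign
    apply antitoneOn_of_deriv_nonpos (convex_Icc a b) (hCh1.mono (Icc_subset_Ici_self.trans (Ici_subset_Ici.mpr ha)))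
    · intro x hx
      rw [interior_Icc] at hx
      exact (hDh1 x (lt_of_le_of_lt ha hx.1)).differentiableAt.differentiableWithinAt
    · intro x hx
      rw [interior_Icc] at hx
      rw [(hDh1 x (lt_of_le_of_lt ha hx.1)).deriv]
      exact hsign x hx
  have mono_h_of : ∀ a b : ℝ, 0 ≤ a → (∀ y ∈ Ioo a b, 0 ≤ h1 y) → MonotoneOn h (Icc a b) := by
    intro a b ha hsign
    apply monotoneOn_of_deriv_nonneg (convex_Icc a b) (hCh.mono (Icc_subset_Ici_self.trans (Ici_subset_Ici.mpr ha)))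
    · intro x hx
      rw [interior_Icc] at hx
      exact (hDh x (lt_of_le_of_lt ha hx.1)).differentiableAt.differentiableWithinAt
    · intro x hx
      rw [interior_Icc] at hx
      rw [(hDh x (lt_of_le_of_lt ha hx.1)).deriv]
      exact hsign x hx
  have anti_h_of : ∀ a b : ℝ, 0 ≤ a → (∀ y ∈ Ioo a b, h1 y ≤ 0) → AntitoneOn h (Icc a b) := by
    intro a b ha hsign
    apply antitoneOn_of_deriv_nonpos (convex_Icc a b) (hCh.mono (Icc_subset_Ici_self.trans (Ici_subset_Ici.mpr ha)))
    · intro x hx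
      rw [interior_Icc] at hx
      exact (hDh x (lt_of_le_of_lt ha hx.1)).differentiableAt.differentiableWithinAt
    · intro x hx
      rw [interior_Icc] at hx
      rw [(hDh x (lt_of_le_of_lt ha hx.1)).deriv]
      exact hsign x hx
  -- h2 τ ≥ 0
  have hh2τ : 0 ≤ h2 τ := by
    by_contra hneg
    push_neg at hneg
    -- h2 < 0 on [0, τ], so h1 strictly decreasing on [0,τ], so h1 > 0 on [0,τ),
    -- so h strictly increasing on [0,τ], contradicting h 0 = h τ = 0.
    have hsanti : StrictAntiOn h1 (Icc 0 τ) := by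
      apply strictAntiOn_of_deriv_neg (convex_Icc 0 τ) (hCh1.mono Icc_subset_Ici_self)
      intro x hx
      rw [interior_Icc] at hx
      rw [(hDh1 x hx.1).deriv]
      calc h2 x ≤ h2 τ := hmono2 (le_of_lt hx.1) hτ0 hx.2.le
        _ < 0 := hneg
    have hpos : ∀ y ∈ Ioo (0:ℝ) τ, 0 < h1 y := by
      intro y hy
      have := hsanti (Icc_subset_Icc_left le_rfl ⟨hy.1.le, hy.2.le⟩) (right_mem_Icc.mpr hτ0) hy.2
      rwa [hh1τ] at this
    have hsm : StrictMonoOn h (Icc 0 τ) := by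
      apply strictMonoOn_of_deriv_pos (convex_Icc 0 τ) (hCh.mono Icc_subset_Ici_self)
      intro x hx
      rw [interior_Icc] at hx
      rw [(hDh x hx.1).deriv]
      exact hpos x hx
    have := hsm (left_mem_Icc.mpr hτ0) (right_mem_Icc.mpr hτ0) hτ
    rw [hh0, hhτ] at this
    exact lt_irrefl 0 this
  -- main goal reduces to 0 ≤ h x
  intro x hx
  have key : 0 ≤ h x := by
    rcases le_or_gt x τ with hxτ | hxτ
    · -- x ∈ [0, τ]
      -- find the crossing point ξ of h2
      obtain ⟨ξ, hξ0, hξτ, hle, hge⟩ :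
          ∃ ξ, 0 ≤ ξ ∧ ξ ≤ τ ∧ (∀ y ∈ Ico (0:ℝ) ξ, h2 y ≤ 0) ∧
            (∀ y ∈ Ioo ξ τ, 0 ≤ h2 y) := by
        rcases le_or_gt 0 (h2 0) with h20 | h20
        · exact ⟨0, le_rfl, hτ0, fun y hy => absurd hy.2 (not_lt.mpr hy.1),
            fun y hy => le_trans h20 (hmono2 (le_refl (0:ℝ)) hy.1.le hy.1.le)⟩
        · set S : Set ℝ := {y | y ∈ Icc (0:ℝ) τ ∧ h2 y ≤ 0} with hS_def
          have hS0 : (0:ℝ) ∈ S := ⟨⟨le_rfl, hτ0⟩, h20.le⟩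
          have hSne : S.Nonempty := ⟨0, hS0⟩
          have hSbdd : BddAbove S := ⟨τ, fun y hy => hy.1.2⟩
          refine ⟨sSup S, le_csSup hSbdd hS0, csSup_le hSne (fun y hy => hy.1.2), ?_, ?_⟩
          · intro y hy
            obtain ⟨z, hz, hyz⟩ := exists_lt_of_lt_csSup hSne hy.2
            exact le_trans (hmono2 hy.1 hz.1.1 hyz.le) hz.2
          · intro y hy
            by_contra hcon
            push_neg at hcon
            have : y ∈ S := ⟨⟨le_trans (le_csSup hSbdd hS0) hy.1.le, hy.2.le⟩, hcon.le⟩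
            exact absurd (le_csSup hSbdd this) (not_le.mpr hy.1)
      -- on [ξ, τ]: h1 ≤ 0, h antitone, so h ≥ h τ = 0
      have hmono1R : MonotoneOn h1 (Icc ξ τ) := mono_h1_of ξ τ hξ0 hge
      have hh1neg : ∀ y ∈ Ioo ξ τ, h1 y ≤ 0 := by
        intro y hy
        have := hmono1R ⟨hy.1.le, hy.2.le⟩ (right_mem_Icc.mpr hξτ) hy.2.le
        rwa [hh1τ] at this
      have hantiR : AntitoneOn h (Icc ξ τ) := anti_h_of ξ τ hξ0 hh1neg
      have hR : ∀ y ∈ Icc ξ τ, 0 ≤ h y := by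
        intro y hy
        have := hantiR hy (right_mem_Icc.mpr hξτ) hy.2
        rwa [hhτ] at this
      rcases le_or_gt ξ x with hxξ | hxξ
      · exact hR x ⟨hxξ, hxτ⟩
      · -- x ∈ [0, ξ): h1 antitone there; chord argument
        have hξpos : 0 < ξ := lt_of_le_of_lt hx hxξ
        have hanti1L : AntitoneOn h1 (Icc 0 ξ) := by
          apply anti_h1_of 0 ξ le_rfl
          intro y hy
          exact hle y ⟨hy.1.le, hy.2⟩
        have hhξ : 0 ≤ h ξ := hR ξ (left_mem_Icc.mpr hξτ)
        by_contra hcon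
        push_neg at hcon
        have hxpos : 0 < x := by
          rcases eq_or_lt_of_le hx with h | h
          · exfalso; rw [← h, hh0] at hcon; exact lt_irrefl 0 hcon
          · exact h
        -- MVT on [0, x]
        obtain ⟨a, ha, hsa⟩ := exists_hasDerivAt_eq_slope h h1 hxpos
          (hCh.mono (Icc_subset_Ici_self))
          (fun y hy => hDh y hy.1)
        -- MVT on [x, ξ]
        obtain ⟨b, hb, hsb⟩ := exists_hasDerivAt_eq_slope h h1 hxξ
          (hCh.mono (fun y hy => le_trans hxpos.le hy.1))
          (fun y hy => hDh y (lt_trans hxpos hy.1))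
        have ha_neg : h1 a < 0 := by
          rw [hsa, hh0]
          apply div_neg_of_neg_of_pos (by linarith) (by linarith)
        have hb_pos : 0 < h1 b := by
          rw [hsb]
          apply div_pos (by linarith) (by linarith [hb.1, hb.2])
        have hab : a < b := lt_trans ha.2 hb.1
        have := hanti1L ⟨ha.1.le, le_trans ha.2.le hxξ.le⟩
          ⟨le_trans hxpos.le hb.1.le, hb.2.le⟩ hab.le
        linarith
    · -- x > τ : h2 ≥ 0 on [τ, x], h1 ≥ 0, h monotone, h x ≥ h τ = 0
      have hh2pos : ∀ y ∈ Ioo τ x, 0 ≤ h2 y :=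
        fun y hy => le_trans hh2τ (hmono2 hτ0 (le_trans hτ0 hy.1.le) hy.1.le)
      have hmono1 : MonotoneOn h1 (Icc τ x) := mono_h1_of τ x hτ0 hh2pos
      have hh1pos : ∀ y ∈ Ioo τ x, 0 ≤ h1 y := by
        intro y hy
        have := hmono1 (left_mem_Icc.mpr hxτ.le) ⟨hy.1.le, hy.2.le⟩ hy.1.le
        rwa [hh1τ] at this
      have hmonoh : MonotoneOn h (Icc τ x) := mono_h_of τ x hτ0 hh1pos
      have := hmonoh (left_mem_Icc.mpr hxτ.le) (right_mem_Icc.mpr hxτ.le) hxτ.le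
      rwa [hhτ] at this
  simp only [hh_def] at key
  linarith

/-- Let `ℓ : [0,∞) → ℝ` be three times continuously differentiable with `ℓ'' ≤ 0` and
`ℓ''' ≥ 0` on `[0,∞)`.  Let `X ≥ 0` a.s. with `E[X] = θ > 0` and `Var(X) ≤ σ²`, and assume
`E[ℓ(X)]` exists.  With `τ = (θ² + σ²)/θ`, the two-point random variable `X₀` taking the
value `τ` with probability `θ/τ` and `0` with probability `1 − θ/τ` satisfies
`E[ℓ(X)] ≥ E[ℓ(X₀)] = (1 − θ/τ)·ℓ(0) + (θ/τ)·ℓ(τ)`. -/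
theorem expectation_ge_two_point_worst_case
    {Ω : Type*} {mΩ : MeasurableSpace Ω} (P : Measure Ω) [IsProbabilityMeasure P]
    (ℓ : ℝ → ℝ)
    (hℓC3 : ContDiffOn ℝ 3 ℓ (Set.Ici (0 : ℝ)))
    (hℓ'' : ∀ x : ℝ, 0 ≤ x → iteratedDerivWithin 2 ℓ (Set.Ici (0 : ℝ)) x ≤ 0)
    (hℓ''' : ∀ x : ℝ, 0 ≤ x → 0 ≤ iteratedDerivWithin 3 ℓ (Set.Ici (0 : ℝ)) x)
    (θ σ : ℝ) (hθ : 0 < θ) (hσ : 0 < σ)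
    (X : Ω → ℝ) (hXsq : MemLp X 2 P) (hXpos : ∀ᵐ ω ∂P, 0 ≤ X ω)
    (hEX : ∫ ω, X ω ∂P = θ) (hVar : variance X P ≤ σ ^ 2)
    (hℓXint : Integrable (fun ω => ℓ (X ω)) P)
    (τ : ℝ) (hτ : τ = (θ ^ 2 + σ ^ 2) / θ) :
    (1 - θ / τ) * ℓ 0 + (θ / τ) * ℓ τ ≤ ∫ ω, ℓ (X ω) ∂P := by
  have hs : UniqueDiffOn ℝ (Set.Ici (0:ℝ)) := uniqueDiffOn_Ici 0
  set f1 : ℝ → ℝ := derivWithin ℓ (Set.Ici 0) with hf1_def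
  set f2 : ℝ → ℝ := derivWithin f1 (Set.Ici 0) with hf2_def
  set f3 : ℝ → ℝ := derivWithin f2 (Set.Ici 0) with hf3_def
  have hC1 : ContDiffOn ℝ 2 f1 (Set.Ici 0) := hℓC3.derivWithin hs (by norm_num)
  have hC2 : ContDiffOn ℝ 1 f2 (Set.Ici 0) := hC1.derivWithin hs (by norm_num)
  have hcont0 : ContinuousOn ℓ (Set.Ici 0) := hℓC3.continuousOn
  have hcont1 : ContinuousOn f1 (Set.Ici 0) := hC1.continuousOn
  have hcont2 : ContinuousOn f2 (Set.Ici 0) := hC2.continuousOn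
  have hd0 : ∀ x : ℝ, 0 < x → HasDerivAt ℓ (f1 x) x := by
    intro x hx
    have hmem : Set.Ici (0:ℝ) ∈ nhds x := Ici_mem_nhds hx
    have hdiff := (hℓC3.differentiableOn (by norm_num) x hx.le).differentiableAt hmem
    rw [show f1 x = deriv ℓ x from derivWithin_of_mem_nhds hmem]
    exact hdiff.hasDerivAt
  have hd1 : ∀ x : ℝ, 0 < x → HasDerivAt f1 (f2 x) x := by
    intro x hx
    have hmem : Set.Ici (0:ℝ) ∈ nhds x := Ici_mem_nhds hx
    have hdiff := (hC1.differentiableOn (by norm_num) x hx.le).differentiableAt hmem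
    rw [show f2 x = deriv f1 x from derivWithin_of_mem_nhds hmem]
    exact hdiff.hasDerivAt
  have hd2 : ∀ x : ℝ, 0 < x → HasDerivAt f2 (f3 x) x := by
    intro x hx
    have hmem : Set.Ici (0:ℝ) ∈ nhds x := Ici_mem_nhds hx
    have hdiff := (hC2.differentiableOn one_ne_zero x hx.le).differentiableAt hmem
    rw [show f3 x = deriv f2 x from derivWithin_of_mem_nhds hmem]
    exact hdiff.hasDerivAt
  -- identify iterated derivatives
  have e2 : ∀ x : ℝ, 0 ≤ x → iteratedDerivWithin 2 ℓ (Set.Ici 0) x = f2 x := by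
    intro x hx
    rw [show (2:ℕ) = 1 + 1 from rfl, iteratedDerivWithin_succ',
      iteratedDerivWithin_succ', iteratedDerivWithin_zero]
  have e3 : ∀ x : ℝ, 0 ≤ x → iteratedDerivWithin 3 ℓ (Set.Ici 0) x = f3 x := by
    intro x hx
    rw [show (3:ℕ) = 1 + 1 + 1 from rfl, iteratedDerivWithin_succ',
      iteratedDerivWithin_succ', iteratedDerivWithin_succ', iteratedDerivWithin_zero]
  have hf2sign : ∀ x : ℝ, 0 ≤ x → f2 x ≤ 0 := by
    intro x hx; rw [← e2 x hx]; exact hℓ'' x hx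
  have hf3sign : ∀ x : ℝ, 0 ≤ x → 0 ≤ f3 x := by
    intro x hx; rw [← e3 x hx]; exact hℓ''' x hx
  -- basic facts about τ
  have hτpos : 0 < τ := by rw [hτ]; positivity
  have hθτ : θ * τ = θ ^ 2 + σ ^ 2 := by
    rw [hτ]; field_simp
  -- the interpolation constant
  set c : ℝ := (ℓ 0 - ℓ τ + τ * f1 τ) / τ ^ 2 with hc_def
  have hc : ℓ 0 = ℓ τ - τ * f1 τ + c * τ ^ 2 := by
    rw [hc_def]; field_simp; ring
  -- c ≤ 0 : f1 is antitone (ℓ concave), so the slope over [0,τ] is at least f1 τ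
  have hanti1 : AntitoneOn f1 (Set.Ici 0) := by
    apply antitoneOn_of_deriv_nonpos (convex_Ici 0) hcont1
    · intro x hx
      rw [interior_Ici] at hx
      exact (hd1 x hx).differentiableAt.differentiableWithinAt
    · intro x hx
      rw [interior_Ici] at hx
      rw [(hd1 x hx).deriv]
      exact hf2sign x hx.le
  have hcle : c ≤ 0 := by
    obtain ⟨ξ, hξ, hslope⟩ := exists_hasDerivAt_eq_slope ℓ f1 hτpos
      (hcont0.mono (Set.Icc_subset_Ici_self)) (fun y hy => hd0 y hy.1)
    have hf1le : f1 τ ≤ f1 ξ := hanti1 hξ.1.le hτpos.le hξ.2.le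
    rw [hslope] at hf1le
    have hnum : ℓ 0 - ℓ τ + τ * f1 τ ≤ 0 := by
      rw [le_div_iff₀ (by linarith : (0:ℝ) < τ - 0)] at hf1le
      nlinarith [hf1le]
    rw [hc_def]
    exact div_nonpos_iff.mpr (Or.inr ⟨hnum, by positivity⟩)
  -- key pointwise inequality
  have key := key_pointwise ℓ f1 f2 f3 hcont0 hcont1 hcont2 hd0 hd1 hd2 hf3sign τ c hτpos hc
  -- integrability
  have hXint : Integrable X P := hXsq.integrable one_le_two
  have hX2int : Integrable (fun ω => X ω ^ 2) P := hXsq.integrable_sq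
  set a0 : ℝ := ℓ τ - f1 τ * τ + c * τ ^ 2 with ha0_def
  set a1 : ℝ := f1 τ - 2 * c * τ with ha1_def
  have hgint : Integrable (fun ω => a0 + a1 * X ω + c * X ω ^ 2) P :=
    ((integrable_const a0).add (hXint.const_mul a1)).add (hX2int.const_mul c)
  set E2 : ℝ := ∫ ω, X ω ^ 2 ∂P with hE2_def
  have hIg : ∫ ω, (a0 + a1 * X ω + c * X ω ^ 2) ∂P = a0 + a1 * θ + c * E2 := by
    have t1 : ∫ ω, ((a0 + a1 * X ω) + c * X ω ^ 2) ∂P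
        = (∫ ω, (a0 + a1 * X ω) ∂P) + ∫ ω, c * X ω ^ 2 ∂P :=
      integral_add ((integrable_const a0).add (hXint.const_mul a1)) (hX2int.const_mul c)
    have t2 : ∫ ω, (a0 + a1 * X ω) ∂P = (∫ _ω, (a0:ℝ) ∂P) + ∫ ω, a1 * X ω ∂P :=
      integral_add (integrable_const a0) (hXint.const_mul a1)
    rw [t1, t2, integral_const, integral_const_mul, integral_const_mul, hEX]
    simp [hE2_def]
  have hE2le : E2 ≤ θ * τ := by
    have hv := variance_eq_sub hXsq
    have : E2 = variance X P + θ ^ 2 := by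
      rw [hv]
      have hPX : P[X ^ 2] = E2 := by
        simp only [hE2_def]
        congr 1
      rw [hPX]
      simp only [hEX]
      ring
    rw [this, hθτ]
    linarith
  -- a.e. comparison
  have hae : ∀ᵐ ω ∂P, a0 + a1 * X ω + c * X ω ^ 2 ≤ ℓ (X ω) := by
    filter_upwards [hXpos] with ω hω
    have := key (X ω) hω
    calc a0 + a1 * X ω + c * X ω ^ 2
        = ℓ τ + f1 τ * (X ω - τ) + c * (X ω - τ) ^ 2 := by
          simp only [ha0_def, ha1_def]; ring
      _ ≤ ℓ (X ω) := this
  have hineq : ∫ ω, (a0 + a1 * X ω + c * X ω ^ 2) ∂P ≤ ∫ ω, ℓ (X ω) ∂P :=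
    integral_mono_ae hgint hℓXint hae
  rw [hIg] at hineq
  -- final algebra
  have hid : (1 - θ / τ) * ℓ 0 + (θ / τ) * ℓ τ = a0 + a1 * θ + c * (θ * τ) := by
    rw [hc]
    simp only [ha0_def, ha1_def]
    field_simp
    ring
  have hmul : c * (θ * τ) ≤ c * E2 := mul_le_mul_of_nonpos_left hE2le hcle
  calc (1 - θ / τ) * ℓ 0 + (θ / τ) * ℓ τ = a0 + a1 * θ + c * (θ * τ) := hid
    _ ≤ a0 + a1 * θ + c * E2 := by linarith
    _ ≤ ∫ ω, ℓ (X ω) ∂P := hineq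
end

section
/- Let T be a random variable with 0 ≤ T ≤ 1 almost surely, E[T] = μ with 0 < μ < 1, and P(T = μ) < 1. Let 0 < c < 1 and 0 < α < 1, let T_1, T_2, … be an i.i.d. sample of T, and let M_k = ∏_{i=1}^k ((1−c) + c·(1−T_i)/(1−μ)). Then the probability of Type I error, P( ∃ k, M_k ≥ 1/α ), is at most α and greater than α/((1−c) + c/(1−μ)); moreover α/((1−c) + c/(1−μ)) > α·(1−μ). -/
open MeasureTheory ProbabilityTheory Filter

namespace TypeOneAux

variable {Ω : Type*}

/-- running product process -/
noncomputable def pp (f : ℕ → Ω → ℝ) (k : ℕ) (ω : Ω) : ℝ := ∏ i ∈ Finset.range k, f i ω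

open Classical in
/-- the product process stopped at the first time it reaches `r` -/
noncomputable def sp (f : ℕ → Ω → ℝ) (r : ℝ) : ℕ → Ω → ℝ
  | 0 => fun _ => 1
  | k + 1 => fun ω => sp f r k ω * (if ∀ j ≤ k, pp f j ω < r then f k ω else 1)

lemma pp_zero (f : ℕ → Ω → ℝ) (ω : Ω) : pp f 0 ω = 1 := by simp [pp]

lemma pp_succ (f : ℕ → Ω → ℝ) (k : ℕ) (ω : Ω) : pp f (k + 1) ω = pp f k ω * f k ω :=
  Finset.prod_range_succ _ _

lemma sp_zero (f : ℕ → Ω → ℝ) (r : ℝ) (ω : Ω) : sp f r 0 ω = 1 := rfl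

lemma sp_eq {f : ℕ → Ω → ℝ} {r : ℝ} {ω : Ω} :
    ∀ k, (∀ j ≤ k, pp f j ω < r) → sp f r (k + 1) ω = pp f (k + 1) ω := by
  intro k
  induction k with
  | zero =>
      intro h
      simp only [sp, if_pos h, one_mul, pp_succ, pp_zero]
  | succ m ih =>
      intro h
      have h' : ∀ j ≤ m, pp f j ω < r := fun j hj => h j (hj.trans (Nat.le_succ _))
      simp only [sp]
      rw [if_pos h]
      show sp f r (m + 1) ω * f (m + 1) ω = _
      rw [ih h', ← pp_succ]

lemma sp_succ_of_hit {f : ℕ → Ω → ℝ} {r : ℝ} {ω : Ω} {k : ℕ}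
    (h : ¬ ∀ j ≤ k, pp f j ω < r) : sp f r (k + 1) ω = sp f r k ω := by
  simp only [sp, if_neg h, mul_one]

lemma sp_eq_all {f : ℕ → Ω → ℝ} {r : ℝ} {ω : Ω} (h : ∀ j, pp f j ω < r) :
    ∀ k, sp f r k ω = pp f k ω
  | 0 => by rw [sp_zero, pp_zero]
  | k + 1 => sp_eq k fun j _ => h j

lemma sp_of_min_hit {f : ℕ → Ω → ℝ} {r : ℝ} {ω : Ω} (hr : 1 < r) {n : ℕ}
    (hn : r ≤ pp f n ω) (hmin : ∀ j < n, pp f j ω < r) :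
    ∀ k, n ≤ k → sp f r k ω = pp f n ω := by
  obtain ⟨m, rfl⟩ : ∃ m, n = m + 1 := by
    cases n with
    | zero => exact absurd hn (by rw [pp_zero]; linarith)
    | succ m => exact ⟨m, rfl⟩
  have base : sp f r (m + 1) ω = pp f (m + 1) ω :=
    sp_eq m fun j hj => hmin j (Nat.lt_succ_of_le hj)
  intro k hk
  induction k, hk using Nat.le_induction with
  | base => exact base
  | succ k hk ih =>
      rw [← ih]
      exact sp_succ_of_hit fun hall => absurd hn (not_le.2 (hall (m + 1) hk))

lemma pp_nonneg {f : ℕ → Ω → ℝ} {ω : Ω} (hf : ∀ i, 0 ≤ f i ω) (k : ℕ) : 0 ≤ pp f k ω :=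
  Finset.prod_nonneg fun i _ => hf i

lemma sp_nonneg {f : ℕ → Ω → ℝ} {r : ℝ} {ω : Ω} (hf : ∀ i, 0 ≤ f i ω) :
    ∀ k, 0 ≤ sp f r k ω
  | 0 => zero_le_one
  | k + 1 => by
      refine mul_nonneg (sp_nonneg hf k) ?_
      split
      · exact hf k
      · exact zero_le_one

lemma min_hit_lt {f : ℕ → Ω → ℝ} {r B : ℝ} {ω : Ω} (hB : 0 < B)
    (hr : 1 < r) (hf : ∀ i, 0 ≤ f i ω ∧ f i ω ≤ B) {n : ℕ}
    (hn : r ≤ pp f n ω) (hmin : ∀ j < n, pp f j ω < r) : pp f n ω < B * r := by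
  obtain ⟨m, rfl⟩ : ∃ m, n = m + 1 := by
    cases n with
    | zero => exact absurd hn (by rw [pp_zero]; linarith)
    | succ m => exact ⟨m, rfl⟩
  calc pp f (m + 1) ω = pp f m ω * f m ω := pp_succ _ _ _
    _ ≤ pp f m ω * B := by
        exact mul_le_mul_of_nonneg_left (hf m).2 (pp_nonneg (fun i => (hf i).1) m)
    _ < r * B := mul_lt_mul_of_pos_right (hmin m (Nat.lt_succ_self m)) hB
    _ = B * r := mul_comm _ _

lemma sp_lt {f : ℕ → Ω → ℝ} {r B : ℝ} {ω : Ω} (hr : 1 < r) (hB1 : 1 ≤ B)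
    (hf : ∀ i, 0 ≤ f i ω ∧ f i ω ≤ B) (k : ℕ) : sp f r k ω < B * r := by
  have hB : 0 < B := lt_of_lt_of_le one_pos hB1
  by_cases hh : ∃ n, n < k ∧ r ≤ pp f n ω
  · have hex : ∃ n, r ≤ pp f n ω := ⟨hh.choose, hh.choose_spec.2⟩
    have hmin : ∀ j < Nat.find hex, pp f j ω < r := fun j hj =>
      lt_of_not_ge (Nat.find_min hex hj)
    have hn0k : Nat.find hex ≤ k :=
      (Nat.find_min' hex hh.choose_spec.2).trans hh.choose_spec.1.le
    rw [sp_of_min_hit hr (Nat.find_spec hex) hmin k hn0k]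
    exact min_hit_lt hB hr hf (Nat.find_spec hex) hmin
  · push_neg at hh
    cases k with
    | zero =>
        rw [sp_zero]
        nlinarith
    | succ m =>
        rw [sp_eq m fun j hj => hh j (Nat.lt_succ_of_le hj), pp_succ]
        calc pp f m ω * f m ω ≤ pp f m ω * B :=
              mul_le_mul_of_nonneg_left (hf m).2 (pp_nonneg (fun i => (hf i).1) m)
          _ < r * B := mul_lt_mul_of_pos_right (hh m (Nat.lt_succ_self m)) hB
          _ = B * r := mul_comm _ _

variable {mΩ : MeasurableSpace Ω}

lemma pp_measurable {f : ℕ → Ω → ℝ} (hf : ∀ i, Measurable (f i)) (k : ℕ) :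
    Measurable (pp f k) :=
  Finset.measurable_prod _ fun i _ => hf i

lemma condSet_measurable {f : ℕ → Ω → ℝ} {r : ℝ} (hf : ∀ i, Measurable (f i)) (k : ℕ) :
    MeasurableSet {ω | ∀ j ≤ k, pp f j ω < r} := by
  have : {ω | ∀ j ≤ k, pp f j ω < r} = ⋂ j ∈ Set.Iic k, {ω | pp f j ω < r} := by
    ext ω; simp [Set.mem_iInter]
  rw [this]
  exact MeasurableSet.biInter (Set.to_countable _) fun j _ =>
    measurableSet_lt (pp_measurable hf j) measurable_const

lemma sp_measurable {f : ℕ → Ω → ℝ} {r : ℝ} (hf : ∀ i, Measurable (f i)) :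
    ∀ k, Measurable (sp f r k)
  | 0 => measurable_const
  | k + 1 => by
      refine (sp_measurable hf k).mul ?_
      exact Measurable.ite (condSet_measurable hf k) (hf k) measurable_const

lemma iIndepFun_congr {ι : Type*} {β : ι → Type*} {P : Measure Ω}
    [m : ∀ i, MeasurableSpace (β i)] {f g : ∀ i, Ω → β i}
    (hf : iIndepFun f P) (hfg : ∀ i, f i =ᵐ[P] g i) : iIndepFun g P := by
  rw [iIndepFun_iff_measure_inter_preimage_eq_mul] at hf ⊢
  intro S sets hsets
  have h1 : ∀ i ∈ S, (f i ⁻¹' sets i : Set Ω) =ᵐ[P] g i ⁻¹' sets i := by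
    intro i _
    rw [Filter.eventuallyEq_set]
    filter_upwards [hfg i] with ω hω
    simp [Set.mem_preimage, hω]
  have h2 : (⋂ i ∈ S, f i ⁻¹' sets i : Set Ω) =ᵐ[P] ⋂ i ∈ S, g i ⁻¹' sets i := by
    rw [Filter.eventuallyEq_set]
    have hall : ∀ᵐ ω ∂P, ∀ i ∈ S, f i ω = g i ω :=
      (ae_ball_iff S.countable_toSet).2 fun i _ => hfg i
    filter_upwards [hall] with ω hω
    simp only [Set.mem_iInter, Set.mem_preimage]
    exact forall₂_congr fun i hi => by rw [hω i hi]
  calc P (⋂ i ∈ S, g i ⁻¹' sets i) = P (⋂ i ∈ S, f i ⁻¹' sets i) := (measure_congr h2).symm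
    _ = ∏ i ∈ S, P (f i ⁻¹' sets i) := hf S hsets
    _ = ∏ i ∈ S, P (g i ⁻¹' sets i) := Finset.prod_congr rfl fun i hi => measure_congr (h1 i hi)


noncomputable def extFun (k : ℕ) (v : {x // x ∈ Finset.range k} → ℝ) : ℕ → ℝ :=
  fun i => if h : i ∈ Finset.range k then v ⟨i, h⟩ else 0

lemma extFun_measurable (k : ℕ) : Measurable (extFun k) := by
  apply measurable_pi_lambda
  intro i
  by_cases h : i ∈ Finset.range k
  · simp only [extFun, dif_pos h]
    exact measurable_pi_apply _
  · simp only [extFun, dif_neg h]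
    exact measurable_const

open Classical in
noncomputable def gFun (φ : ℝ → ℝ) (r : ℝ) (k : ℕ) (u : ℕ → ℝ) : ℝ :=
  if ∀ j ≤ k, (∏ i ∈ Finset.range j, φ (u i)) < r then ∏ i ∈ Finset.range k, φ (u i) else 0

lemma gFun_measurable {φ : ℝ → ℝ} (hφ : Measurable φ) (r : ℝ) (k : ℕ) :
    Measurable (gFun φ r k) := by
  have hprodmeas : ∀ j : ℕ, Measurable fun u : ℕ → ℝ => ∏ i ∈ Finset.range j, φ (u i) :=
    fun j => Finset.measurable_prod _ fun i _ => hφ.comp (measurable_pi_apply i)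
  unfold gFun
  refine Measurable.ite ?_ (hprodmeas k) measurable_const
  have : {u : ℕ → ℝ | ∀ j ≤ k, (∏ i ∈ Finset.range j, φ (u i)) < r} =
      ⋂ j ∈ Set.Iic k, {u : ℕ → ℝ | (∏ i ∈ Finset.range j, φ (u i)) < r} := by
    ext u; simp [Set.mem_iInter]
  rw [this]
  exact MeasurableSet.biInter (Set.to_countable _) fun j _ =>
    measurableSet_lt (hprodmeas j) measurable_const

noncomputable def psiFun (φ : ℝ → ℝ) (k : ℕ) (v : {x // x ∈ ({k} : Finset ℕ)} → ℝ) : ℝ :=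
  φ (v ⟨k, Finset.mem_singleton_self k⟩) - 1

lemma psiFun_measurable {φ : ℝ → ℝ} (hφ : Measurable φ) (k : ℕ) :
    Measurable (psiFun φ k) :=
  (hφ.comp (measurable_pi_apply _)).sub measurable_const

end TypeOneAux

open TypeOneAux

set_option maxHeartbeats 2000000 in
/-- Bounds on the probability of Type I error.  Let `T₀` take values in `[0,1]` a.s. with
`E[T₀] = μ ∈ (0,1)` and `P(T₀ = μ) < 1`, let `0 < c < 1`, `0 < α < 1`, let `T 0, T 1, …` be
an i.i.d. sample of `T₀`, and let `M k = ∏_{i<k} ((1−c) + c·(1−T i)/(1−μ))`.  Then the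
probability of Type I error `P(∃ k, M k ≥ 1/α)` is at most `α` but greater than
`α/((1−c) + c/(1−μ))`, and `α/((1−c) + c/(1−μ)) > α·(1−μ)`. -/
theorem type_one_error_bounds
    {Ω : Type*} {mΩ : MeasurableSpace Ω} (P : Measure Ω) [IsProbabilityMeasure P]
    (μ : ℝ) (hμ : μ ∈ Set.Ioo (0 : ℝ) 1)
    (T₀ : Ω → ℝ) (hT₀meas : Measurable T₀) (hT₀range : ∀ᵐ ω ∂P, T₀ ω ∈ Set.Icc (0 : ℝ) 1)
    (hET₀ : ∫ ω, T₀ ω ∂P = μ) (hT₀μ : P {ω | T₀ ω = μ} < 1)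
    (c : ℝ) (hc : c ∈ Set.Ioo (0 : ℝ) 1)
    (α : ℝ) (hα : α ∈ Set.Ioo (0 : ℝ) 1)
    (T : ℕ → Ω → ℝ)
    (hindep : iIndepFun T P)
    (hident : ∀ i, IdentDistrib (T i) T₀ P P) :
    (P {ω | ∃ k : ℕ,
        1 / α ≤ ∏ i ∈ Finset.range k, ((1 - c) + c * (1 - T i ω) / (1 - μ))}).toReal ≤ α ∧
    α / ((1 - c) + c / (1 - μ)) <
      (P {ω | ∃ k : ℕ,
        1 / α ≤ ∏ i ∈ Finset.range k, ((1 - c) + c * (1 - T i ω) / (1 - μ))}).toReal ∧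
    α * (1 - μ) < α / ((1 - c) + c / (1 - μ)) := by
  classical
  obtain ⟨hμ0, hμ1⟩ := hμ
  obtain ⟨hc0, hc1⟩ := hc
  obtain ⟨hα0, hα1⟩ := hα
  have h1μ : (0:ℝ) < 1 - μ := by linarith
  have h1c : (0:ℝ) < 1 - c := by linarith
  set B : ℝ := (1 - c) + c / (1 - μ) with hBdef
  have hcdiv : c < c / (1 - μ) := by
    rw [lt_div_iff₀ h1μ]; nlinarith
  have hB1 : 1 < B := by simp only [hBdef]; linarith
  have hB0 : 0 < B := by linarith
  set r : ℝ := 1 / α with hrdef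
  have hr1 : (1:ℝ) < r := by
    rw [hrdef, lt_div_iff₀ hα0]; linarith
  have hr0 : (0:ℝ) < r := by linarith
  set φ : ℝ → ℝ := fun x => (1 - c) + c * (1 - x) / (1 - μ) with hφdef
  have hφmeas : Measurable φ := by
    apply Measurable.add measurable_const
    exact (measurable_const.sub measurable_id).const_mul c |>.div_const _
  have hφlin : ∀ x, φ x = B - (c / (1 - μ)) * x := by
    intro x; simp only [hφdef, hBdef]; field_simp; ring
  -- measurable modifications
  set T' : ℕ → Ω → ℝ := fun i => (hident i).aemeasurable_fst.mk (T i) with hT'def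
  have hT'meas : ∀ i, Measurable (T' i) := fun i => (hident i).aemeasurable_fst.measurable_mk
  have hTT' : ∀ i, T i =ᵐ[P] T' i := fun i => (hident i).aemeasurable_fst.ae_eq_mk
  have hident' : ∀ i, IdentDistrib (T' i) T₀ P P := by
    intro i
    exact ⟨(hT'meas i).aemeasurable, hT₀meas.aemeasurable,
      by rw [← (hident i).map_eq]; exact (Measure.map_congr (hTT' i).symm)⟩
  have hindep' : iIndepFun T' P := iIndepFun_congr hindep hTT'
  set f' : ℕ → Ω → ℝ := fun i ω => φ (T' i ω) with hf'def
  have hf'meas : ∀ i, Measurable (f' i) := fun i => hφmeas.comp (hT'meas i)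
  -- a.e. range bounds
  have hgoodT : ∀ᵐ ω ∂P, ∀ i, T' i ω ∈ Set.Icc (0:ℝ) 1 := by
    rw [ae_all_iff]
    intro i
    have h1 : ∀ᵐ y ∂(Measure.map T₀ P), y ∈ Set.Icc (0:ℝ) 1 :=
      (ae_map_iff hT₀meas.aemeasurable measurableSet_Icc).2 hT₀range
    rw [← (hident' i).map_eq] at h1
    exact (ae_map_iff (hT'meas i).aemeasurable measurableSet_Icc).1 h1
  have hφrange : ∀ x ∈ Set.Icc (0:ℝ) 1, 1 - c ≤ φ x ∧ φ x ≤ B := by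
    intro x hx
    obtain ⟨hx0, hx1⟩ := hx
    constructor
    · simp only [hφdef]
      have : 0 ≤ c * (1 - x) / (1 - μ) :=
        div_nonneg (mul_nonneg hc0.le (by linarith)) h1μ.le
      linarith
    · rw [hφlin, hBdef]
      have : 0 ≤ (c / (1 - μ)) * x := by positivity
      linarith
  have hgoodf : ∀ᵐ ω ∂P, ∀ i, 0 ≤ f' i ω ∧ f' i ω ≤ B := by
    filter_upwards [hgoodT] with ω hω i
    have := hφrange _ (hω i)
    exact ⟨by linarith [this.1], this.2⟩
  have hgoodf' : ∀ᵐ ω ∂P, ∀ i, 1 - c ≤ f' i ω ∧ f' i ω ≤ B := by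
    filter_upwards [hgoodT] with ω hω i
    exact hφrange _ (hω i)
  -- integrability helper
  have integ : ∀ (g : Ω → ℝ) (K : ℝ), AEStronglyMeasurable g P → (∀ᵐ ω ∂P, ‖g ω‖ ≤ K) →
      Integrable g P := fun g K hg hb => (integrable_const K).mono' hg hb
  have hT'int : ∀ i, Integrable (T' i) P := by
    intro i
    refine integ _ 1 (hT'meas i).aestronglyMeasurable ?_
    filter_upwards [hgoodT] with ω hω
    rw [Real.norm_eq_abs, abs_le]
    exact ⟨by linarith [(hω i).1], (hω i).2⟩
  have hET' : ∀ i, ∫ ω, T' i ω ∂P = μ := fun i => ((hident' i).integral_eq).trans hET₀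
  have hf'int : ∀ i, Integrable (f' i) P := by
    intro i
    refine integ _ B (hf'meas i).aestronglyMeasurable ?_
    filter_upwards [hgoodf] with ω hω
    rw [Real.norm_eq_abs, abs_le]
    exact ⟨by linarith [(hω i).1, hB0], (hω i).2⟩
  have hEf' : ∀ i, ∫ ω, f' i ω ∂P = 1 := by
    intro i
    have : (fun ω => f' i ω) = fun ω => B - (c / (1 - μ)) * T' i ω := by
      funext ω; exact hφlin _
    rw [this, integral_sub (integrable_const B) ((hT'int i).const_mul _),
      integral_const, integral_const_mul, hET' i]
    simp only [measureReal_def, measure_univ, ENNReal.toReal_one, smul_eq_mul, one_mul]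
    rw [hBdef]
    field_simp
    ring
  have hspbound : ∀ k, ∀ᵐ ω ∂P, ‖sp f' r k ω‖ ≤ B * r := by
    intro k
    filter_upwards [hgoodf] with ω hω
    rw [Real.norm_eq_abs, abs_le]
    refine ⟨?_, (sp_lt hr1 hB1.le hω k).le⟩
    have := sp_nonneg (fun i => (hω i).1) (r := r) k
    nlinarith
  have hspint : ∀ k, Integrable (sp f' r k) P := fun k =>
    integ _ (B * r) (sp_measurable hf'meas k).aestronglyMeasurable (hspbound k)
  -- expectation of the stopped process is 1
  have hEsp : ∀ k, ∫ ω, sp f' r k ω ∂P = 1 := by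
    intro k
    induction k with
    | zero =>
        rw [show sp f' r 0 = fun _ => (1:ℝ) from rfl]
        simp
    | succ k ih =>
        set Ck : Set Ω := {ω | ∀ j ≤ k, pp f' j ω < r} with hCkdef
        have hCkmeas : MeasurableSet Ck := condSet_measurable hf'meas k
        set G : Ω → ℝ := fun ω => if ω ∈ Ck then pp f' k ω else 0 with hGdef
        have hGmeas : Measurable G :=
          Measurable.ite hCkmeas (pp_measurable hf'meas k) measurable_const
        have hpoint : ∀ ω, sp f' r (k+1) ω = sp f' r k ω + G ω * (f' k ω - 1) := by
          intro ω
          by_cases h : ω ∈ Ck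
          · have h' : ∀ j ≤ k, pp f' j ω < r := h
            have hspk : sp f' r k ω = pp f' k ω := by
              cases k with
              | zero => rw [sp_zero, pp_zero]
              | succ m => exact sp_eq m fun j hj => h' j (hj.trans (Nat.le_succ m))
            have hstep : sp f' r (k+1) ω = sp f' r k ω * f' k ω := by
              simp only [sp, if_pos h']
            rw [hstep, hGdef]
            simp only [if_pos h]
            rw [hspk]; ring
          · have h' : ¬ ∀ j ≤ k, pp f' j ω < r := h
            rw [sp_succ_of_hit h', hGdef]
            simp only [if_neg h]
            ring
        -- independence of G and f' k
        have hdisj : Disjoint (Finset.range k) ({k} : Finset ℕ) := by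
          simp [Finset.disjoint_singleton_right]
        have base := hindep'.indepFun_finset (Finset.range k) {k} hdisj hT'meas
        have hextmeas : Measurable (extFun k) := extFun_measurable k
        have hg2meas : Measurable (gFun φ r k) := gFun_measurable hφmeas r k
        have hψmeas : Measurable (psiFun φ k) := psiFun_measurable hφmeas k
        have hGcomp : G = (fun v => gFun φ r k (extFun k v)) ∘
            (fun ω (i : {x // x ∈ Finset.range k}) => T' i.1 ω) := by
          funext ω
          have key : ∀ j ≤ k,
              (∏ i ∈ Finset.range j,
                φ (extFun k (fun i : {x // x ∈ Finset.range k} => T' i.1 ω) i)) =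
                pp f' j ω := by
            intro j hj
            refine Finset.prod_congr rfl fun i hi => ?_
            have hik : i ∈ Finset.range k :=
              Finset.mem_range.2 (lt_of_lt_of_le (Finset.mem_range.1 hi) hj)
            simp only [extFun, dif_pos hik, hf'def]
          have hcond : (∀ j ≤ k,
              (∏ i ∈ Finset.range j,
                φ (extFun k (fun i : {x // x ∈ Finset.range k} => T' i.1 ω) i)) < r) ↔
                ω ∈ Ck := by
            simp only [hCkdef, Set.mem_setOf_eq]
            exact forall₂_congr fun j hj => by rw [key j hj]
          simp only [Function.comp_apply, hGdef, gFun]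
          by_cases h : ω ∈ Ck
          · rw [if_pos h, if_pos (hcond.2 h), key k le_rfl]
          · rw [if_neg h, if_neg (fun hx => h (hcond.1 hx))]
        have hsecond : (fun ω => f' k ω - 1) =
            (psiFun φ k) ∘ (fun ω (i : {x // x ∈ ({k} : Finset ℕ)}) => T' i.1 ω) := by
          funext ω
          simp only [Function.comp_apply, psiFun, hf'def]
        have hGind : IndepFun G (fun ω => f' k ω - 1) P := by
          rw [hGcomp, hsecond]
          exact base.comp (hg2meas.comp hextmeas) hψmeas
        have hGint : Integrable G P := by
          refine integ _ r hGmeas.aestronglyMeasurable ?_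
          filter_upwards [hgoodf] with ω hω
          simp only [hGdef, Real.norm_eq_abs]
          by_cases h : ω ∈ Ck
          · have h' : ∀ j ≤ k, pp f' j ω < r := h
            rw [if_pos h, abs_le]
            exact ⟨by linarith [pp_nonneg (fun i => (hω i).1) k], (h' k le_rfl).le⟩
          · rw [if_neg h]
            simp only [abs_zero]
            linarith
        have hfkint : Integrable (fun ω => f' k ω - 1) P := (hf'int k).sub (integrable_const 1)
        have hprodint : Integrable (fun ω => G ω * (f' k ω - 1)) P := by
          refine integ _ (r * (B + 1))
            (hGmeas.mul ((hf'meas k).sub measurable_const)).aestronglyMeasurable ?_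
          filter_upwards [hgoodf] with ω hω
          rw [norm_mul]
          have h1 : ‖G ω‖ ≤ r := by
            simp only [hGdef, Real.norm_eq_abs]
            by_cases h : ω ∈ Ck
            · have h' : ∀ j ≤ k, pp f' j ω < r := h
              rw [if_pos h, abs_le]
              exact ⟨by linarith [pp_nonneg (fun i => (hω i).1) k], (h' k le_rfl).le⟩
            · rw [if_neg h]; simp only [abs_zero]; linarith
          have h2 : ‖f' k ω - 1‖ ≤ B + 1 := by
            rw [Real.norm_eq_abs, abs_le]
            exact ⟨by linarith [(hω k).1], by linarith [(hω k).2]⟩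
          exact mul_le_mul h1 h2 (norm_nonneg _) hr0.le
        have hmulE : ∫ ω, G ω * (f' k ω - 1) ∂P =
            (∫ ω, G ω ∂P) * ∫ ω, (f' k ω - 1) ∂P :=
          IndepFun.integral_fun_mul_eq_mul_integral hGind hGint.aestronglyMeasurable
            hfkint.aestronglyMeasurable
        have hzero : ∫ ω, (f' k ω - 1) ∂P = 0 := by
          rw [integral_sub (hf'int k) (integrable_const 1), hEf' k, integral_const]
          simp
        calc ∫ ω, sp f' r (k+1) ω ∂P
            = ∫ ω, (sp f' r k ω + G ω * (f' k ω - 1)) ∂P := by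
              rw [show sp f' r (k+1) = fun ω => sp f' r k ω + G ω * (f' k ω - 1) from
                funext hpoint]
          _ = (∫ ω, sp f' r k ω ∂P) + ∫ ω, G ω * (f' k ω - 1) ∂P :=
              integral_add (hspint k) hprodint
          _ = 1 := by rw [ih, hmulE, hzero, mul_zero, add_zero]
  -- the unstopped product tends to zero a.s.
  have hMto0 : ∀ᵐ ω ∂P, Tendsto (fun k => pp f' k ω) atTop (nhds 0) := by
    set X : ℕ → Ω → ℝ := fun i ω => Real.log (f' i ω) with hXdef
    have hlogφ : Measurable (fun x : ℝ => Real.log (φ x)) := Real.measurable_log.comp hφmeas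
    have hXident : ∀ i, IdentDistrib (X i) (X 0) P P := fun i =>
      ((hident' i).trans (hident' 0).symm).comp hlogφ
    have hXindep : Pairwise (Function.onFun (IndepFun · · P) X) := fun i j hij =>
      (hindep'.indepFun hij).comp hlogφ hlogφ
    have hlogbound : ∀ᵐ ω ∂P, ∀ i, ‖Real.log (f' i ω)‖ ≤ |Real.log (1-c)| + |Real.log B| := by
      filter_upwards [hgoodf'] with ω hω i
      have hpos : 0 < f' i ω := by linarith [(hω i).1]
      have h1 : Real.log (1-c) ≤ Real.log (f' i ω) := Real.log_le_log h1c (hω i).1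
      have h2 : Real.log (f' i ω) ≤ Real.log B := Real.log_le_log hpos (hω i).2
      rw [Real.norm_eq_abs, abs_le]
      constructor
      · have := neg_abs_le (Real.log (1-c)); have := abs_nonneg (Real.log B); linarith
      · have := le_abs_self (Real.log B); have := abs_nonneg (Real.log (1-c)); linarith
    have hXint : Integrable (X 0) P := by
      refine integ _ (|Real.log (1-c)| + |Real.log B|)
        ((hlogφ.comp (hT'meas 0)).aestronglyMeasurable) ?_
      filter_upwards [hlogbound] with ω hω
      exact hω 0
    have hEX : ∫ ω, X 0 ω ∂P < 0 := by
      have hconc : StrictConcaveOn ℝ (Set.Icc (1-c) B) Real.log :=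
        strictConcaveOn_log_Ioi.subset (fun x hx => lt_of_lt_of_le h1c hx.1) (convex_Icc _ _)
      have hcont : ContinuousOn Real.log (Set.Icc (1-c) B) :=
        Real.continuousOn_log.mono fun x hx => by
          simpa using ne_of_gt (lt_of_lt_of_le h1c hx.1)
      have hfs : ∀ᵐ ω ∂P, f' 0 ω ∈ Set.Icc (1-c) B := by
        filter_upwards [hgoodf'] with ω hω
        exact ⟨(hω 0).1, (hω 0).2⟩
      have hglog : Integrable (Real.log ∘ f' 0) P := hXint
      have hjen := hconc.ae_eq_const_or_lt_map_average hcont isClosed_Icc hfs (hf'int 0) hglog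
      rw [average_eq_integral, average_eq_integral, hEf' 0] at hjen
      rcases hjen with hconst | hlt
      · exfalso
        have hq : c / (1-μ) ≠ 0 := ne_of_gt (div_pos hc0 h1μ)
        have hμval : B - (c / (1-μ)) * μ = 1 := by rw [hBdef]; field_simp; ring
        have hT'const : ∀ᵐ ω ∂P, T' 0 ω = μ := by
          filter_upwards [hconst] with ω hω
          have h1 : B - (c / (1-μ)) * T' 0 ω = 1 := by rw [← hφlin]; exact hω
          have h2 : (c / (1-μ)) * T' 0 ω = (c / (1-μ)) * μ := by linarith
          exact mul_left_cancel₀ hq h2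
        have hone : P (T' 0 ⁻¹' {μ}) = 1 := by
          have := measure_congr (Filter.eventuallyEq_set.2
            (hT'const.mono fun ω h => by simp [h]) :
            (T' 0 ⁻¹' {μ} : Set Ω) =ᵐ[P] Set.univ)
          rw [this, measure_univ]
        have hT₀one : P {ω | T₀ ω = μ} = 1 := by
          have hpre : {ω | T₀ ω = μ} = T₀ ⁻¹' {μ} := by ext ω; simp
          rw [hpre, ← Measure.map_apply hT₀meas (measurableSet_singleton μ),
            ← (hident' 0).map_eq,
            Measure.map_apply (hT'meas 0) (measurableSet_singleton μ), hone]
        rw [hT₀one] at hT₀μ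
        exact lt_irrefl _ hT₀μ
      · calc ∫ ω, X 0 ω ∂P = ∫ ω, Real.log (f' 0 ω) ∂P := rfl
          _ < Real.log 1 := hlt
          _ = 0 := Real.log_one
    have hslln := strong_law_ae_real X hXint hXindep hXident
    have hf'pos : ∀ᵐ ω ∂P, ∀ i, 0 < f' i ω := by
      filter_upwards [hgoodf'] with ω hω i
      linarith [(hω i).1]
    filter_upwards [hslln, hf'pos] with ω hsl hpos
    have hexp : ∀ n, pp f' n ω = Real.exp (∑ i ∈ Finset.range n, X i ω) := by
      intro n
      rw [Real.exp_sum]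
      exact Finset.prod_congr rfl fun i _ => (Real.exp_log (hpos i)).symm
    have hSbot : Tendsto (fun n => ∑ i ∈ Finset.range n, X i ω) atTop atBot := by
      set l := ∫ ω', X 0 ω' ∂P with hldef
      have hl2 : l / 2 < 0 := by linarith
      have hev : ∀ᶠ n : ℕ in atTop, (∑ i ∈ Finset.range n, X i ω) ≤ n * (l/2) := by
        have h1 : ∀ᶠ n : ℕ in atTop, (∑ i ∈ Finset.range n, X i ω) / n < l/2 :=
          (tendsto_order.1 hsl).2 _ (by linarith)
        filter_upwards [h1, eventually_ge_atTop 1] with n hn hn1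
        have hnpos : (0:ℝ) < n := by exact_mod_cast hn1
        calc ∑ i ∈ Finset.range n, X i ω
            = ((∑ i ∈ Finset.range n, X i ω) / n) * n := by field_simp
          _ ≤ (l/2) * n := mul_le_mul_of_nonneg_right hn.le hnpos.le
          _ = n * (l/2) := mul_comm _ _
      exact tendsto_atBot_mono' atTop hev
        (tendsto_natCast_atTop_atTop.atTop_mul_const_of_neg hl2)
    exact (Real.tendsto_exp_atBot.comp hSbot).congr fun n => (hexp n).symm
  -- limit function
  set A' : Set Ω := {ω | ∃ k, r ≤ pp f' k ω} with hA'def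
  have hA'meas : MeasurableSet A' := by
    have : A' = ⋃ k, {ω | r ≤ pp f' k ω} := by ext ω; simp [hA'def]
    rw [this]
    exact MeasurableSet.iUnion fun k => measurableSet_le measurable_const
      (pp_measurable hf'meas k)
  set Lf : Ω → ℝ := fun ω => if h : ∃ n, r ≤ pp f' n ω then pp f' (Nat.find h) ω else 0
    with hLdef
  have hsptend : ∀ᵐ ω ∂P, Tendsto (fun k => sp f' r k ω) atTop (nhds (Lf ω)) := by
    filter_upwards [hMto0] with ω hM0
    by_cases h : ∃ n, r ≤ pp f' n ω
    · have hL : Lf ω = pp f' (Nat.find h) ω := by simp only [hLdef, dif_pos h]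
      rw [hL]
      have hmin : ∀ j < Nat.find h, pp f' j ω < r := fun j hj =>
        lt_of_not_ge (Nat.find_min h hj)
      have hev : ∀ᶠ k in atTop, sp f' r k ω = pp f' (Nat.find h) ω := by
        filter_upwards [eventually_ge_atTop (Nat.find h)] with k hk
        exact sp_of_min_hit hr1 (Nat.find_spec h) hmin k hk
      exact Filter.Tendsto.congr' (Filter.EventuallyEq.symm hev) tendsto_const_nhds
    · have hL : Lf ω = 0 := by simp only [hLdef, dif_neg h]
      rw [hL]
      push_neg at h
      exact hM0.congr fun k => (sp_eq_all h k).symm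
  have hELf : ∫ ω, Lf ω ∂P = 1 := by
    have h1 : Tendsto (fun k => ∫ ω, sp f' r k ω ∂P) atTop (nhds (∫ ω, Lf ω ∂P)) :=
      tendsto_integral_of_dominated_convergence (fun _ => B * r)
        (fun k => (sp_measurable hf'meas k).aestronglyMeasurable)
        (integrable_const _) hspbound hsptend
    have h2 : Tendsto (fun k : ℕ => ∫ ω, sp f' r k ω ∂P) atTop (nhds 1) := by
      simp only [hEsp]; exact tendsto_const_nhds
    exact (tendsto_nhds_unique h1 h2)
  -- properties of Lf
  have hLmeas : AEStronglyMeasurable Lf P :=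
    aestronglyMeasurable_of_tendsto_ae atTop
      (fun k => (sp_measurable hf'meas k).aestronglyMeasurable) hsptend
  have hLzero : ∀ ω, ω ∉ A' → Lf ω = 0 := by
    intro ω h
    exact dif_neg h
  have hLprops : ∀ᵐ ω ∂P, ω ∈ A' → (r ≤ Lf ω ∧ Lf ω < B * r) := by
    filter_upwards [hgoodf] with ω hω h
    have h' : ∃ n, r ≤ pp f' n ω := h
    have hmin : ∀ j < Nat.find h', pp f' j ω < r := fun j hj =>
      lt_of_not_ge (Nat.find_min h' hj)
    constructor
    · rw [hLdef]; simp only [dif_pos h']; exact Nat.find_spec h'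
    · rw [hLdef]; simp only [dif_pos h']
      exact min_hit_lt hB0 hr1 hω (Nat.find_spec h') hmin
  have hLnonneg : ∀ᵐ ω ∂P, 0 ≤ Lf ω := by
    filter_upwards [hLprops] with ω hω
    by_cases h : ω ∈ A'
    · linarith [(hω h).1]
    · rw [hLzero ω h]
  have hLint : Integrable Lf P := by
    refine integ _ (B * r) hLmeas ?_
    filter_upwards [hLprops] with ω hω
    rw [Real.norm_eq_abs, abs_le]
    by_cases h : ω ∈ A'
    · exact ⟨by nlinarith [(hω h).1], (hω h).2.le⟩
    · rw [hLzero ω h]; constructor <;> nlinarith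
  set p : ℝ := (P A').toReal with hpdef
  -- measure of original event equals measure of A'
  have hmeq : P {ω | ∃ k : ℕ,
      1 / α ≤ ∏ i ∈ Finset.range k, ((1 - c) + c * (1 - T i ω) / (1 - μ))} = P A' := by
    apply measure_congr
    rw [Filter.eventuallyEq_set]
    have hall : ∀ᵐ ω ∂P, ∀ i, T i ω = T' i ω := ae_all_iff.2 hTT'
    filter_upwards [hall] with ω hω
    simp only [Set.mem_setOf_eq, hA'def]
    refine exists_congr fun k => ?_
    have hpr : ∏ i ∈ Finset.range k, ((1 - c) + c * (1 - T i ω) / (1 - μ)) = pp f' k ω := by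
      refine Finset.prod_congr rfl fun i _ => ?_
      rw [hω i]
    rw [hpr, hrdef]
  have hIeq : Lf = A'.indicator Lf := by
    funext ω
    by_cases h : ω ∈ A'
    · rw [Set.indicator_of_mem h]
    · rw [Set.indicator_of_notMem h, hLzero ω h]
  have hsetint : ∫ ω in A', Lf ω ∂P = 1 := by
    rw [← hELf]
    conv_rhs => rw [hIeq]
    rw [integral_indicator hA'meas]
  -- upper bound
  have hupper : p * r ≤ 1 := by
    have hmono : ∀ᵐ ω ∂P, A'.indicator (fun _ => r) ω ≤ Lf ω := by
      filter_upwards [hLprops] with ω hω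
      by_cases h : ω ∈ A'
      · rw [Set.indicator_of_mem h]; exact (hω h).1
      · rw [Set.indicator_of_notMem h, hLzero ω h]
    have hle := integral_mono_ae ((integrable_const r).indicator hA'meas) hLint hmono
    rw [integral_indicator_const r hA'meas, hELf, measureReal_def] at hle
    simpa [hpdef, smul_eq_mul, mul_comm] using hle
  -- lower bound
  have hlow1 : 1 ≤ p * (B * r) := by
    have hmono : ∀ᵐ ω ∂P, Lf ω ≤ A'.indicator (fun _ => B * r) ω := by
      filter_upwards [hLprops] with ω hω
      by_cases h : ω ∈ A'
      · rw [Set.indicator_of_mem h]; exact (hω h).2.le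
      · rw [Set.indicator_of_notMem h, hLzero ω h]
    have hle := integral_mono_ae hLint ((integrable_const (B * r)).indicator hA'meas) hmono
    rw [integral_indicator_const (B * r) hA'meas, hELf, measureReal_def] at hle
    simpa [hpdef, smul_eq_mul, mul_comm] using hle
  have hPA'ne : P A' ≠ 0 := by
    intro h0
    have hp0 : p = 0 := by rw [hpdef, h0]; simp
    rw [hp0] at hlow1; norm_num at hlow1
  have hposAE : ∀ᵐ ω ∂P, ω ∈ A' → 0 < B * r - Lf ω := by
    filter_upwards [hLprops] with ω hω h
    linarith [(hω h).2]
  have hbadnull : P {ω | ¬ (ω ∈ A' → 0 < B * r - Lf ω)} = 0 := ae_iff.1 hposAE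
  have hsupp : 0 < P (Function.support (fun ω => B * r - Lf ω) ∩ A') := by
    have hsub : A' ⊆ (Function.support (fun ω => B * r - Lf ω) ∩ A') ∪
        {ω | ¬ (ω ∈ A' → 0 < B * r - Lf ω)} := by
      intro ω hω
      by_cases h : 0 < B * r - Lf ω
      · exact Or.inl ⟨ne_of_gt h, hω⟩
      · exact Or.inr (fun himp => h (himp hω))
    have h1 := (measure_mono hsub).trans (measure_union_le (μ := P) _ _)
    rw [hbadnull, add_zero] at h1
    exact lt_of_lt_of_le (pos_iff_ne_zero.2 hPA'ne) h1
  have hstrict : 0 < ∫ ω in A', (B * r - Lf ω) ∂P := by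
    rw [setIntegral_pos_iff_support_of_nonneg_ae
      ((ae_restrict_iff' hA'meas).2 (hposAE.mono fun ω h hm => (h hm).le))
      (((integrable_const (B * r)).sub hLint).integrableOn)]
    exact hsupp
  have hcalc : ∫ ω in A', (B * r - Lf ω) ∂P = p * (B * r) - 1 := by
    rw [integral_sub (integrableOn_const (C := B * r) (measure_ne_top P A')) hLint.integrableOn,
      setIntegral_const, hsetint]
    simp [hpdef, smul_eq_mul, measureReal_def]
  have hlower : 1 < p * (B * r) := by
    rw [hcalc] at hstrict; linarith
  rw [hmeq]
  refine ⟨?_, ?_, ?_⟩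
  · rw [← hpdef]
    calc p = (p * r) * α := by rw [hrdef]; field_simp
      _ ≤ 1 * α := by nlinarith
      _ = α := one_mul α
  · rw [← hpdef, div_lt_iff₀ hB0]
    have hBr : p * (B * r) = (p * B) / α := by rw [hrdef]; field_simp
    rw [hBr] at hlower
    rw [lt_div_iff₀ hα0] at hlower
    linarith
  · rw [lt_div_iff₀ hB0]
    have hBval : B * (1 - μ) = (1 - c) * (1 - μ) + c := by
      rw [hBdef]; field_simp
    nlinarith [mul_pos h1c hμ0, mul_pos hα0 (mul_pos hμ0 h1c)]
end
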